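/- arXiv:math/0604477 — 8 statements merged into one kernel-verified Lean document; each statement's English description precedes it below -/
import Mathlib

section
/- Let (x^[i])_{i≥0} be a δ-descent in A (not necessarily iterative). Then the nil algebra of δ decomposes as internal direct sums of K-subspaces N(δ,A) = ⊕_{i≥0} A^δ·x^[i] = ⊕_{i≥0} x^[i]·A^δ, and for every n ≥ 0 one has N_n = ⊕_{i=0}^{n} A^δ·x^[i] = ⊕_{i=0}^{n} x^[i]·A^δ. -/
open LinearMap

lemma descent_aux {K A : Type*} [Field K] [Ring A] [Algebra K A]
    (δ : Module.End K A) (L : ℕ → A →ₗ[K] A)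
    (hL0 : ∀ c : A, L 0 c = c)
    (hLδ : ∀ (i : ℕ) (c : A), δ c = 0 → δ (L (i + 1) c) = L i c) :
    iSupIndep (fun i : ℕ => (ker δ).map (L i)) ∧
    (⨆ i : ℕ, (ker δ).map (L i)) = (⨆ n : ℕ, ker (δ ^ (n + 1))) ∧
    (∀ n : ℕ, ker (δ ^ (n + 1)) = ⨆ i ∈ Finset.range (n + 1), (ker δ).map (L i)) := by
  classical
  set V : ℕ → Submodule K A := fun i => (ker δ).map (L i) with hV
  -- basic computations
  have key : ∀ (k i : ℕ) (c : A), δ c = 0 → (δ ^ k) (L (i + k) c) = L i c := by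
    intro k
    induction k with
    | zero => intro i c _; simp
    | succ k ih =>
      intro i c hc
      rw [pow_succ, Module.End.mul_apply, show i + (k + 1) = (i + k) + 1 from rfl,
        hLδ _ _ hc, ih i c hc]
  have keyD : ∀ (i : ℕ) (c : A), δ c = 0 → (δ ^ i) (L i c) = c := by
    intro i c hc
    have := key i 0 c hc
    rwa [zero_add, hL0] at this
  have keyz : ∀ (m i : ℕ) (c : A), δ c = 0 → i < m → (δ ^ m) (L i c) = 0 := by
    intro m i c hc him
    have hm : m = (m - (i + 1)) + (i + 1) := by omega
    rw [hm, pow_add, Module.End.mul_apply, pow_succ', Module.End.mul_apply,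
      keyD i c hc, hc, map_zero]
  have hVker : ∀ i m : ℕ, i < m → V i ≤ ker (δ ^ m) := by
    rintro i m him b hb
    obtain ⟨c, hc, rfl⟩ := hb
    exact mem_ker.mpr (keyz m i c (mem_ker.mp hc) him)
  -- the finite decomposition
  have hfin : ∀ n : ℕ, ker (δ ^ (n + 1)) = ⨆ i ∈ Finset.range (n + 1), V i := by
    intro n
    induction n with
    | zero =>
      apply le_antisymm
      · intro a ha
        have : a ∈ V 0 := ⟨a, by simpa using ha, hL0 a⟩
        exact le_iSup₂ (f := fun i (_ : i ∈ Finset.range 1) => V i) 0 (by simp) this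
      · refine iSup₂_le fun i hi => ?_
        have hi0 : i = 0 := by simpa using hi
        subst hi0
        exact hVker 0 1 one_pos
    | succ n ih =>
      apply le_antisymm
      · intro a ha
        have ha' : (δ ^ (n + 2)) a = 0 := mem_ker.mp ha
        set c : A := (δ ^ (n + 1)) a with hcdef
        have hc : δ c = 0 := by
          rw [hcdef, ← Module.End.mul_apply, ← pow_succ']
          exact ha'
        have hr : a - L (n + 1) c ∈ ker (δ ^ (n + 1)) := by
          rw [mem_ker, map_sub, keyD (n + 1) c hc, ← hcdef, sub_self]
        have hsub : (⨆ i ∈ Finset.range (n + 1), V i) ≤ ⨆ i ∈ Finset.range (n + 2), V i :=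
          iSup₂_le fun i hi =>
            le_iSup₂ (f := fun i (_ : i ∈ Finset.range (n + 2)) => V i) i
              (by simp at hi ⊢; omega)
        have hr' : a - L (n + 1) c ∈ ⨆ i ∈ Finset.range (n + 2), V i := hsub (ih ▸ hr)
        have hc' : L (n + 1) c ∈ ⨆ i ∈ Finset.range (n + 2), V i :=
          le_iSup₂ (f := fun i (_ : i ∈ Finset.range (n + 2)) => V i) (n + 1) (by simp)
            ⟨c, mem_ker.mpr hc, rfl⟩
        have heq : a = (a - L (n + 1) c) + L (n + 1) c := by abel
        rw [heq]
        exact add_mem hr' hc'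
      · exact iSup₂_le fun i hi => hVker i (n + 2) (by simp at hi; omega)
  -- sum over everything
  have hsup : (⨆ i : ℕ, V i) = ⨆ n : ℕ, ker (δ ^ (n + 1)) := by
    apply le_antisymm
    · exact iSup_le fun i => le_trans (hVker i (i + 1) (lt_add_one i)) (le_iSup (fun n => ker (δ ^ (n + 1))) i)
    · exact iSup_le fun n => (hfin n) ▸ iSup₂_le fun i _ => le_iSup V i
  -- zero-sum lemma
  have hrep : ∀ (i : ℕ) (b : A), b ∈ V i → L i ((δ ^ i) b) = b := by
    rintro i b ⟨c, hc, rfl⟩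
    rw [keyD i c (mem_ker.mp hc)]
  have hZ : ∀ s : Finset ℕ, ∀ g : ℕ → A, (∀ i ∈ s, g i ∈ V i) →
      (∑ i ∈ s, g i) = 0 → ∀ i ∈ s, g i = 0 := by
    intro s
    induction s using Finset.strongInduction with
    | _ s ih =>
      intro g hg hsum i hi
      have hne : s.Nonempty := ⟨i, hi⟩
      set m := s.max' hne with hm
      have hmem : m ∈ s := s.max'_mem hne
      have hgm : g m = 0 := by
        have h1 : (δ ^ m) (∑ j ∈ s, g j) = 0 := by rw [hsum, map_zero]
        rw [map_sum] at h1
        have h2 : ∀ j ∈ s, j ≠ m → (δ ^ m) (g j) = 0 := by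
          intro j hj hjm
          obtain ⟨c, hc, hceq⟩ := hg j hj
          rw [← hceq]
          exact keyz m j c (mem_ker.mp hc)
            (lt_of_le_of_ne (s.le_max' j hj) hjm)
        rw [Finset.sum_eq_single m (fun j hj hjm => h2 j hj hjm)
          (fun h => absurd hmem h)] at h1
        rw [← hrep m (g m) (hg m hmem), h1, map_zero]
      by_cases him : i = m
      · rw [him, hgm]
      · refine ih (s.erase m) (Finset.erase_ssubset hmem) g
          (fun j hj => hg j (Finset.mem_of_mem_erase hj)) ?_ i
          (Finset.mem_erase.mpr ⟨him, hi⟩)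
        rw [Finset.sum_erase_eq_sub hmem, hsum, hgm, sub_zero]
  -- independence
  have hindep : iSupIndep V := by
    rw [iSupIndep_def]
    intro n
    rw [Submodule.disjoint_def]
    intro a haV haS
    rw [Submodule.mem_iSup_iff_exists_finsupp] at haS
    obtain ⟨f, hf, hfsum⟩ := haS
    have hfn : f n = 0 := by
      have := hf n
      simpa using this
    have hfi : ∀ i, i ≠ n → f i ∈ V i := by
      intro i hin
      have := hf i
      rwa [iSup_pos hin] at this
    have hnsupp : n ∉ f.support := by simp [hfn]
    set g : ℕ → A := fun i => if i = n then -a else f i with hgdef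
    have hgmem : ∀ i ∈ insert n f.support, g i ∈ V i := by
      intro i hi
      by_cases hin : i = n
      · subst hin; simpa [hgdef] using (V i).neg_mem haV
      · simpa [hgdef, hin] using hfi i hin
    have hgsum : (∑ i ∈ insert n f.support, g i) = 0 := by
      rw [Finset.sum_insert hnsupp]
      have : ∑ i ∈ f.support, g i = ∑ i ∈ f.support, f i :=
        Finset.sum_congr rfl fun i hi => by
          have : i ≠ n := fun h => hnsupp (h ▸ hi)
          simp [hgdef, this]
      rw [this]
      have : ∑ i ∈ f.support, f i = a := hfsum
      rw [this]
      simp [hgdef]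
    have := hZ (insert n f.support) g hgmem hgsum n (Finset.mem_insert_self _ _)
    simpa [hgdef] using (neg_eq_zero.mp (by simpa [hgdef] using this))
  exact ⟨hindep, hsup, hfin⟩

/-- Let `δ` be a `K`-derivation of an associative unital `K`-algebra `A`
and let `(x i)_{i ≥ 0}` be a `δ`-descent (`x 0 = 1`, `δ (x (i+1)) = x i`).  Then the nil
algebra `N(δ,A) = ⨆ n, ker δ^{n+1}` decomposes as the internal direct sums of `K`-subspaces
`N(δ,A) = ⊕_{i≥0} A^δ·x i = ⊕_{i≥0} (x i)·A^δ`, and for each `n ≥ 0`,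
`N_n = ker δ^{n+1} = ⊕_{i=0}^n A^δ·x i = ⊕_{i=0}^n (x i)·A^δ`. -/
theorem stmt_0 {K A : Type*} [Field K] [Ring A] [Algebra K A]
    (δ : Module.End K A) (hleib : ∀ a b : A, δ (a * b) = δ a * b + a * δ b)
    (x : ℕ → A) (hx0 : x 0 = 1) (hx : ∀ i : ℕ, δ (x (i + 1)) = x i) :
    iSupIndep (fun i : ℕ => (ker δ).map (mulRight K (x i))) ∧
    iSupIndep (fun i : ℕ => (ker δ).map (mulLeft K (x i))) ∧
    (⨆ i : ℕ, (ker δ).map (mulRight K (x i))) = (⨆ n : ℕ, ker (δ ^ (n + 1))) ∧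
    (⨆ i : ℕ, (ker δ).map (mulLeft K (x i))) = (⨆ n : ℕ, ker (δ ^ (n + 1))) ∧
    (∀ n : ℕ, ker (δ ^ (n + 1)) =
      ⨆ i ∈ Finset.range (n + 1), (ker δ).map (mulRight K (x i))) ∧
    (∀ n : ℕ, ker (δ ^ (n + 1)) =
      ⨆ i ∈ Finset.range (n + 1), (ker δ).map (mulLeft K (x i))) := by
  obtain ⟨hR1, hR2, hR3⟩ := descent_aux δ (fun i => mulRight K (x i))
    (fun c => by simp [hx0]) (fun i c hc => by simp [hleib, hc, hx])
  obtain ⟨hL1, hL2, hL3⟩ := descent_aux δ (fun i => mulLeft K (x i))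
    (fun c => by simp [hx0]) (fun i c hc => by simp [hleib, hc, hx])
  exact ⟨hR1, hL1, hR2, hL2, hR3, hL3⟩
end

section
/- Suppose 1 ≠ 0 in A, δ^l = 0 for some finite l ≥ 2, and (x^[i])_{0≤i≤l-1} is a δ-descent of length l. Then δ^{l-1} ≠ 0, A = N(δ,A) = ⊕_{i=0}^{l-1} A^δ·x^[i] = ⊕_{i=0}^{l-1} x^[i]·A^δ as internal direct sums of K-subspaces, and N_j = ⊕_{i=0}^{j} A^δ·x^[i] = ⊕_{i=0}^{j} x^[i]·A^δ for all 0 ≤ j ≤ l-1. -/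
open LinearMap

section Abstract

variable {K A : Type*} [Field K] [Ring A] [Algebra K A]
variable (δ : Module.End K A) (l : ℕ) (μ : ℕ → Module.End K A)

theorem aux_pow_apply (hμ0 : ∀ c : A, μ 0 c = c)
    (hμδ : ∀ i : ℕ, i + 1 < l → ∀ c : A, δ c = 0 → δ (μ (i + 1) c) = μ i c) :
    ∀ k i : ℕ, i < l → k ≤ i → ∀ c : A, δ c = 0 → (δ ^ k) (μ i c) = μ (i - k) c := by
  intro k
  induction k with
  | zero => intro i _ _ c _; simp
  | succ k ih =>
    intro i hi hki c hc
    obtain ⟨j, rfl⟩ : ∃ j, i = j + 1 := ⟨i - 1, by omega⟩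
    rw [pow_succ, Module.End.mul_apply, hμδ j hi c hc, ih j (by omega) (by omega) c hc,
      Nat.succ_sub_succ]

theorem aux_pow_zero (hμ0 : ∀ c : A, μ 0 c = c)
    (hμδ : ∀ i : ℕ, i + 1 < l → ∀ c : A, δ c = 0 → δ (μ (i + 1) c) = μ i c) :
    ∀ i : ℕ, i < l → ∀ c : A, δ c = 0 → (δ ^ (i + 1)) (μ i c) = 0 := by
  intro i hi c hc
  rw [pow_succ', Module.End.mul_apply,
    aux_pow_apply δ l μ hμ0 hμδ i i hi le_rfl c hc, Nat.sub_self, hμ0, hc]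

theorem aux_pow_mono (a : A) (j m : ℕ) (hjm : j ≤ m) (h : (δ ^ j) a = 0) :
    (δ ^ m) a = 0 := by
  obtain ⟨d, rfl⟩ : ∃ d, m = d + j := ⟨m - j, by omega⟩
  rw [pow_add, Module.End.mul_apply, h, map_zero]

theorem aux_sum_zero (hμ0 : ∀ c : A, μ 0 c = c)
    (hμδ : ∀ i : ℕ, i + 1 < l → ∀ c : A, δ c = 0 → δ (μ (i + 1) c) = μ i c) :
    ∀ m : ℕ, m < l → ∀ c : ℕ → A, (∀ j, δ (c j) = 0) →
      (∑ j ∈ Finset.range (m + 1), μ j (c j)) = 0 → ∀ j ≤ m, c j = 0 := by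
  intro m
  induction m with
  | zero =>
    intro _ c hc hsum j hj
    obtain rfl : j = 0 := by omega
    simpa [hμ0] using hsum
  | succ m ih =>
    intro hm c hc hsum j hj
    have htop : c (m + 1) = 0 := by
      have h1 := congrArg (δ ^ (m + 1)) hsum
      rw [map_sum, map_zero, Finset.sum_range_succ] at h1
      rw [Finset.sum_eq_zero (fun j hj => ?_),
        aux_pow_apply δ l μ hμ0 hμδ (m + 1) (m + 1) hm le_rfl _ (hc _),
        Nat.sub_self, hμ0, zero_add] at h1
      · exact h1
      · exact aux_pow_mono δ _ (j + 1) (m + 1)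
          (by simp at hj; omega)
          (aux_pow_zero δ l μ hμ0 hμδ j (by simp at hj; omega) _ (hc _))
    rcases Nat.lt_or_ge j (m + 1) with h | h
    · refine ih (by omega) c hc ?_ j (by omega)
      rw [Finset.sum_range_succ, htop, map_zero, add_zero] at hsum
      exact hsum
    · obtain rfl : j = m + 1 := by omega
      exact htop

theorem aux_ker_eq (hμ0 : ∀ c : A, μ 0 c = c)
    (hμδ : ∀ i : ℕ, i + 1 < l → ∀ c : A, δ c = 0 → δ (μ (i + 1) c) = μ i c) :
    ∀ j : ℕ, j < l →
      ker (δ ^ (j + 1)) = ⨆ i ∈ Finset.range (j + 1), (ker δ).map (μ i) := by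
  have hmap : ∀ i : ℕ, i < l → (ker δ).map (μ i) ≤ ker (δ ^ (i + 1)) := by
    rintro i hi _ ⟨c, hc, rfl⟩
    exact aux_pow_zero δ l μ hμ0 hμδ i hi c hc
  intro j
  induction j with
  | zero =>
    intro hl0
    have hid : μ 0 = LinearMap.id := by ext c; simp [hμ0]
    simp [Finset.range_one, hid, Submodule.map_id]
  | succ j ih =>
    intro hj
    apply le_antisymm
    · intro a ha
      have ha' : (δ ^ (j + 2)) a = 0 := ha
      set c : A := (δ ^ (j + 1)) a with hcdef
      have hc : δ c = 0 := by
        rw [hcdef, ← Module.End.mul_apply, ← pow_succ']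
        exact ha'
      have hb : (δ ^ (j + 1)) (a - μ (j + 1) c) = 0 := by
        rw [map_sub, aux_pow_apply δ l μ hμ0 hμδ (j + 1) (j + 1) hj le_rfl c hc,
          Nat.sub_self, hμ0, ← hcdef, sub_self]
      have hb' : a - μ (j + 1) c ∈ ⨆ i ∈ Finset.range (j + 1), (ker δ).map (μ i) := by
        rw [← ih (by omega)]; exact hb
      have hmono : (⨆ i ∈ Finset.range (j + 1), (ker δ).map (μ i)) ≤
          ⨆ i ∈ Finset.range (j + 2), (ker δ).map (μ i) := by
        refine iSup₂_le fun i hi => ?_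
        exact le_iSup₂_of_le i (by simp at hi ⊢; omega) le_rfl
      have hmem : μ (j + 1) c ∈ ⨆ i ∈ Finset.range (j + 2), (ker δ).map (μ i) :=
        Submodule.mem_iSup_of_mem (j + 1)
          (Submodule.mem_iSup_of_mem (Finset.self_mem_range_succ (j + 1)) ⟨c, hc, rfl⟩)
      have := Submodule.add_mem _ (hmono hb') hmem
      rw [sub_add_cancel] at this; exact this
    · refine iSup₂_le fun i hi => ?_
      refine le_trans (hmap i (by simp at hi; omega)) ?_
      intro a ha
      exact aux_pow_mono δ a (i + 1) (j + 2) (by simp at hi; omega) ha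

theorem aux_indep (hμ0 : ∀ c : A, μ 0 c = c)
    (hμδ : ∀ i : ℕ, i + 1 < l → ∀ c : A, δ c = 0 → δ (μ (i + 1) c) = μ i c) :
    iSupIndep (fun i : Fin l => (ker δ).map (μ (i : ℕ))) := by
  intro i
  rw [Submodule.disjoint_def]
  rintro a ⟨c₀, hc₀', rfl⟩ hb
  have hc₀ : δ c₀ = 0 := hc₀'
  rw [iSup_subtype'] at hb
  rw [Submodule.mem_iSup_iff_exists_finsupp] at hb
  obtain ⟨F, hF, hFsum⟩ := hb
  classical
  -- extend to a function on Fin l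
  set G : Fin l → A := fun j => if h : j = i then 0 else F ⟨j, h⟩ with hGdef
  have hG : ∀ j : Fin l, G j ∈ (ker δ).map (μ (j : ℕ)) := by
    intro j
    by_cases h : j = i
    · simp [hGdef, h]
    · simpa [hGdef, h] using hF ⟨j, h⟩
  choose c hc hμc using fun j => hG j
  have hsumG : ∑ j ∈ Finset.univ.erase i, G j = μ (i : ℕ) c₀ := by
    rw [← hFsum, Finsupp.sum_fintype _ _ (fun _ => rfl)]
    rw [Finset.sum_subtype (Finset.univ.erase i) (p := fun j => j ≠ i)
      (fun j => by simp) G]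
    refine (Finset.sum_congr rfl fun j _ => ?_).symm
    simp [hGdef, j.prop]
  -- build the coefficient function
  set cc : ℕ → A := fun n => if h : n < l then
      (if (⟨n, h⟩ : Fin l) = i then -c₀ else c ⟨n, h⟩) else 0 with hccdef
  have hccδ : ∀ n, δ (cc n) = 0 := by
    intro n
    rw [hccdef]
    dsimp only
    split
    · split
      · rw [map_neg, hc₀, neg_zero]
      · exact hc _
    · simp
  have hccsum : ∑ n ∈ Finset.range l, μ n (cc n) = 0 := by
    rw [← Fin.sum_univ_eq_sum_range (fun n => μ n (cc n)) l]
    have hterm : ∀ j : Fin l, μ (j : ℕ) (cc (j : ℕ))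
        = if j = i then -(μ (i : ℕ) c₀) else G j := by
      intro j
      rw [hccdef]
      dsimp only
      simp only [j.isLt, dif_pos, Fin.eta]
      by_cases h : j = i
      · subst h; simp
      · rw [if_neg h, if_neg h, hμc]
    rw [Finset.sum_congr rfl (fun j _ => hterm j),
      ← Finset.add_sum_erase _ _ (Finset.mem_univ i), if_pos rfl,
      Finset.sum_congr rfl (fun j hj => if_neg (Finset.ne_of_mem_erase hj)), hsumG]
    simp
  have hl1 : 1 ≤ l := by have := i.isLt; omega
  have := aux_sum_zero δ l μ hμ0 hμδ (l - 1) (by omega) cc hccδ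
    (by rw [show l - 1 + 1 = l by omega]; exact hccsum) (i : ℕ) (by omega)
  rw [hccdef] at this
  simp only [i.isLt, dif_pos, Fin.eta, if_pos rfl, if_true, neg_eq_zero] at this
  rw [this, map_zero]

end Abstract
theorem aux_fin_eq_range {K A : Type*} [Field K] [Ring A] [Algebra K A]
    (g : ℕ → Submodule K A) (l : ℕ) :
    (⨆ i : Fin l, g (i : ℕ)) = ⨆ i ∈ Finset.range l, g i := by
  apply le_antisymm
  · exact iSup_le fun i => le_iSup₂_of_le (i : ℕ) (Finset.mem_range.mpr i.isLt) le_rfl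
  · exact iSup₂_le fun i hi => le_iSup_of_le ⟨i, Finset.mem_range.mp hi⟩ le_rfl

/-- If `1 ≠ 0` in `A`, `δ^l = 0` for some finite `l ≥ 2`, and
`(x i)_{0 ≤ i ≤ l-1}` is a `δ`-descent of length `l`, then `δ^{l-1} ≠ 0`,
`A = N(δ,A) = ⊕_{i=0}^{l-1} A^δ·x i = ⊕_{i=0}^{l-1} (x i)·A^δ` as internal direct sums of
`K`-subspaces, and `N_j = ker δ^{j+1} = ⊕_{i=0}^{j} A^δ·x i = ⊕_{i=0}^{j} (x i)·A^δ` for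
all `0 ≤ j ≤ l-1`. -/
theorem stmt_1 {K A : Type*} [Field K] [Ring A] [Algebra K A] [Nontrivial A]
    (δ : Module.End K A) (hleib : ∀ a b : A, δ (a * b) = δ a * b + a * δ b)
    (l : ℕ) (hl : 2 ≤ l) (hnil : δ ^ l = 0)
    (x : ℕ → A) (hx0 : x 0 = 1) (hx : ∀ i : ℕ, i + 1 < l → δ (x (i + 1)) = x i) :
    δ ^ (l - 1) ≠ 0 ∧
    (⨆ n : ℕ, ker (δ ^ (n + 1))) = ⊤ ∧
    iSupIndep (fun i : Fin l => (ker δ).map (mulRight K (x (i : ℕ)))) ∧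
    iSupIndep (fun i : Fin l => (ker δ).map (mulLeft K (x (i : ℕ)))) ∧
    (⨆ i : Fin l, (ker δ).map (mulRight K (x (i : ℕ)))) = ⊤ ∧
    (⨆ i : Fin l, (ker δ).map (mulLeft K (x (i : ℕ)))) = ⊤ ∧
    (∀ j : ℕ, j < l → ker (δ ^ (j + 1)) =
      ⨆ i ∈ Finset.range (j + 1), (ker δ).map (mulRight K (x i))) ∧
    (∀ j : ℕ, j < l → ker (δ ^ (j + 1)) =
      ⨆ i ∈ Finset.range (j + 1), (ker δ).map (mulLeft K (x i))) := by
  have hδ1 : δ (1 : A) = 0 := by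
    have h := hleib 1 1
    simp only [mul_one, one_mul] at h
    exact add_eq_left.mp h.symm
  -- instantiate the abstract development
  have hμ0R : ∀ c : A, (mulRight K (x 0)) c = c := by
    intro c; rw [mulRight_apply, hx0, mul_one]
  have hμδR : ∀ i : ℕ, i + 1 < l → ∀ c : A, δ c = 0 →
      δ ((mulRight K (x (i + 1))) c) = (mulRight K (x i)) c := by
    intro i hi c hc
    rw [mulRight_apply, mulRight_apply, hleib, hc, zero_mul, zero_add, hx i hi]
  have hμ0L : ∀ c : A, (mulLeft K (x 0)) c = c := by
    intro c; rw [mulLeft_apply, hx0, one_mul]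
  have hμδL : ∀ i : ℕ, i + 1 < l → ∀ c : A, δ c = 0 →
      δ ((mulLeft K (x (i + 1))) c) = (mulLeft K (x i)) c := by
    intro i hi c hc
    rw [mulLeft_apply, mulLeft_apply, hleib, hc, mul_zero, add_zero, hx i hi]
  have hkerR := aux_ker_eq δ l (fun i => mulRight K (x i)) hμ0R hμδR
  have hkerL := aux_ker_eq δ l (fun i => mulLeft K (x i)) hμ0L hμδL
  have hkertop : ker (δ ^ l) = ⊤ := ker_eq_top.mpr hnil
  refine ⟨?_, ?_, ?_, ?_, ?_, ?_, fun j hj => hkerR j hj, fun j hj => hkerL j hj⟩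
  · -- δ ^ (l - 1) ≠ 0
    intro h0
    have h1 : (δ ^ (l - 1)) ((mulRight K (x (l - 1))) (1 : A))
        = (mulRight K (x (l - 1 - (l - 1)))) 1 :=
      aux_pow_apply δ l (fun i => mulRight K (x i)) hμ0R hμδR (l - 1) (l - 1)
        (by omega) le_rfl 1 hδ1
    rw [h0, LinearMap.zero_apply, Nat.sub_self, hx0] at h1
    simp at h1
  · -- ⨆ ker δ^{n+1} = ⊤
    apply le_antisymm le_top
    have : ker (δ ^ (l - 1 + 1)) ≤ ⨆ n : ℕ, ker (δ ^ (n + 1)) :=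
      le_iSup (fun n => ker (δ ^ (n + 1))) (l - 1)
    rw [show l - 1 + 1 = l by omega, hkertop] at this
    exact this
  · exact aux_indep δ l (fun i => mulRight K (x i)) hμ0R hμδR
  · exact aux_indep δ l (fun i => mulLeft K (x i)) hμ0L hμδL
  · have h := hkerR (l - 1) (by omega)
    rw [show l - 1 + 1 = l by omega] at h
    beta_reduce at h
    rw [aux_fin_eq_range (fun n => (ker δ).map (mulRight K (x n))) l, ← h, hkertop]
  · have h := hkerL (l - 1) (by omega)
    rw [show l - 1 + 1 = l by omega] at h
    beta_reduce at h
    rw [aux_fin_eq_range (fun n => (ker δ).map (mulLeft K (x n))) l, ← h, hkertop]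
end

section
/- Suppose K has characteristic zero and δ(x) = 1 for some x ∈ A. Then [x, A^δ] ⊆ A^δ (so ad(x) restricts to a derivation of A^δ), the nil algebra decomposes as N(δ,A) = ⊕_{i≥0} A^δ·x^i = ⊕_{i≥0} x^i·A^δ as internal direct sums of K-subspaces, and N_n = ⊕_{i=0}^{n} A^δ·x^i = ⊕_{i=0}^{n} x^i·A^δ for every n ≥ 0 (i.e. N(δ,A) is the Ore extension A^δ[x; ad(x)|_{A^δ}]). -/
open LinearMap

section OreCore
set_option linter.unusedSectionVars false
variable {K A : Type*} [Field K] [CharZero K] [Ring A] [Algebra K A]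
variable (δ : Module.End K A) (φ : ℕ → Module.End K A)
variable (hφ0 : φ 0 = LinearMap.id)
variable (hφ : ∀ i c, δ c = 0 → δ (φ (i+1) c) = ((i+1 : ℕ) : K) • φ i c)

include hφ0 hφ in
theorem ore_core_pow (m : ℕ) (c : A) (hc : δ c = 0) :
    (δ ^ m) (φ m c) = ((m.factorial : ℕ) : K) • c := by
  induction m with
  | zero => simp [hφ0]
  | succ m ih =>
    have h1 : (δ ^ (m+1)) (φ (m+1) c) = (δ ^ m) (δ (φ (m+1) c)) := by
      rw [pow_succ]; rfl
    rw [h1, hφ m c hc, map_smul, ih, smul_smul, Nat.factorial_succ]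
    push_cast
    ring_nf

include hφ0 hφ in
theorem ore_core_mem (m : ℕ) (c : A) (hc : δ c = 0) :
    (δ ^ (m+1)) (φ m c) = 0 := by
  have h1 : (δ ^ (m+1)) (φ m c) = δ ((δ ^ m) (φ m c)) := by
    rw [pow_succ']; rfl
  rw [h1, ore_core_pow δ φ hφ0 hφ m c hc, map_smul, hc, smul_zero]

include hφ0 hφ in
theorem ore_core_mem_le (m : ℕ) :
    ((ker δ).map (φ m)) ≤ ker (δ ^ (m+1)) := by
  rintro a ⟨c, hc, rfl⟩
  exact ore_core_mem δ φ hφ0 hφ m c hc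

theorem ore_ker_pow_mono {m n : ℕ} (h : m ≤ n) : ker (δ ^ m) ≤ ker (δ ^ n) := by
  intro a ha
  rw [mem_ker] at ha ⊢
  rw [show n = (n - m) + m by omega, pow_add, Module.End.mul_apply, ha, map_zero]

include hφ0 hφ in
theorem ore_core_span :
    ∀ n, ker (δ ^ (n+1)) ≤ ⨆ i ∈ Finset.range (n+1), (ker δ).map (φ i) := by
  intro n
  induction n with
  | zero =>
    intro a ha
    refine Submodule.mem_iSup_of_mem 0 (Submodule.mem_iSup_of_mem (by simp) ?_)
    exact ⟨a, ha, by rw [hφ0]; rfl⟩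
  | succ n ih =>
    intro a ha
    rw [mem_ker] at ha
    set c : A := (((n+1).factorial : K))⁻¹ • (δ ^ (n+1)) a with hc_def
    have hfac : (((n+1).factorial : ℕ) : K) ≠ 0 :=
      Nat.cast_ne_zero.mpr (Nat.factorial_ne_zero _)
    have hc : δ c = 0 := by
      have h2 : (δ ^ (n+1+1)) a = δ ((δ ^ (n+1)) a) := by rw [pow_succ']; rfl
      rw [hc_def, map_smul, ← h2, ha, smul_zero]
    have hb : a - φ (n+1) c ∈ ker (δ ^ (n+1)) := by
      rw [mem_ker, map_sub, ore_core_pow δ φ hφ0 hφ (n+1) c hc, hc_def, smul_smul,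
        mul_inv_cancel₀ hfac, one_smul, sub_self]
    have h1 : a - φ (n+1) c ∈ ⨆ i ∈ Finset.range (n+2), (ker δ).map (φ i) := by
      have hmono : (⨆ i ∈ Finset.range (n+1), (ker δ).map (φ i)) ≤
          ⨆ i ∈ Finset.range (n+2), (ker δ).map (φ i) :=
        biSup_mono (fun i hi => by simp only [Finset.mem_range] at hi ⊢; omega)
      exact hmono (ih hb)
    have h2 : φ (n+1) c ∈ ⨆ i ∈ Finset.range (n+2), (ker δ).map (φ i) :=
      Submodule.mem_iSup_of_mem (n+1) (Submodule.mem_iSup_of_mem (by simp)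
        ⟨c, hc, rfl⟩)
    have := Submodule.add_mem _ h1 h2
    simpa only [sub_add_cancel] using this

include hφ0 hφ in
theorem ore_core_zero : ∀ N (f : ℕ → A), (∀ i, f i ∈ (ker δ).map (φ i)) →
    ∑ i ∈ Finset.range N, f i = 0 → ∀ i < N, f i = 0 := by
  intro N
  induction N with
  | zero => intro f _ _ i hi; omega
  | succ N ih =>
    intro f hf hsum
    obtain ⟨c, hc, hfc⟩ := hf N
    rw [SetLike.mem_coe, mem_ker] at hc
    have htop : f N = 0 := by
      have h0 : (δ ^ N) (∑ i ∈ Finset.range (N+1), f i) = 0 := by rw [hsum, map_zero]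
      rw [map_sum, Finset.sum_range_succ] at h0
      have hz : ∀ i ∈ Finset.range N, (δ ^ N) (f i) = 0 := by
        intro i hi
        rw [Finset.mem_range] at hi
        obtain ⟨d, hd, hfd⟩ := hf i
        rw [SetLike.mem_coe, mem_ker] at hd
        have hmem : f i ∈ ker (δ ^ (i+1)) := by
          rw [← hfd]; exact ore_core_mem δ φ hφ0 hφ i d hd
        exact ore_ker_pow_mono δ (by omega) hmem
      rw [Finset.sum_eq_zero hz, zero_add, ← hfc,
        ore_core_pow δ φ hφ0 hφ N c hc] at h0
      have hfac : ((N.factorial : ℕ) : K) ≠ 0 :=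
        Nat.cast_ne_zero.mpr (Nat.factorial_ne_zero _)
      have hc0 : c = 0 := by
        rcases smul_eq_zero.mp h0 with h | h
        · exact absurd h hfac
        · exact h
      rw [← hfc, hc0, map_zero]
    have hsum' : ∑ i ∈ Finset.range N, f i = 0 := by
      rw [Finset.sum_range_succ, htop, add_zero] at hsum; exact hsum
    intro i hi
    rcases Nat.lt_succ_iff_lt_or_eq.mp hi with h | h
    · exact ih f hf hsum' i h
    · rw [h]; exact htop

include hφ0 hφ in
theorem ore_core_indep : iSupIndep (fun i : ℕ => (ker δ).map (φ i)) := by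
  rw [iSupIndep_def]
  intro n
  rw [Submodule.disjoint_def]
  intro a ha hb
  rw [Submodule.mem_iSup_iff_exists_finsupp] at hb
  obtain ⟨g, hg, hgsum⟩ := hb
  have hgn : g n = 0 := by
    have h := hg n
    rw [iSup_neg (by simp)] at h
    simpa using h
  classical
  set f : ℕ → A := fun i => if i = n then -a else g i with hf_def
  have hfmem : ∀ i, f i ∈ (ker δ).map (φ i) := by
    intro i
    by_cases h : i = n
    · subst h; simp only [hf_def, if_pos rfl]; exact Submodule.neg_mem _ ha
    · simp only [hf_def, if_neg h]
      have hgi := hg i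
      rwa [iSup_pos h] at hgi
  set N : ℕ := (insert n g.support).sup id + 1 with hN_def
  have hnN : n < N := by
    have : n ≤ (insert n g.support).sup id :=
      Finset.le_sup (f := id) (Finset.mem_insert_self n _)
    omega
  have hsupp : g.support ⊆ Finset.range N := by
    intro i hi
    have : i ≤ (insert n g.support).sup id :=
      Finset.le_sup (f := id) (Finset.mem_insert_of_mem hi)
    rw [Finset.mem_range]; omega
  have hgsum' : ∑ i ∈ Finset.range N, g i = a := by
    rw [← hgsum, Finsupp.sum]
    exact (Finset.sum_subset hsupp (fun i _ hi => Finsupp.notMem_support_iff.mp hi)).symm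
  have hfg : ∀ i, f i = g i + (if i = n then -a else 0) := by
    intro i
    by_cases h : i = n
    · subst h; simp [hf_def, hgn]
    · simp [hf_def, h]
  have hfsum : ∑ i ∈ Finset.range N, f i = 0 := by
    calc ∑ i ∈ Finset.range N, f i
        = ∑ i ∈ Finset.range N, (g i + (if i = n then -a else 0)) := by
          exact Finset.sum_congr rfl (fun i _ => hfg i)
      _ = (∑ i ∈ Finset.range N, g i) + ∑ i ∈ Finset.range N, (if i = n then -a else 0) := by
          rw [Finset.sum_add_distrib]
      _ = a + -a := by
          rw [hgsum', Finset.sum_ite_eq' (Finset.range N) n (fun _ => -a),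
            if_pos (Finset.mem_range.mpr hnN)]
      _ = 0 := by simp
  have := ore_core_zero δ φ hφ0 hφ N f hfmem hfsum n hnN
  simp only [hf_def, if_pos rfl, neg_eq_zero] at this
  exact this

end OreCore

/-- Suppose `char K = 0` and `δ x = 1` for some `x ∈ A`.  Then
`[x, A^δ] ⊆ A^δ` (so `ad x` restricts to a derivation of `A^δ`), the nil algebra decomposes
as `N(δ,A) = ⊕_{i≥0} A^δ·x^i = ⊕_{i≥0} x^i·A^δ` (internal direct sums of `K`-subspaces),
and `N_n = ker δ^(n+1) = ⊕_{i=0}^n A^δ·x^i = ⊕_{i=0}^n x^i·A^δ` for every `n ≥ 0`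
(i.e. `N(δ,A)` is the Ore extension `A^δ[x; ad(x)|_{A^δ}]`). -/
theorem stmt_2 {K A : Type*} [Field K] [CharZero K] [Ring A] [Algebra K A]
    (δ : Module.End K A) (hleib : ∀ a b : A, δ (a * b) = δ a * b + a * δ b)
    (x : A) (hx : δ x = 1) :
    (∀ c : A, δ c = 0 → δ (x * c - c * x) = 0) ∧
    iSupIndep (fun i : ℕ => (ker δ).map (mulRight K (x ^ i))) ∧
    iSupIndep (fun i : ℕ => (ker δ).map (mulLeft K (x ^ i))) ∧
    (⨆ i : ℕ, (ker δ).map (mulRight K (x ^ i))) = (⨆ n : ℕ, ker (δ ^ (n + 1))) ∧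
    (⨆ i : ℕ, (ker δ).map (mulLeft K (x ^ i))) = (⨆ n : ℕ, ker (δ ^ (n + 1))) ∧
    (∀ n : ℕ, ker (δ ^ (n + 1)) =
      ⨆ i ∈ Finset.range (n + 1), (ker δ).map (mulRight K (x ^ i))) ∧
    (∀ n : ℕ, ker (δ ^ (n + 1)) =
      ⨆ i ∈ Finset.range (n + 1), (ker δ).map (mulLeft K (x ^ i))) := by
  have hδ1 : δ 1 = 0 := by
    have h := hleib 1 1
    simpa using h
  -- δ (x^(k+1)) = (k+1) • x^k
  have hδpow : ∀ k : ℕ, δ (x ^ (k+1)) = ((k+1 : ℕ) : K) • x ^ k := by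
    intro k
    induction k with
    | zero => simp [hx]
    | succ k ih =>
      rw [pow_succ, hleib, ih, hx, mul_one, smul_mul_assoc, ← pow_succ]
      push_cast
      module
  -- instantiation data for right multiplication
  have hφ0R : (fun i : ℕ => mulRight K (x ^ i)) 0 = LinearMap.id := by
    simp only [pow_zero]
    exact mulRight_one K A
  have hφR : ∀ i (c : A), δ c = 0 →
      δ (mulRight K (x ^ (i+1)) c) = ((i+1 : ℕ) : K) • mulRight K (x ^ i) c := by
    intro i c hc
    simp only [mulRight_apply]
    rw [hleib, hc, zero_mul, zero_add, hδpow, mul_smul_comm]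
  have hφ0L : (fun i : ℕ => mulLeft K (x ^ i)) 0 = LinearMap.id := by
    simp only [pow_zero]
    exact mulLeft_one K A
  have hφL : ∀ i (c : A), δ c = 0 →
      δ (mulLeft K (x ^ (i+1)) c) = ((i+1 : ℕ) : K) • mulLeft K (x ^ i) c := by
    intro i c hc
    simp only [mulLeft_apply]
    rw [hleib, hc, mul_zero, add_zero, hδpow, smul_mul_assoc]
  refine ⟨?_, ?_, ?_, ?_, ?_, ?_, ?_⟩
  · intro c hc
    rw [map_sub, hleib, hleib, hx, hc, one_mul, mul_zero, zero_mul, mul_one, add_zero,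
      zero_add, sub_self]
  · exact ore_core_indep δ (fun i : ℕ => mulRight K (x ^ i)) hφ0R hφR
  · exact ore_core_indep δ (fun i : ℕ => mulLeft K (x ^ i)) hφ0L hφL
  · apply le_antisymm
    · exact iSup_le fun i => le_trans (ore_core_mem_le δ (fun i : ℕ => mulRight K (x ^ i)) hφ0R hφR i) (le_iSup (fun n : ℕ => ker (δ ^ (n + 1))) i)
    · refine iSup_le fun n => le_trans (ore_core_span δ (fun i : ℕ => mulRight K (x ^ i)) hφ0R hφR n) ?_
      exact iSup₂_le fun i _ => le_iSup (fun i : ℕ => (ker δ).map (mulRight K (x ^ i))) i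
  · apply le_antisymm
    · exact iSup_le fun i => le_trans (ore_core_mem_le δ (fun i : ℕ => mulLeft K (x ^ i)) hφ0L hφL i) (le_iSup (fun n : ℕ => ker (δ ^ (n + 1))) i)
    · refine iSup_le fun n => le_trans (ore_core_span δ (fun i : ℕ => mulLeft K (x ^ i)) hφ0L hφL n) ?_
      exact iSup₂_le fun i _ => le_iSup (fun i : ℕ => (ker δ).map (mulLeft K (x ^ i))) i
  · intro n
    apply le_antisymm
    · exact ore_core_span δ (fun i : ℕ => mulRight K (x ^ i)) hφ0R hφR n
    · refine iSup₂_le fun i hi => le_trans (ore_core_mem_le δ (fun i : ℕ => mulRight K (x ^ i)) hφ0R hφR i) ?_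
      exact ore_ker_pow_mono δ (by rw [Finset.mem_range] at hi; omega)
  · intro n
    apply le_antisymm
    · exact ore_core_span δ (fun i : ℕ => mulLeft K (x ^ i)) hφ0L hφL n
    · refine iSup₂_le fun i hi => le_trans (ore_core_mem_le δ (fun i : ℕ => mulLeft K (x ^ i)) hφ0L hφL i) ?_
      exact ore_ker_pow_mono δ (by rw [Finset.mem_range] at hi; omega)
end

section
/- Let δ be a locally nilpotent K-derivation of A and (x^[i])_{i≥0} an infinite iterative δ-descent. Define φ(a) := Σ_{i≥0} (-1)^i x^[i]·δ^i(a) and ψ(a) := Σ_{i≥0} (-1)^i δ^i(a)·x^[i] (finite sums for each a by local nilpotence). Then: φ and ψ are well-defined K-linear maps A → A; φ is a homomorphism of right A^δ-modules and ψ a homomorphism of left A^δ-modules; φ and ψ are projections onto A^δ, i.e. im(φ) = im(ψ) = A^δ, φ(y) = ψ(y) = y for all y ∈ A^δ, φ vanishes on A_+ := ⊕_{i≥1} x^[i]·A^δ and ψ vanishes on ⊕_{i≥1} A^δ·x^[i]; in particular φ(x^[i]) = ψ(x^[i]) = 0 for all i ≥ 1. -/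
open LinearMap

/-- Let `δ` be a locally nilpotent `K`-derivation of `A` and
`(x i)_{i≥0}` an infinite iterative `δ`-descent.  Define
`φ a := ∑_{i≥0} (-1)^i (x i)·δ^i a` and `ψ a := ∑_{i≥0} (-1)^i (δ^i a)·(x i)`
(finite sums by local nilpotence).  Then `φ` and `ψ` are `K`-linear, `φ` is right
`A^δ`-linear and `ψ` is left `A^δ`-linear, both are projections onto `A^δ`
(`im φ = im ψ = A^δ` and `φ y = ψ y = y` for `y ∈ A^δ`), `φ` vanishes on
`A_+ = ⊕_{i≥1} (x i)·A^δ`, `ψ` vanishes on `⊕_{i≥1} A^δ·(x i)`; in particular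
`φ (x i) = ψ (x i) = 0` for `i ≥ 1`. -/
theorem stmt_3 {K A : Type*} [Field K] [Ring A] [Algebra K A]
    (δ : Module.End K A) (hleib : ∀ a b : A, δ (a * b) = δ a * b + a * δ b)
    (hln : ∀ a : A, ∃ n : ℕ, (δ ^ n) a = 0)
    (x : ℕ → A) (hx0 : x 0 = 1) (hx : ∀ i : ℕ, δ (x (i + 1)) = x i)
    (hiter : ∀ i j : ℕ, x i * x j = ((i + j).choose i) • x (i + j))
    (φ ψ : A → A)
    (hφ : ∀ a : A, φ a = ∑ᶠ i : ℕ, (-1 : A) ^ i * (x i * (δ ^ i) a))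
    (hψ : ∀ a : A, ψ a = ∑ᶠ i : ℕ, (-1 : A) ^ i * ((δ ^ i) a * x i)) :
    (∀ a b : A, φ (a + b) = φ a + φ b) ∧ (∀ (k : K) (a : A), φ (k • a) = k • φ a) ∧
    (∀ a b : A, ψ (a + b) = ψ a + ψ b) ∧ (∀ (k : K) (a : A), ψ (k • a) = k • ψ a) ∧
    (∀ a c : A, δ c = 0 → φ (a * c) = φ a * c) ∧
    (∀ a c : A, δ c = 0 → ψ (c * a) = c * ψ a) ∧
    (∀ a : A, δ (φ a) = 0) ∧ (∀ a : A, δ (ψ a) = 0) ∧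
    (∀ y : A, δ y = 0 → φ y = y ∧ ψ y = y) ∧
    (∀ a ∈ ⨆ (i : ℕ) (_ : 1 ≤ i), (ker δ).map (mulLeft K (x i)), φ a = 0) ∧
    (∀ a ∈ ⨆ (i : ℕ) (_ : 1 ≤ i), (ker δ).map (mulRight K (x i)), ψ a = 0) ∧
    (∀ i : ℕ, 1 ≤ i → φ (x i) = 0 ∧ ψ (x i) = 0) := by
  -- δ kills 1
  have h1 : δ 1 = 0 := by
    have h := hleib 1 1
    simp only [one_mul, mul_one] at h
    exact (left_eq_add.mp h)
  -- δ kills (-1)^i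
  have hneg : ∀ i : ℕ, δ ((-1 : A) ^ i) = 0 := by
    intro i
    induction i with
    | zero => simpa using h1
    | succ i ih =>
      rw [pow_succ, hleib, ih, zero_mul, map_neg, h1, neg_zero, mul_zero, add_zero]
  have hmulneg : ∀ (i : ℕ) (z : A), δ ((-1 : A) ^ i * z) = (-1 : A) ^ i * δ z := by
    intro i z
    rw [hleib, hneg, zero_mul, zero_add]
  -- extension of nilpotence upwards
  have hup : ∀ (a : A) {n m : ℕ}, (δ ^ n) a = 0 → n ≤ m → (δ ^ m) a = 0 := by
    intro a n m h hnm
    obtain ⟨k, rfl⟩ := Nat.exists_eq_add_of_le hnm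
    rw [add_comm, pow_add, Module.End.mul_apply, h, map_zero]
  have hge : ∀ a : A, ∃ N : ℕ, ∀ n : ℕ, N ≤ n → (δ ^ n) a = 0 := by
    intro a
    obtain ⟨n, hn⟩ := hln a
    exact ⟨n, fun m hm => hup a hn hm⟩
  -- finite-sum formulas
  have hsumφ : ∀ (a : A) (N : ℕ), (∀ n, N ≤ n → (δ ^ n) a = 0) →
      φ a = ∑ i ∈ Finset.range N, (-1 : A) ^ i * (x i * (δ ^ i) a) := by
    intro a N h
    rw [hφ a]
    apply finsum_eq_finset_sum_of_support_subset
    intro i hi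
    simp only [Function.mem_support] at hi
    simp only [Finset.coe_range, Set.mem_Iio]
    by_contra hiN
    push_neg at hiN
    exact hi (by rw [h i hiN, mul_zero, mul_zero])
  have hsumψ : ∀ (a : A) (N : ℕ), (∀ n, N ≤ n → (δ ^ n) a = 0) →
      ψ a = ∑ i ∈ Finset.range N, (-1 : A) ^ i * ((δ ^ i) a * x i) := by
    intro a N h
    rw [hψ a]
    apply finsum_eq_finset_sum_of_support_subset
    intro i hi
    simp only [Function.mem_support] at hi
    simp only [Finset.coe_range, Set.mem_Iio]
    by_contra hiN
    push_neg at hiN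
    exact hi (by rw [h i hiN, zero_mul, mul_zero])
  -- additivity of φ
  have hφadd : ∀ a b : A, φ (a + b) = φ a + φ b := by
    intro a b
    obtain ⟨Na, hNa⟩ := hge a
    obtain ⟨Nb, hNb⟩ := hge b
    have hab : ∀ n, max Na Nb ≤ n → (δ ^ n) (a + b) = 0 := by
      intro n hn
      rw [map_add, hNa n (le_trans (le_max_left _ _) hn),
        hNb n (le_trans (le_max_right _ _) hn), add_zero]
    rw [hsumφ (a + b) _ hab, hsumφ a (max Na Nb) (fun n hn => hNa n (le_trans (le_max_left _ _) hn)),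
      hsumφ b (max Na Nb) (fun n hn => hNb n (le_trans (le_max_right _ _) hn)),
      ← Finset.sum_add_distrib]
    refine Finset.sum_congr rfl fun i _ => ?_
    rw [map_add, mul_add, mul_add]
  have hψadd : ∀ a b : A, ψ (a + b) = ψ a + ψ b := by
    intro a b
    obtain ⟨Na, hNa⟩ := hge a
    obtain ⟨Nb, hNb⟩ := hge b
    have hab : ∀ n, max Na Nb ≤ n → (δ ^ n) (a + b) = 0 := by
      intro n hn
      rw [map_add, hNa n (le_trans (le_max_left _ _) hn),
        hNb n (le_trans (le_max_right _ _) hn), add_zero]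
    rw [hsumψ (a + b) _ hab, hsumψ a (max Na Nb) (fun n hn => hNa n (le_trans (le_max_left _ _) hn)),
      hsumψ b (max Na Nb) (fun n hn => hNb n (le_trans (le_max_right _ _) hn)),
      ← Finset.sum_add_distrib]
    refine Finset.sum_congr rfl fun i _ => ?_
    rw [map_add, add_mul, mul_add]
  -- smul
  have hφsmul : ∀ (k : K) (a : A), φ (k • a) = k • φ a := by
    intro k a
    obtain ⟨N, hN⟩ := hge a
    have hka : ∀ n, N ≤ n → (δ ^ n) (k • a) = 0 := by
      intro n hn; rw [map_smul, hN n hn, smul_zero]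
    rw [hsumφ (k • a) N hka, hsumφ a N hN, Finset.smul_sum]
    refine Finset.sum_congr rfl fun i _ => ?_
    rw [map_smul, mul_smul_comm, mul_smul_comm]
  have hψsmul : ∀ (k : K) (a : A), ψ (k • a) = k • ψ a := by
    intro k a
    obtain ⟨N, hN⟩ := hge a
    have hka : ∀ n, N ≤ n → (δ ^ n) (k • a) = 0 := by
      intro n hn; rw [map_smul, hN n hn, smul_zero]
    rw [hsumψ (k • a) N hka, hsumψ a N hN, Finset.smul_sum]
    refine Finset.sum_congr rfl fun i _ => ?_
    rw [map_smul, smul_mul_assoc, mul_smul_comm]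
  -- powers on products with constants
  have hpowR : ∀ (a c : A), δ c = 0 → ∀ n : ℕ, (δ ^ n) (a * c) = (δ ^ n) a * c := by
    intro a c hc n
    induction n with
    | zero => simp
    | succ n ih =>
      rw [pow_succ', Module.End.mul_apply, ih, hleib, hc, mul_zero, add_zero,
        Module.End.mul_apply]
  have hpowL : ∀ (a c : A), δ c = 0 → ∀ n : ℕ, (δ ^ n) (c * a) = c * (δ ^ n) a := by
    intro a c hc n
    induction n with
    | zero => simp
    | succ n ih =>
      rw [pow_succ', Module.End.mul_apply, ih, hleib, hc, zero_mul, zero_add,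
        Module.End.mul_apply]
  -- module linearity over constants
  have hφmod : ∀ a c : A, δ c = 0 → φ (a * c) = φ a * c := by
    intro a c hc
    obtain ⟨N, hN⟩ := hge a
    have hac : ∀ n, N ≤ n → (δ ^ n) (a * c) = 0 := by
      intro n hn; rw [hpowR a c hc, hN n hn, zero_mul]
    rw [hsumφ (a * c) N hac, hsumφ a N hN, Finset.sum_mul]
    refine Finset.sum_congr rfl fun i _ => ?_
    rw [hpowR a c hc, mul_assoc, mul_assoc]
  have hψmod : ∀ a c : A, δ c = 0 → ψ (c * a) = c * ψ a := by
    intro a c hc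
    obtain ⟨N, hN⟩ := hge a
    have hac : ∀ n, N ≤ n → (δ ^ n) (c * a) = 0 := by
      intro n hn; rw [hpowL a c hc, hN n hn, mul_zero]
    rw [hsumψ (c * a) N hac, hsumψ a N hN, Finset.mul_sum]
    refine Finset.sum_congr rfl fun i _ => ?_
    rw [hpowL a c hc]
    simp only [← mul_assoc]
    rw [((Commute.neg_one_left c).pow_left i).eq]
  -- δ kills φ a
  have hδφ : ∀ a : A, δ (φ a) = 0 := by
    intro a
    obtain ⟨N, hN⟩ := hge a
    rw [hsumφ a (N + 1) (fun n hn => hN n (le_trans (Nat.le_succ N) hn)), map_sum]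
    set g : ℕ → A := fun i => (-1 : A) ^ i * (x i * (δ ^ (i + 1)) a) with hg
    have hterm0 : δ ((-1 : A) ^ 0 * (x 0 * (δ ^ 0) a)) = g 0 := by
      rw [hmulneg, hleib, hx0, h1, zero_mul, zero_add, hg]
      simp [pow_succ, hx0]
    have hterm : ∀ i : ℕ,
        δ ((-1 : A) ^ (i + 1) * (x (i + 1) * (δ ^ (i + 1)) a)) = g (i + 1) - g i := by
      intro i
      rw [hmulneg, hleib, hx i, hg]
      have hds : (δ ^ (i + 1 + 1)) a = δ ((δ ^ (i + 1)) a) := by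
        rw [pow_succ' δ (i + 1), Module.End.mul_apply]
      rw [← hds]
      simp only []
      rw [pow_succ]
      noncomm_ring
    rw [Finset.sum_range_succ']
    simp only [hterm, hterm0]
    rw [Finset.sum_range_sub g, sub_add_cancel, hg]
    simp only []
    rw [hN (N + 1) (Nat.le_succ N), mul_zero, mul_zero]
  have hδψ : ∀ a : A, δ (ψ a) = 0 := by
    intro a
    obtain ⟨N, hN⟩ := hge a
    rw [hsumψ a (N + 1) (fun n hn => hN n (le_trans (Nat.le_succ N) hn)), map_sum]
    set g : ℕ → A := fun i => (-1 : A) ^ i * ((δ ^ (i + 1)) a * x i) with hg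
    have hterm0 : δ ((-1 : A) ^ 0 * ((δ ^ 0) a * x 0)) = g 0 := by
      rw [hmulneg, hleib, hx0, h1, mul_zero, add_zero, hg]
      simp [pow_succ, hx0]
    have hterm : ∀ i : ℕ,
        δ ((-1 : A) ^ (i + 1) * ((δ ^ (i + 1)) a * x (i + 1))) = g (i + 1) - g i := by
      intro i
      rw [hmulneg, hleib, hx i, hg]
      have hds : (δ ^ (i + 1 + 1)) a = δ ((δ ^ (i + 1)) a) := by
        rw [pow_succ' δ (i + 1), Module.End.mul_apply]
      rw [← hds]
      simp only []
      rw [pow_succ]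
      noncomm_ring
    rw [Finset.sum_range_succ']
    simp only [hterm, hterm0]
    rw [Finset.sum_range_sub g, sub_add_cancel, hg]
    simp only []
    rw [hN (N + 1) (Nat.le_succ N), zero_mul, mul_zero]
  -- φ and ψ fix constants
  have hconst : ∀ y : A, δ y = 0 → φ y = y ∧ ψ y = y := by
    intro y hy
    have h1y : ∀ n, 1 ≤ n → (δ ^ n) y = 0 := by
      intro n hn
      exact hup y (by rwa [pow_one]) hn
    constructor
    · rw [hsumφ y 1 h1y]
      simp [hx0]
    · rw [hsumψ y 1 h1y]
      simp [hx0]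
  -- powers of δ on the x's
  have hxj : ∀ (j i : ℕ), (δ ^ j) (x (i + j)) = x i := by
    intro j
    induction j with
    | zero => intro i; simp
    | succ j ih =>
      intro i
      rw [pow_succ, Module.End.mul_apply]
      have : (i + (j + 1)) = (i + j) + 1 := rfl
      rw [this, hx (i + j), ih i]
  have hxtop : ∀ (i n : ℕ), i + 1 ≤ n → (δ ^ n) (x i) = 0 := by
    intro i n hn
    refine hup (x i) ?_ hn
    rw [pow_succ', Module.End.mul_apply]
    have : (δ ^ i) (x i) = x 0 := by
      have := hxj i 0
      rwa [zero_add] at this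
    rw [this, hx0, h1]
  -- φ and ψ kill the x i for i ≥ 1
  have hφx : ∀ i : ℕ, 1 ≤ i → φ (x i) = 0 := by
    intro i hi
    rw [hsumφ (x i) (i + 1) (hxtop i)]
    have hterm : ∀ j ∈ Finset.range (i + 1),
        (-1 : A) ^ j * (x j * (δ ^ j) (x i)) = ((-1 : ℤ) ^ j * (i.choose j : ℤ)) • x i := by
      intro j hj
      have hji : j ≤ i := Nat.lt_succ_iff.mp (Finset.mem_range.mp hj)
      have hd : (δ ^ j) (x i) = x (i - j) := by
        conv_lhs => rw [show i = (i - j) + j from (Nat.sub_add_cancel hji).symm]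
        exact hxj j (i - j)
      rw [hd, hiter j (i - j), Nat.add_sub_cancel' hji, zsmul_eq_mul, nsmul_eq_mul]
      push_cast
      rw [← mul_assoc]
    rw [Finset.sum_congr rfl hterm, ← Finset.sum_smul, Int.alternating_sum_range_choose,
      if_neg (Nat.one_le_iff_ne_zero.mp hi), zero_smul]
  have hψx : ∀ i : ℕ, 1 ≤ i → ψ (x i) = 0 := by
    intro i hi
    rw [hsumψ (x i) (i + 1) (hxtop i)]
    have hterm : ∀ j ∈ Finset.range (i + 1),
        (-1 : A) ^ j * ((δ ^ j) (x i) * x j) = ((-1 : ℤ) ^ j * (i.choose j : ℤ)) • x i := by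
      intro j hj
      have hji : j ≤ i := Nat.lt_succ_iff.mp (Finset.mem_range.mp hj)
      have hd : (δ ^ j) (x i) = x (i - j) := by
        conv_lhs => rw [show i = (i - j) + j from (Nat.sub_add_cancel hji).symm]
        exact hxj j (i - j)
      rw [hd, hiter (i - j) j, Nat.sub_add_cancel hji, Nat.choose_symm hji,
        zsmul_eq_mul, nsmul_eq_mul]
      push_cast
      rw [← mul_assoc]
    rw [Finset.sum_congr rfl hterm, ← Finset.sum_smul, Int.alternating_sum_range_choose,
      if_neg (Nat.one_le_iff_ne_zero.mp hi), zero_smul]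
  -- φ kills A_+
  have hφ0 : φ 0 = 0 := by
    have h := hφadd 0 0
    rw [add_zero] at h
    exact (left_eq_add.mp h)
  have hψ0 : ψ 0 = 0 := by
    have h := hψadd 0 0
    rw [add_zero] at h
    exact (left_eq_add.mp h)
  have hφplus : ∀ a ∈ ⨆ (i : ℕ) (_ : 1 ≤ i), (ker δ).map (mulLeft K (x i)), φ a = 0 := by
    let P : Submodule K A :=
      { carrier := {a | φ a = 0}
        add_mem' := fun {a b} ha hb => by
          simp only [Set.mem_setOf_eq] at *
          rw [hφadd, ha, hb, add_zero]
        zero_mem' := hφ0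
        smul_mem' := fun k a ha => by
          simp only [Set.mem_setOf_eq] at *
          rw [hφsmul, ha, smul_zero] }
    intro a ha
    refine (iSup_le fun i => iSup_le fun hi => ?_ : _ ≤ P) ha
    rintro b hb
    obtain ⟨c, hc, rfl⟩ := Submodule.mem_map.mp hb
    show φ (mulLeft K (x i) c) = 0
    rw [mulLeft_apply, hφmod (x i) c (mem_ker.mp hc), hφx i hi, zero_mul]
  have hψplus : ∀ a ∈ ⨆ (i : ℕ) (_ : 1 ≤ i), (ker δ).map (mulRight K (x i)), ψ a = 0 := by
    let P : Submodule K A :=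
      { carrier := {a | ψ a = 0}
        add_mem' := fun {a b} ha hb => by
          simp only [Set.mem_setOf_eq] at *
          rw [hψadd, ha, hb, add_zero]
        zero_mem' := hψ0
        smul_mem' := fun k a ha => by
          simp only [Set.mem_setOf_eq] at *
          rw [hψsmul, ha, smul_zero] }
    intro a ha
    refine (iSup_le fun i => iSup_le fun hi => ?_ : _ ≤ P) ha
    rintro b hb
    obtain ⟨c, hc, rfl⟩ := Submodule.mem_map.mp hb
    show ψ (mulRight K (x i) c) = 0
    rw [mulRight_apply, hψmod (x i) c (mem_ker.mp hc), hψx i hi, mul_zero]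
  exact ⟨hφadd, hφsmul, hψadd, hψsmul, hφmod, hψmod, hδφ, hδψ, hconst, hφplus, hψplus,
    fun i hi => ⟨hφx i hi, hψx i hi⟩⟩
end

section
/- Let δ be a locally nilpotent K-derivation of A and (x^[i])_{i≥0} an infinite iterative δ-descent, and let φ(a) := Σ_{i≥0} (-1)^i x^[i]·δ^i(a), ψ(a) := Σ_{i≥0} (-1)^i δ^i(a)·x^[i]. Then every a ∈ A satisfies the Taylor-type expansions a = Σ_{i≥0} x^[i]·φ(δ^i(a)) = Σ_{i≥0} ψ(δ^i(a))·x^[i] (finite sums). If, in addition, all elements x^[i] are central in A, then φ and ψ are A^δ-algebra homomorphisms (in particular multiplicative). -/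
open LinearMap

namespace Stmt4Aux

lemma fin_tr {M : Type*} [AddCommMonoid M] {f : ℕ → M} {N : ℕ}
    (h : ∀ i, N ≤ i → f i = 0) : ∑ᶠ i, f i = ∑ i ∈ Finset.range N, f i :=
  finsum_eq_sum_of_support_subset f fun i hi => by
    simp only [Function.mem_support] at hi
    simp only [Finset.coe_range, Set.mem_Iio]
    by_contra hlt
    exact hi (h i (le_of_not_gt hlt))

lemma alt {A : Type*} [Ring A] (n : ℕ) :
    (∑ k ∈ Finset.range (n + 1), (-1 : A) ^ k * (n.choose k : A))
      = if n = 0 then 1 else 0 := by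
  have h := Int.alternating_sum_range_choose (n := n)
  have h2 := congrArg (fun z : ℤ => (z : A)) h
  simp only [Int.cast_sum, Int.cast_mul, Int.cast_pow, Int.cast_neg, Int.cast_one,
    Int.cast_natCast, Int.cast_ite, Int.cast_zero] at h2
  exact h2

lemma altp2 {A : Type*} [Ring A] (n : ℕ) :
    (∑ p ∈ Finset.HasAntidiagonal.antidiagonal n, (-1 : A) ^ p.2 * (n.choose p.2 : A))
      = if n = 0 then 1 else 0 := by
  rw [Finset.Nat.sum_antidiagonal_eq_sum_range_succ (fun i j => (-1 : A) ^ j * (n.choose j : A))]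
  have := Finset.sum_range_reflect (fun j => (-1 : A) ^ j * (n.choose j : A)) (n + 1)
  simp only [Nat.add_sub_cancel] at this
  rw [this, alt]

lemma altp1 {A : Type*} [Ring A] (n : ℕ) :
    (∑ p ∈ Finset.HasAntidiagonal.antidiagonal n, (-1 : A) ^ p.2 * (n.choose p.1 : A))
      = if n = 0 then 1 else 0 := by
  rw [← altp2 (A := A) n]
  refine Finset.sum_congr rfl fun p hp => ?_
  rw [Finset.HasAntidiagonal.mem_antidiagonal] at hp
  congr 1
  rw [show n.choose p.1 = n.choose (n - p.2) by congr 1; omega, Nat.choose_symm (by omega)]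

lemma dbl {M : Type*} [AddCommMonoid M] (N : ℕ) (g : ℕ → ℕ → M)
    (h : ∀ i j, N ≤ i + j → g i j = 0) :
    ∑ i ∈ Finset.range N, ∑ j ∈ Finset.range N, g i j
      = ∑ n ∈ Finset.range N, ∑ p ∈ Finset.HasAntidiagonal.antidiagonal n, g p.1 p.2 := by
  rw [← Finset.sum_product']
  rw [← Finset.sum_biUnion (by
    intro m _ n _ hmn
    simp only [Function.onFun]
    rw [Finset.disjoint_left]
    intro p hpm hpn
    exact hmn (by rw [← Finset.HasAntidiagonal.mem_antidiagonal.1 hpm, Finset.HasAntidiagonal.mem_antidiagonal.1 hpn]))]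
  refine (Finset.sum_subset ?_ ?_).symm
  · intro p hp
    simp only [Finset.mem_biUnion, Finset.mem_range, Finset.HasAntidiagonal.mem_antidiagonal] at hp
    obtain ⟨n, hn, hpn⟩ := hp
    simp only [Finset.mem_product, Finset.mem_range]
    omega
  · intro p _ hp
    simp only [Finset.mem_biUnion, Finset.mem_range, Finset.HasAntidiagonal.mem_antidiagonal] at hp
    push_neg at hp
    by_cases hcc : N ≤ p.1 + p.2
    · exact h p.1 p.2 hcc
    · exact absurd rfl (hp (p.1 + p.2) (by omega))

lemma leib_pow {K A : Type*} [Field K] [Ring A] [Algebra K A] (δ : Module.End K A)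
    (hleib : ∀ a b : A, δ (a * b) = δ a * b + a * δ b) (a b : A) :
    ∀ n : ℕ, (δ ^ n) (a * b)
      = ∑ k ∈ Finset.range (n + 1), (n.choose k) • ((δ ^ k) a * (δ ^ (n - k)) b) := by
  have hpow : ∀ (m : ℕ) (y : A), (δ ^ (m + 1)) y = δ ((δ ^ m) y) := fun m y => by
    rw [pow_succ', Module.End.mul_apply]
  intro n
  induction n with
  | zero => simp
  | succ n ih =>
    rw [hpow n (a * b), ih, map_sum]
    have hterm : ∀ k, δ ((n.choose k) • ((δ ^ k) a * (δ ^ (n - k)) b))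
        = (n.choose k) • ((δ ^ (k + 1)) a * (δ ^ (n - k)) b)
          + (n.choose k) • ((δ ^ k) a * (δ ^ (n - k + 1)) b) := by
      intro k
      rw [map_nsmul, hleib, smul_add, ← hpow k a, ← hpow (n - k) b]
    rw [Finset.sum_congr rfl fun k _ => hterm k, Finset.sum_add_distrib]
    have hS2 : (∑ k ∈ Finset.range (n + 1), (n.choose k) • ((δ ^ k) a * (δ ^ (n - k + 1)) b))
        = ∑ k ∈ Finset.range (n + 1), (n.choose k) • ((δ ^ k) a * (δ ^ (n + 1 - k)) b) := by
      refine Finset.sum_congr rfl fun k hk => ?_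
      rw [Finset.mem_range] at hk
      rw [show n - k + 1 = n + 1 - k by omega]
    rw [hS2]
    rw [Finset.sum_range_succ' (fun k => ((n + 1).choose k) • ((δ ^ k) a * (δ ^ (n + 1 - k)) b))]
    simp only [Nat.choose_succ_succ, Nat.succ_sub_succ, Nat.choose_zero_right, one_smul,
      Nat.sub_zero, add_smul, Finset.sum_add_distrib, pow_zero, Module.End.one_apply]
    have hU : (∑ k ∈ Finset.range (n + 1), (n.choose k) • ((δ ^ k) a * (δ ^ (n + 1 - k)) b))
        = (∑ k ∈ Finset.range (n + 1), (n.choose (k + 1)) • ((δ ^ (k + 1)) a * (δ ^ (n - k)) b))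
          + a * (δ ^ (n + 1)) b := by
      have e1 := Finset.sum_range_succ'
        (fun k => (n.choose k) • ((δ ^ k) a * (δ ^ (n + 1 - k)) b)) (n + 1)
      have e2 := Finset.sum_range_succ
        (fun k => (n.choose k) • ((δ ^ k) a * (δ ^ (n + 1 - k)) b)) (n + 1)
      simp only [Nat.choose_succ_self, zero_smul, add_zero, Nat.choose_zero_right, one_smul,
        Nat.sub_zero, Nat.succ_sub_succ, pow_zero, Module.End.one_apply] at e1 e2
      rw [← e2, e1]
    rw [hU]
    abel

end Stmt4Aux

open Stmt4Aux Finset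

/-- Let `δ` be a locally nilpotent `K`-derivation of `A` and `(x i)` an
infinite iterative `δ`-descent; let `φ a := ∑_{i≥0} (-1)^i (x i)·δ^i a` and
`ψ a := ∑_{i≥0} (-1)^i (δ^i a)·(x i)`.  Then every `a ∈ A` satisfies the Taylor-type
expansions `a = ∑_{i≥0} (x i)·φ(δ^i a) = ∑_{i≥0} ψ(δ^i a)·(x i)` (finite sums).  If, in
addition, all `x i` are central in `A`, then `φ` and `ψ` are `A^δ`-algebra homomorphisms
(in particular unital and multiplicative). -/
theorem stmt_4 {K A : Type*} [Field K] [Ring A] [Algebra K A]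
    (δ : Module.End K A) (hleib : ∀ a b : A, δ (a * b) = δ a * b + a * δ b)
    (hln : ∀ a : A, ∃ n : ℕ, (δ ^ n) a = 0)
    (x : ℕ → A) (hx0 : x 0 = 1) (hx : ∀ i : ℕ, δ (x (i + 1)) = x i)
    (hiter : ∀ i j : ℕ, x i * x j = ((i + j).choose i) • x (i + j))
    (φ ψ : A → A)
    (hφ : ∀ a : A, φ a = ∑ᶠ i : ℕ, (-1 : A) ^ i * (x i * (δ ^ i) a))
    (hψ : ∀ a : A, ψ a = ∑ᶠ i : ℕ, (-1 : A) ^ i * ((δ ^ i) a * x i)) :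
    (∀ a : A, a = ∑ᶠ i : ℕ, x i * φ ((δ ^ i) a)) ∧
    (∀ a : A, a = ∑ᶠ i : ℕ, ψ ((δ ^ i) a) * x i) ∧
    ((∀ (i : ℕ) (a : A), Commute (x i) a) →
      φ 1 = 1 ∧ ψ 1 = 1 ∧
      (∀ a b : A, φ (a * b) = φ a * φ b) ∧
      (∀ a b : A, ψ (a * b) = ψ a * ψ b) ∧
      (∀ a c : A, δ c = 0 → φ (c * a) = c * φ a ∧ φ (a * c) = φ a * c) ∧
      (∀ a c : A, δ c = 0 → ψ (c * a) = c * ψ a ∧ ψ (a * c) = ψ a * c)) := by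
  have hcomp : ∀ (i j : ℕ) (a : A), (δ ^ j) ((δ ^ i) a) = (δ ^ (i + j)) a := fun i j a => by
    rw [← Module.End.mul_apply, ← pow_add, Nat.add_comm j i]
  have hbound : ∀ a : A, ∃ N : ℕ, ∀ m, N ≤ m → (δ ^ m) a = 0 := by
    intro a
    obtain ⟨n, hn⟩ := hln a
    refine ⟨n, fun m hm => ?_⟩
    rw [← Nat.sub_add_cancel hm, pow_add, Module.End.mul_apply, hn, map_zero]
  have hφsum : ∀ (a : A) (N : ℕ), (∀ m, N ≤ m → (δ ^ m) a = 0) →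
      φ a = ∑ i ∈ range N, (-1 : A) ^ i * (x i * (δ ^ i) a) := fun a N h => by
    rw [hφ a]; exact fin_tr fun i hi => by rw [h i hi, mul_zero, mul_zero]
  have hψsum : ∀ (a : A) (N : ℕ), (∀ m, N ≤ m → (δ ^ m) a = 0) →
      ψ a = ∑ i ∈ range N, (-1 : A) ^ i * ((δ ^ i) a * x i) := fun a N h => by
    rw [hψ a]; exact fin_tr fun i hi => by rw [h i hi, zero_mul, mul_zero]
  have hφ0 : φ 0 = 0 := by
    rw [hφsum 0 0 (fun m _ => map_zero _), Finset.sum_range_zero]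
  have hψ0 : ψ 0 = 0 := by
    rw [hψsum 0 0 (fun m _ => map_zero _), Finset.sum_range_zero]
  refine ⟨?_, ?_, ?_⟩
  · -- Taylor for φ
    intro a
    obtain ⟨N0, hN0⟩ := hbound a
    set M := N0 + 1 with hMdef
    have hN : ∀ m, M ≤ m → (δ ^ m) a = 0 := fun m hm => hN0 m (by omega)
    have h1 : ∑ᶠ i, x i * φ ((δ ^ i) a) = ∑ i ∈ range M, x i * φ ((δ ^ i) a) :=
      fin_tr fun i hi => by rw [hN i hi, hφ0, mul_zero]
    have h2 : ∀ i : ℕ, φ ((δ ^ i) a)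
        = ∑ j ∈ range M, (-1 : A) ^ j * (x j * (δ ^ (i + j)) a) := fun i => by
      rw [hφsum ((δ ^ i) a) M (fun m hm => by rw [hcomp i m a]; exact hN _ (by omega))]
      exact Finset.sum_congr rfl fun j _ => by rw [hcomp i j a]
    have h3 : ∀ i j : ℕ, x i * ((-1 : A) ^ j * (x j * (δ ^ (i + j)) a))
        = (-1 : A) ^ j * (((i + j).choose i) • (x (i + j) * (δ ^ (i + j)) a)) := by
      intro i j
      rw [← ((Commute.neg_one_left (x i)).pow_left j).left_comm, ← mul_assoc (x i) (x j),
        hiter i j, smul_mul_assoc]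
    have h5 : ∀ n : ℕ, (∑ p ∈ Finset.HasAntidiagonal.antidiagonal n,
          (-1 : A) ^ p.2 * (((p.1 + p.2).choose p.1) • (x (p.1 + p.2) * (δ ^ (p.1 + p.2)) a)))
        = (if n = 0 then 1 else 0) * (x n * (δ ^ n) a) := by
      intro n
      rw [← altp1 n, Finset.sum_mul]
      refine Finset.sum_congr rfl fun p hp => ?_
      rw [Finset.HasAntidiagonal.mem_antidiagonal] at hp
      rw [hp, nsmul_eq_mul, ← mul_assoc]
    have h6 : ∑ i ∈ range M, x i * φ ((δ ^ i) a)
        = ∑ n ∈ range M, (if n = 0 then 1 else 0) * (x n * (δ ^ n) a) := by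
      calc ∑ i ∈ range M, x i * φ ((δ ^ i) a)
          = ∑ i ∈ range M, ∑ j ∈ range M,
              (-1 : A) ^ j * (((i + j).choose i) • (x (i + j) * (δ ^ (i + j)) a)) := by
            refine Finset.sum_congr rfl fun i _ => ?_
            rw [h2 i, Finset.mul_sum]
            exact Finset.sum_congr rfl fun j _ => h3 i j
        _ = ∑ n ∈ range M, ∑ p ∈ Finset.HasAntidiagonal.antidiagonal n,
              (-1 : A) ^ p.2 * (((p.1 + p.2).choose p.1) • (x (p.1 + p.2) * (δ ^ (p.1 + p.2)) a)) :=
            dbl M _ (fun i j hij => by rw [hN (i + j) hij, mul_zero, smul_zero, mul_zero])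
        _ = ∑ n ∈ range M, (if n = 0 then 1 else 0) * (x n * (δ ^ n) a) :=
            Finset.sum_congr rfl fun n _ => h5 n
    rw [h1, h6]
    simp only [ite_mul, one_mul, zero_mul]
    rw [Finset.sum_ite_eq' (range M) 0 (fun n => x n * (δ ^ n) a),
      if_pos (Finset.mem_range.2 (by omega))]
    simp [hx0]
  · -- Taylor for ψ
    intro a
    obtain ⟨N0, hN0⟩ := hbound a
    set M := N0 + 1 with hMdef
    have hN : ∀ m, M ≤ m → (δ ^ m) a = 0 := fun m hm => hN0 m (by omega)
    have h1 : ∑ᶠ i, ψ ((δ ^ i) a) * x i = ∑ i ∈ range M, ψ ((δ ^ i) a) * x i :=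
      fin_tr fun i hi => by rw [hN i hi, hψ0, zero_mul]
    have h2 : ∀ i : ℕ, ψ ((δ ^ i) a)
        = ∑ j ∈ range M, (-1 : A) ^ j * ((δ ^ (i + j)) a * x j) := fun i => by
      rw [hψsum ((δ ^ i) a) M (fun m hm => by rw [hcomp i m a]; exact hN _ (by omega))]
      exact Finset.sum_congr rfl fun j _ => by rw [hcomp i j a]
    have h3 : ∀ i j : ℕ, ((-1 : A) ^ j * ((δ ^ (i + j)) a * x j)) * x i
        = (-1 : A) ^ j * (((i + j).choose j) • ((δ ^ (i + j)) a * x (i + j))) := by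
      intro i j
      have e : j + i = i + j := Nat.add_comm j i
      rw [mul_assoc, mul_assoc, hiter j i, e, mul_smul_comm]
    have h5 : ∀ n : ℕ, (∑ p ∈ Finset.HasAntidiagonal.antidiagonal n,
          (-1 : A) ^ p.2 * (((p.1 + p.2).choose p.2) • ((δ ^ (p.1 + p.2)) a * x (p.1 + p.2))))
        = (if n = 0 then 1 else 0) * ((δ ^ n) a * x n) := by
      intro n
      rw [← altp2 n, Finset.sum_mul]
      refine Finset.sum_congr rfl fun p hp => ?_
      rw [Finset.HasAntidiagonal.mem_antidiagonal] at hp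
      rw [hp, nsmul_eq_mul, ← mul_assoc]
    have h6 : ∑ i ∈ range M, ψ ((δ ^ i) a) * x i
        = ∑ n ∈ range M, (if n = 0 then 1 else 0) * ((δ ^ n) a * x n) := by
      calc ∑ i ∈ range M, ψ ((δ ^ i) a) * x i
          = ∑ i ∈ range M, ∑ j ∈ range M,
              (-1 : A) ^ j * (((i + j).choose j) • ((δ ^ (i + j)) a * x (i + j))) := by
            refine Finset.sum_congr rfl fun i _ => ?_
            rw [h2 i, Finset.sum_mul]
            exact Finset.sum_congr rfl fun j _ => h3 i j
        _ = ∑ n ∈ range M, ∑ p ∈ Finset.HasAntidiagonal.antidiagonal n,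
              (-1 : A) ^ p.2 * (((p.1 + p.2).choose p.2) • ((δ ^ (p.1 + p.2)) a * x (p.1 + p.2))) :=
            dbl M _ (fun i j hij => by rw [hN (i + j) hij, zero_mul, smul_zero, mul_zero])
        _ = ∑ n ∈ range M, (if n = 0 then 1 else 0) * ((δ ^ n) a * x n) :=
            Finset.sum_congr rfl fun n _ => h5 n
    rw [h1, h6]
    simp only [ite_mul, one_mul, zero_mul]
    rw [Finset.sum_ite_eq' (range M) 0 (fun n => (δ ^ n) a * x n),
      if_pos (Finset.mem_range.2 (by omega))]
    simp [hx0]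
  · -- centrality consequences
    intro hc
    have hφψ : ∀ z : A, ψ z = φ z := fun z => by
      rw [hψ, hφ]
      exact finsum_congr fun i => by rw [(hc i ((δ ^ i) z)).eq]
    have hδ1 : δ (1 : A) = 0 := by
      have h := hleib 1 1
      rw [one_mul, mul_one, one_mul] at h
      exact (left_eq_add.mp h)
    have hφ1 : φ 1 = 1 := by
      rw [hφsum 1 1 (fun m hm => by
        obtain ⟨k, rfl⟩ : ∃ k, m = k + 1 := ⟨m - 1, by omega⟩
        rw [pow_succ, Module.End.mul_apply, hδ1, map_zero])]
      simp [hx0]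
    have hconstL : ∀ c : A, δ c = 0 → ∀ (i : ℕ) (a : A), (δ ^ i) (c * a) = c * (δ ^ i) a := by
      intro c hc0 i
      induction i with
      | zero => intro a; simp
      | succ k ihk =>
        intro a
        rw [pow_succ, Module.End.mul_apply, hleib, hc0, zero_mul, zero_add, ihk,
          ← Module.End.mul_apply, ← pow_succ]
    have hconstR : ∀ c : A, δ c = 0 → ∀ (i : ℕ) (a : A), (δ ^ i) (a * c) = (δ ^ i) a * c := by
      intro c hc0 i
      induction i with
      | zero => intro a; simp
      | succ k ihk =>
        intro a
        rw [pow_succ, Module.End.mul_apply, hleib, hc0, mul_zero, add_zero, ihk,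
          ← Module.End.mul_apply, ← pow_succ]
    have hφcL : ∀ a c : A, δ c = 0 → φ (c * a) = c * φ a := by
      intro a c hc0
      obtain ⟨N, hN⟩ := hbound a
      rw [hφsum a N hN,
        hφsum (c * a) N (fun m hm => by rw [hconstL c hc0 m a, hN m hm, mul_zero]),
        Finset.mul_sum]
      refine Finset.sum_congr rfl fun i _ => ?_
      rw [hconstL c hc0 i a, (hc i c).left_comm,
        ((Commute.neg_one_left c).pow_left i).left_comm]
    have hφcR : ∀ a c : A, δ c = 0 → φ (a * c) = φ a * c := by
      intro a c hc0
      obtain ⟨N, hN⟩ := hbound a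
      rw [hφsum a N hN,
        hφsum (a * c) N (fun m hm => by rw [hconstR c hc0 m a, hN m hm, zero_mul]),
        Finset.sum_mul]
      refine Finset.sum_congr rfl fun i _ => ?_
      rw [hconstR c hc0 i a, mul_assoc, mul_assoc]
    have hφm : ∀ a b : A, φ (a * b) = φ a * φ b := by
      intro a b
      obtain ⟨Na, hNa⟩ := hbound a
      obtain ⟨Nb, hNb⟩ := hbound b
      set M := Na + Nb with hMdef
      have hab : ∀ m, M ≤ m → (δ ^ m) (a * b) = 0 := by
        intro m hm
        rw [leib_pow δ hleib a b m]
        refine Finset.sum_eq_zero fun k hk => ?_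
        rcases le_or_gt Na k with h | h
        · rw [hNa k h, zero_mul, smul_zero]
        · rw [hNb (m - k) (by omega), mul_zero, smul_zero]
      have hL : φ (a * b) = ∑ n ∈ range M, ∑ p ∈ Finset.HasAntidiagonal.antidiagonal n,
          (-1 : A) ^ (p.1 + p.2) * (((p.1 + p.2).choose p.1) •
            (x (p.1 + p.2) * ((δ ^ p.1) a * (δ ^ p.2) b))) := by
        rw [hφsum (a * b) M hab]
        refine Finset.sum_congr rfl fun n _ => ?_
        rw [Finset.Nat.sum_antidiagonal_eq_sum_range_succ_mk, leib_pow δ hleib a b n,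
          Finset.mul_sum, Finset.mul_sum]
        refine Finset.sum_congr rfl fun k hk => ?_
        rw [Finset.mem_range] at hk
        have hk' : k + (n - k) = n := by omega
        simp only [hk']
        rw [mul_smul_comm]
      have hR : φ a * φ b = ∑ n ∈ range M, ∑ p ∈ Finset.HasAntidiagonal.antidiagonal n,
          (-1 : A) ^ (p.1 + p.2) * (((p.1 + p.2).choose p.1) •
            (x (p.1 + p.2) * ((δ ^ p.1) a * (δ ^ p.2) b))) := by
        calc φ a * φ b
            = ∑ i ∈ range M, ∑ j ∈ range M,
                ((-1 : A) ^ i * (x i * (δ ^ i) a)) * ((-1 : A) ^ j * (x j * (δ ^ j) b)) := by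
              rw [hφsum a M (fun m hm => hNa m (by omega)),
                hφsum b M (fun m hm => hNb m (by omega)), Finset.sum_mul_sum]
          _ = ∑ i ∈ range M, ∑ j ∈ range M,
                (-1 : A) ^ (i + j) * (((i + j).choose i) •
                  (x (i + j) * ((δ ^ i) a * (δ ^ j) b))) := by
              refine Finset.sum_congr rfl fun i _ => Finset.sum_congr rfl fun j _ => ?_
              have inner : (x i * (δ ^ i) a) * (x j * (δ ^ j) b)
                  = ((i + j).choose i) • (x (i + j) * ((δ ^ i) a * (δ ^ j) b)) := by
                rw [mul_assoc, ((hc j ((δ ^ i) a)).symm).left_comm, ← mul_assoc, hiter i j,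
                  smul_mul_assoc]
              rw [mul_assoc,
                ← ((Commute.neg_one_left (x i * (δ ^ i) a)).pow_left j).left_comm,
                ← mul_assoc, ← pow_add, inner]
          _ = ∑ n ∈ range M, ∑ p ∈ Finset.HasAntidiagonal.antidiagonal n,
                (-1 : A) ^ (p.1 + p.2) * (((p.1 + p.2).choose p.1) •
                  (x (p.1 + p.2) * ((δ ^ p.1) a * (δ ^ p.2) b))) := by
              refine dbl M _ (fun i j hij => ?_)
              rcases le_or_gt Na i with h | h
              · rw [hNa i h, zero_mul, mul_zero, smul_zero, mul_zero]
              · rw [hNb j (by omega), mul_zero, mul_zero, smul_zero, mul_zero]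
      rw [hL, hR]
    refine ⟨hφ1, by rw [hφψ, hφ1], hφm, fun a b => by rw [hφψ, hφψ, hφψ, hφm],
      fun a c hc0 => ⟨hφcL a c hc0, hφcR a c hc0⟩,
      fun a c hc0 => ⟨by rw [hφψ, hφψ, hφcL a c hc0], by rw [hφψ, hφψ, hφcR a c hc0]⟩⟩
end

section
/- Let δ be a K-derivation of A with δ^l = 0 for some l ≥ 2, and let (x^[i])_{0≤i≤l-1} be an iterative δ-descent of length l. Define φ(a) := Σ_{i=0}^{l-1} (-1)^i x^[i]·δ^i(a) and ψ(a) := Σ_{i=0}^{l-1} (-1)^i δ^i(a)·x^[i]. Then: φ is right A^δ-linear and ψ is left A^δ-linear; both are projections onto A^δ (im(φ)=im(ψ)=A^δ and φ(y)=ψ(y)=y for y ∈ A^δ); φ(x^[i]) = ψ(x^[i]) = 0 for 1 ≤ i ≤ l-1; every a ∈ A satisfies a = Σ_{i=0}^{l-1} x^[i]·φ(δ^i(a)) = Σ_{i=0}^{l-1} ψ(δ^i(a))·x^[i]; and if all x^[i] are central and x^[i]·x^[j] ∈ A_+ := ⊕_{i=1}^{l-1} x^[i]·A^δ whenever i+j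 ≥ l, then φ and ψ are A^δ-algebra homomorphisms. -/
open LinearMap

/-- Let `δ` be a `K`-derivation of `A` with `δ^l = 0`, `l ≥ 2`, and let
`(x i)_{0 ≤ i ≤ l-1}` be an iterative `δ`-descent of length `l`.  Define
`φ a := ∑_{i=0}^{l-1} (-1)^i (x i)·δ^i a`, `ψ a := ∑_{i=0}^{l-1} (-1)^i (δ^i a)·(x i)`.
Then `φ` is right `A^δ`-linear, `ψ` is left `A^δ`-linear, both are projections onto `A^δ`,
`φ (x i) = ψ (x i) = 0` for `1 ≤ i ≤ l-1`, every `a ∈ A` satisfies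
`a = ∑_{i=0}^{l-1} (x i)·φ(δ^i a) = ∑_{i=0}^{l-1} ψ(δ^i a)·(x i)`, and if all `x i` are
central with `x i * x j ∈ A_+ := ⊕_{i=1}^{l-1} (x i)·A^δ` whenever `i + j ≥ l`, then `φ` and
`ψ` are `A^δ`-algebra homomorphisms. -/
theorem stmt_5 {K A : Type*} [Field K] [Ring A] [Algebra K A]
    (δ : Module.End K A) (hleib : ∀ a b : A, δ (a * b) = δ a * b + a * δ b)
    (l : ℕ) (hl : 2 ≤ l) (hnil : δ ^ l = 0)
    (x : ℕ → A) (hx0 : x 0 = 1) (hx : ∀ i : ℕ, i + 1 < l → δ (x (i + 1)) = x i)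
    (hiter : ∀ i j : ℕ, i + j < l → x i * x j = ((i + j).choose i) • x (i + j))
    (φ ψ : A → A)
    (hφ : ∀ a : A, φ a = ∑ i ∈ Finset.range l, (-1 : A) ^ i * (x i * (δ ^ i) a))
    (hψ : ∀ a : A, ψ a = ∑ i ∈ Finset.range l, (-1 : A) ^ i * ((δ ^ i) a * x i)) :
    (∀ a b : A, φ (a + b) = φ a + φ b) ∧ (∀ (k : K) (a : A), φ (k • a) = k • φ a) ∧
    (∀ a b : A, ψ (a + b) = ψ a + ψ b) ∧ (∀ (k : K) (a : A), ψ (k • a) = k • ψ a) ∧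
    (∀ a c : A, δ c = 0 → φ (a * c) = φ a * c) ∧
    (∀ a c : A, δ c = 0 → ψ (c * a) = c * ψ a) ∧
    (∀ a : A, δ (φ a) = 0) ∧ (∀ a : A, δ (ψ a) = 0) ∧
    (∀ y : A, δ y = 0 → φ y = y ∧ ψ y = y) ∧
    (∀ i : ℕ, 1 ≤ i → i < l → φ (x i) = 0 ∧ ψ (x i) = 0) ∧
    (∀ a : A, a = ∑ i ∈ Finset.range l, x i * φ ((δ ^ i) a)) ∧
    (∀ a : A, a = ∑ i ∈ Finset.range l, ψ ((δ ^ i) a) * x i) ∧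
    ((∀ (i : ℕ) (a : A), Commute (x i) a) →
      (∀ i j : ℕ, i < l → j < l → l ≤ i + j →
        x i * x j ∈ ⨆ i ∈ Finset.Ico 1 l, (ker δ).map (mulLeft K (x i))) →
      φ 1 = 1 ∧ ψ 1 = 1 ∧
      (∀ a b : A, φ (a * b) = φ a * φ b) ∧
      (∀ a b : A, ψ (a * b) = ψ a * ψ b)) := by
  have hδ1 : δ 1 = 0 := by
    have h := hleib 1 1
    simp only [one_mul, mul_one] at h
    exact (left_eq_add.mp h)
  have hδnegpow : ∀ i : ℕ, δ ((-1:A)^i) = 0 := by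
    intro i
    rcases Nat.even_or_odd i with h | h
    · rw [h.neg_one_pow]; exact hδ1
    · rw [h.neg_one_pow, map_neg, hδ1, neg_zero]
  have hpowsucc : ∀ (n : ℕ) (a : A), (δ ^ (n+1)) a = (δ ^ n) (δ a) := by
    intro n a; rw [pow_succ, Module.End.mul_apply]
  have hpowsucc' : ∀ (n : ℕ) (a : A), (δ ^ (n+1)) a = δ ((δ ^ n) a) := by
    intro n a; rw [pow_succ', Module.End.mul_apply]
  have hconstmul : ∀ a b : A, δ a = 0 → δ b = 0 → δ (a * b) = 0 := by
    intro a b ha hb; rw [hleib, ha, hb, zero_mul, mul_zero, add_zero]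
  have hpowconst : ∀ (c : A), δ c = 0 → ∀ n : ℕ, (δ ^ (n+1)) c = 0 := by
    intro c hc n; rw [hpowsucc, hc, map_zero]
  have hmulright : ∀ (c : A), δ c = 0 → ∀ (n : ℕ) (a : A), (δ ^ n) (a * c) = (δ ^ n) a * c := by
    intro c hc n
    induction n with
    | zero => intro a; simp
    | succ n ih =>
      intro a
      rw [hpowsucc, hleib, hc, mul_zero, add_zero, ih, hpowsucc]
  have hmulleft : ∀ (c : A), δ c = 0 → ∀ (n : ℕ) (a : A), (δ ^ n) (c * a) = c * (δ ^ n) a := by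
    intro c hc n
    induction n with
    | zero => intro a; simp
    | succ n ih =>
      intro a
      rw [hpowsucc, hleib, hc, zero_mul, zero_add, ih, hpowsucc]
  have hδxpow : ∀ m, m < l → ∀ k, (δ ^ k) (x m) = if k ≤ m then x (m - k) else 0 := by
    intro m hm k
    induction k with
    | zero => simp
    | succ k ih =>
      rw [hpowsucc', ih]
      by_cases hk : k ≤ m
      · rw [if_pos hk]
        by_cases hk' : k + 1 ≤ m
        · rw [if_pos hk']
          have h1 : m - k = (m - (k+1)) + 1 := by omega
          rw [h1, hx _ (by omega)]
        · rw [if_neg hk']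
          have : m - k = 0 := by omega
          rw [this, hx0, hδ1]
      · rw [if_neg hk, if_neg (by omega), map_zero]
  have hδl : ∀ a : A, (δ ^ l) a = 0 := by intro a; rw [hnil]; rfl

  have hφadd : ∀ a b : A, φ (a + b) = φ a + φ b := by
    intro a b
    simp only [hφ, map_add, mul_add, Finset.sum_add_distrib]
  have hφsmul : ∀ (k : K) (a : A), φ (k • a) = k • φ a := by
    intro k a
    simp only [hφ, map_smul, mul_smul_comm, Finset.smul_sum]
  have hψadd : ∀ a b : A, ψ (a + b) = ψ a + ψ b := by
    intro a b
    simp only [hψ, map_add, add_mul, mul_add, Finset.sum_add_distrib]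
  have hψsmul : ∀ (k : K) (a : A), ψ (k • a) = k • ψ a := by
    intro k a
    simp only [hψ, map_smul, smul_mul_assoc, mul_smul_comm, Finset.smul_sum]
  have hφ0 : φ 0 = 0 := by simp [hφ]
  have hψ0 : ψ 0 = 0 := by simp [hψ]
  have hφsub : ∀ a b : A, φ (a - b) = φ a - φ b := by
    intro a b
    have h1 : φ (-b) = -φ b := by
      have := hφsmul (-1 : K) b
      simpa using this
    rw [sub_eq_add_neg, hφadd, h1, sub_eq_add_neg]
  have hψsub : ∀ a b : A, ψ (a - b) = ψ a - ψ b := by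
    intro a b
    have h1 : ψ (-b) = -ψ b := by
      have := hψsmul (-1 : K) b
      simpa using this
    rw [sub_eq_add_neg, hψadd, h1, sub_eq_add_neg]
  have hφsum : ∀ {ι : Type} [DecidableEq ι] (s : Finset ι) (f : ι → A), φ (∑ i ∈ s, f i) = ∑ i ∈ s, φ (f i) := by
    intro ι _ s f
    induction s using Finset.induction with
    | empty => simpa using hφ0
    | insert _ _ hne ih => rw [Finset.sum_insert hne, Finset.sum_insert hne, hφadd, ih]
  have hψsum : ∀ {ι : Type} [DecidableEq ι] (s : Finset ι) (f : ι → A), ψ (∑ i ∈ s, f i) = ∑ i ∈ s, ψ (f i) := by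
    intro ι _ s f
    induction s using Finset.induction with
    | empty => simpa using hψ0
    | insert _ _ hne ih => rw [Finset.sum_insert hne, Finset.sum_insert hne, hψadd, ih]
  have hφnsmul : ∀ (n : ℕ) (a : A), φ (n • a) = n • φ a := by
    intro n a
    induction n with
    | zero => simpa using hφ0
    | succ n ih => rw [succ_nsmul, succ_nsmul, hφadd, ih]
  have hψnsmul : ∀ (n : ℕ) (a : A), ψ (n • a) = n • ψ a := by
    intro n a
    induction n with
    | zero => simpa using hψ0
    | succ n ih => rw [succ_nsmul, succ_nsmul, hψadd, ih]
  have hφmulc : ∀ a c : A, δ c = 0 → φ (a * c) = φ a * c := by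
    intro a c hc
    simp only [hφ, hmulright c hc, Finset.sum_mul, mul_assoc]
  have hψmulc : ∀ a c : A, δ c = 0 → ψ (c * a) = c * ψ a := by
    intro a c hc
    rw [hψ, hψ, Finset.mul_sum]
    refine Finset.sum_congr rfl fun i _ => ?_
    rw [hmulleft c hc]
    rcases Nat.even_or_odd i with h | h
    · rw [h.neg_one_pow]; simp [mul_assoc]
    · rw [h.neg_one_pow]; simp [mul_assoc]

  obtain ⟨m₀, hl2⟩ : ∃ m₀, l = m₀ + 2 := ⟨l - 2, by omega⟩
  have hδφ : ∀ a : A, δ (φ a) = 0 := by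
    intro a
    rw [hφ, map_sum]
    have hterm : ∀ i, δ ((-1:A)^i * (x i * (δ ^ i) a))
        = (-1:A)^i * (δ (x i) * (δ ^ i) a) + (-1:A)^i * (x i * (δ ^ (i+1)) a) := by
      intro i
      rw [hleib, hδnegpow, zero_mul, zero_add, hleib, mul_add, hpowsucc']
    simp only [hterm, Finset.sum_add_distrib]
    rw [hl2]
    rw [Finset.sum_range_succ' (fun i => (-1:A)^i * (δ (x i) * (δ ^ i) a)) (m₀ + 1)]
    rw [Finset.sum_range_succ (fun i => (-1:A)^i * (x i * (δ ^ (i+1)) a)) (m₀ + 1)]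
    rw [hx0, hδ1, zero_mul, mul_zero, add_zero]
    rw [show (δ ^ (m₀ + 1 + 1)) a = 0 from hl2 ▸ hδl a, mul_zero, mul_zero, add_zero]
    have h1 : ∀ i ∈ Finset.range (m₀ + 1), (-1:A)^(i+1) * (δ (x (i+1)) * (δ ^ (i+1)) a)
        = -((-1:A)^i * (x i * (δ ^ (i+1)) a)) := by
      intro i hi
      rw [Finset.mem_range] at hi
      rw [hx i (by omega), pow_succ, mul_assoc]
      simp [mul_assoc]
    rw [Finset.sum_congr rfl h1, Finset.sum_neg_distrib]
    exact neg_add_cancel _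
  have hδψ : ∀ a : A, δ (ψ a) = 0 := by
    intro a
    rw [hψ, map_sum]
    have hterm : ∀ i, δ ((-1:A)^i * ((δ ^ i) a * x i))
        = (-1:A)^i * ((δ ^ (i+1)) a * x i) + (-1:A)^i * ((δ ^ i) a * δ (x i)) := by
      intro i
      rw [hleib, hδnegpow, zero_mul, zero_add, hleib, mul_add, hpowsucc']
    simp only [hterm, Finset.sum_add_distrib]
    rw [hl2]
    rw [Finset.sum_range_succ' (fun i => (-1:A)^i * ((δ ^ i) a * δ (x i))) (m₀ + 1)]
    rw [Finset.sum_range_succ (fun i => (-1:A)^i * ((δ ^ (i+1)) a * x i)) (m₀ + 1)]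
    rw [hx0, hδ1, mul_zero, mul_zero, add_zero]
    rw [show (δ ^ (m₀ + 1 + 1)) a = 0 from hl2 ▸ hδl a, zero_mul, mul_zero, add_zero]
    have h1 : ∀ i ∈ Finset.range (m₀ + 1), (-1:A)^(i+1) * ((δ ^ (i+1)) a * δ (x (i+1)))
        = -((-1:A)^i * ((δ ^ (i+1)) a * x i)) := by
      intro i hi
      rw [Finset.mem_range] at hi
      rw [hx i (by omega), pow_succ]
      simp [mul_assoc]
    rw [Finset.sum_congr rfl h1, Finset.sum_neg_distrib]
    exact add_neg_cancel _
  have hφconst : ∀ y : A, δ y = 0 → φ y = y := by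
    intro y hy
    rw [hφ, Finset.sum_eq_single 0]
    · simp [hx0]
    · intro i _ hi
      obtain ⟨j, rfl⟩ := Nat.exists_eq_succ_of_ne_zero hi
      rw [hpowconst y hy j, mul_zero, mul_zero]
    · intro h; exact absurd (Finset.mem_range.mpr (by omega)) h
  have hψconst : ∀ y : A, δ y = 0 → ψ y = y := by
    intro y hy
    rw [hψ, Finset.sum_eq_single 0]
    · simp [hx0]
    · intro i _ hi
      obtain ⟨j, rfl⟩ := Nat.exists_eq_succ_of_ne_zero hi
      rw [hpowconst y hy j, zero_mul, mul_zero]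
    · intro h; exact absurd (Finset.mem_range.mpr (by omega)) h
  have haltsum : ∀ n : ℕ, 1 ≤ n → ∑ i ∈ Finset.range (n+1), (-1:A)^i * (n.choose i : A) = 0 := by
    intro n hn
    have h := Int.alternating_sum_range_choose (n := n)
    rw [if_neg (by omega)] at h
    have h2 : ((∑ i ∈ Finset.range (n+1), (-1:ℤ)^i * (n.choose i) : ℤ) : A) = 0 := by
      rw [h]; simp
    rw [← h2]
    push_cast
    rfl
  have hφx : ∀ i : ℕ, 1 ≤ i → i < l → φ (x i) = 0 := by
    intro n h1 h2
    rw [hφ]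
    rw [← Finset.sum_subset (Finset.range_subset_range.mpr (show n + 1 ≤ l by omega))
      (by
        intro i _ hi
        rw [Finset.mem_range] at hi
        rw [hδxpow n h2 i, if_neg (by omega), mul_zero, mul_zero])]
    have hterm : ∀ i ∈ Finset.range (n+1), (-1:A)^i * (x i * (δ ^ i) (x n))
        = ((-1:A)^i * (n.choose i : A)) * x n := by
      intro i hi
      rw [Finset.mem_range] at hi
      rw [hδxpow n h2 i, if_pos (by omega)]
      have hij : x i * x (n - i) = ((i + (n - i)).choose i) • x (i + (n - i)) :=
        hiter i (n - i) (by omega)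
      rw [show i + (n - i) = n by omega] at hij
      rw [hij, nsmul_eq_mul, mul_assoc]
    rw [Finset.sum_congr rfl hterm, ← Finset.sum_mul, haltsum n h1, zero_mul]
  have hψx : ∀ i : ℕ, 1 ≤ i → i < l → ψ (x i) = 0 := by
    intro n h1 h2
    rw [hψ]
    rw [← Finset.sum_subset (Finset.range_subset_range.mpr (show n + 1 ≤ l by omega))
      (by
        intro i _ hi
        rw [Finset.mem_range] at hi
        rw [hδxpow n h2 i, if_neg (by omega), zero_mul, mul_zero])]
    have hterm : ∀ i ∈ Finset.range (n+1), (-1:A)^i * ((δ ^ i) (x n) * x i)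
        = ((-1:A)^i * (n.choose i : A)) * x n := by
      intro i hi
      rw [Finset.mem_range] at hi
      rw [hδxpow n h2 i, if_pos (by omega)]
      have hij : x (n - i) * x i = (((n-i) + i).choose (n-i)) • x ((n - i) + i) :=
        hiter (n - i) i (by omega)
      rw [show (n - i) + i = n by omega, Nat.choose_symm (show i ≤ n by omega)] at hij
      rw [hij, nsmul_eq_mul, mul_assoc]
    rw [Finset.sum_congr rfl hterm, ← Finset.sum_mul, haltsum n h1, zero_mul]

  -- G a := ∑ x i * φ (δ^i a) ; key: δ (G a) = G (δ a)
  have hGshift : ∀ a : A, δ (∑ i ∈ Finset.range l, x i * φ ((δ ^ i) a))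
      = ∑ i ∈ Finset.range l, x i * φ ((δ ^ i) (δ a)) := by
    intro a
    rw [map_sum]
    have hterm : ∀ i, δ (x i * φ ((δ ^ i) a)) = δ (x i) * φ ((δ ^ i) a) := by
      intro i
      rw [hleib, hδφ, mul_zero, add_zero]
    simp only [hterm]
    rw [hl2]
    rw [Finset.sum_range_succ' (fun i => δ (x i) * φ ((δ ^ i) a)) (m₀ + 1)]
    rw [Finset.sum_range_succ (fun i => x i * φ ((δ ^ i) (δ a))) (m₀ + 1)]
    rw [hx0, hδ1, zero_mul, add_zero]
    rw [show (δ ^ (m₀ + 1)) (δ a) = 0 by rw [← hpowsucc]; exact hl2 ▸ hδl a]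
    rw [hφ0, mul_zero, add_zero]
    refine Finset.sum_congr rfl fun i hi => ?_
    rw [Finset.mem_range] at hi
    rw [hx i (by omega), hpowsucc]
  have hdecφaux : ∀ (n : ℕ) (a : A), (δ ^ n) a = 0 →
      a = ∑ i ∈ Finset.range l, x i * φ ((δ ^ i) a) := by
    intro n
    induction n with
    | zero =>
      intro a ha
      simp only [pow_zero, one_apply] at ha
      subst ha
      simp [hφ0]
    | succ n ih =>
      intro a ha
      have hda : (δ ^ n) (δ a) = 0 := by rw [← hpowsucc]; exact ha
      have h1 : δ a = ∑ i ∈ Finset.range l, x i * φ ((δ ^ i) (δ a)) := ih (δ a) hda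
      set G := ∑ i ∈ Finset.range l, x i * φ ((δ ^ i) a) with hG
      have h2 : δ (a - G) = 0 := by
        rw [map_sub, hG, hGshift a, ← h1, sub_self]
      have h3 : φ (a - G) = a - G := hφconst _ h2
      have h4 : φ G = φ a := by
        rw [hG, hφsum]
        rw [Finset.sum_eq_single 0]
        · simp only [pow_zero, one_apply, hx0, one_mul]
          exact hφconst _ (hδφ a)
        · intro i hi hi0
          rw [Finset.mem_range] at hi
          rw [hφmulc _ _ (hδφ _), hφx i (by omega) hi, zero_mul]
        · intro h; exact absurd (Finset.mem_range.mpr (by omega)) h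
      rw [hφsub, h4, sub_self] at h3
      exact sub_eq_zero.mp h3.symm
  have hdecφ : ∀ a : A, a = ∑ i ∈ Finset.range l, x i * φ ((δ ^ i) a) :=
    fun a => hdecφaux l a (hδl a)
  have hG'shift : ∀ a : A, δ (∑ i ∈ Finset.range l, ψ ((δ ^ i) a) * x i)
      = ∑ i ∈ Finset.range l, ψ ((δ ^ i) (δ a)) * x i := by
    intro a
    rw [map_sum]
    have hterm : ∀ i, δ (ψ ((δ ^ i) a) * x i) = ψ ((δ ^ i) a) * δ (x i) := by
      intro i
      rw [hleib, hδψ, zero_mul, zero_add]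
    simp only [hterm]
    rw [hl2]
    rw [Finset.sum_range_succ' (fun i => ψ ((δ ^ i) a) * δ (x i)) (m₀ + 1)]
    rw [Finset.sum_range_succ (fun i => ψ ((δ ^ i) (δ a)) * x i) (m₀ + 1)]
    rw [hx0, hδ1, mul_zero, add_zero]
    rw [show (δ ^ (m₀ + 1)) (δ a) = 0 by rw [← hpowsucc]; exact hl2 ▸ hδl a]
    rw [hψ0, zero_mul, add_zero]
    refine Finset.sum_congr rfl fun i hi => ?_
    rw [Finset.mem_range] at hi
    rw [hx i (by omega), hpowsucc]
  have hdecψaux : ∀ (n : ℕ) (a : A), (δ ^ n) a = 0 →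
      a = ∑ i ∈ Finset.range l, ψ ((δ ^ i) a) * x i := by
    intro n
    induction n with
    | zero =>
      intro a ha
      simp only [pow_zero, one_apply] at ha
      subst ha
      simp [hψ0]
    | succ n ih =>
      intro a ha
      have hda : (δ ^ n) (δ a) = 0 := by rw [← hpowsucc]; exact ha
      have h1 : δ a = ∑ i ∈ Finset.range l, ψ ((δ ^ i) (δ a)) * x i := ih (δ a) hda
      set G := ∑ i ∈ Finset.range l, ψ ((δ ^ i) a) * x i with hG
      have h2 : δ (a - G) = 0 := by
        rw [map_sub, hG, hG'shift a, ← h1, sub_self]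
      have h3 : ψ (a - G) = a - G := hψconst _ h2
      have h4 : ψ G = ψ a := by
        rw [hG, hψsum]
        rw [Finset.sum_eq_single 0]
        · simp only [pow_zero, one_apply, hx0, mul_one]
          exact hψconst _ (hδψ a)
        · intro i hi hi0
          rw [Finset.mem_range] at hi
          rw [hψmulc _ _ (hδψ _), hψx i (by omega) hi, mul_zero]
        · intro h; exact absurd (Finset.mem_range.mpr (by omega)) h
      rw [hψsub, h4, sub_self] at h3
      exact sub_eq_zero.mp h3.symm
  have hdecψ : ∀ a : A, a = ∑ i ∈ Finset.range l, ψ ((δ ^ i) a) * x i :=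
    fun a => hdecψaux l a (hδl a)

  have hmain : (∀ (i : ℕ) (a : A), Commute (x i) a) →
      (∀ i j : ℕ, i < l → j < l → l ≤ i + j →
        x i * x j ∈ ⨆ i ∈ Finset.Ico 1 l, (ker δ).map (mulLeft K (x i))) →
      φ 1 = 1 ∧ ψ 1 = 1 ∧
      (∀ a b : A, φ (a * b) = φ a * φ b) ∧
      (∀ a b : A, ψ (a * b) = ψ a * ψ b) := by
    intro hcomm hplus
    have hφS : ∀ s ∈ (⨆ i ∈ Finset.Ico 1 l, (ker δ).map (mulLeft K (x i))), φ s = 0 := by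
      let Φ : A →ₗ[K] A :=
        { toFun := φ, map_add' := hφadd, map_smul' := hφsmul }
      intro s hs
      have hle : (⨆ i ∈ Finset.Ico 1 l, (ker δ).map (mulLeft K (x i))) ≤ ker Φ := by
        refine iSup_le fun i => iSup_le fun hi => ?_
        rw [Finset.mem_Ico] at hi
        intro s hs'
        rw [Submodule.mem_map] at hs'
        obtain ⟨c, hc, rfl⟩ := hs'
        rw [mem_ker] at hc
        rw [mem_ker]
        show φ (x i * c) = 0
        rw [hφmulc _ _ hc, hφx i hi.1 hi.2, zero_mul]
      exact hle hs
    have hψS : ∀ s ∈ (⨆ i ∈ Finset.Ico 1 l, (ker δ).map (mulLeft K (x i))), ψ s = 0 := by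
      let Ψ : A →ₗ[K] A :=
        { toFun := ψ, map_add' := hψadd, map_smul' := hψsmul }
      intro s hs
      have hle : (⨆ i ∈ Finset.Ico 1 l, (ker δ).map (mulLeft K (x i))) ≤ ker Ψ := by
        refine iSup_le fun i => iSup_le fun hi => ?_
        rw [Finset.mem_Ico] at hi
        intro s hs'
        rw [Submodule.mem_map] at hs'
        obtain ⟨c, hc, rfl⟩ := hs'
        rw [mem_ker] at hc
        rw [mem_ker]
        show ψ (x i * c) = 0
        rw [(hcomm i c).eq, hψmulc _ _ hc, hψx i hi.1 hi.2, mul_zero]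
      exact hle hs
    refine ⟨hφconst 1 hδ1, hψconst 1 hδ1, ?_, ?_⟩
    · intro a b
      set F : ℕ → A := fun i => φ ((δ ^ i) a) with hF
      set Gf : ℕ → A := fun j => φ ((δ ^ j) b) with hGf
      have hFc : ∀ i, δ (F i) = 0 := fun i => hδφ _
      have hGc : ∀ j, δ (Gf j) = 0 := fun j => hδφ _
      have hF0 : F 0 = φ a := by rw [hF]; simp only [pow_zero, Module.End.one_apply]
      have hG0 : Gf 0 = φ b := by rw [hGf]; simp only [pow_zero, Module.End.one_apply]
      have key : a * b = ∑ i ∈ Finset.range l, ∑ j ∈ Finset.range l,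
          (x i * x j) * (F i * Gf j) := by
        conv_lhs => rw [hdecφ a, hdecφ b]
        rw [Finset.sum_mul_sum]
        refine Finset.sum_congr rfl fun i _ => Finset.sum_congr rfl fun j _ => ?_
        rw [mul_assoc, mul_assoc]
        congr 1
        rw [← mul_assoc, ← (hcomm j (F i)).eq, mul_assoc]
      rw [key, hφsum, Finset.sum_congr rfl (fun i _ => hφsum _ _)]
      have hterm : ∀ i ∈ Finset.range l, ∀ j ∈ Finset.range l,
          φ ((x i * x j) * (F i * Gf j)) = if i = 0 ∧ j = 0 then φ a * φ b else 0 := by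
        intro i hi j hj
        rw [Finset.mem_range] at hi hj
        have hc : δ (F i * Gf j) = 0 := hconstmul _ _ (hFc i) (hGc j)
        by_cases hij : i + j < l
        · rw [hiter i j hij, smul_mul_assoc, hφnsmul, hφmulc _ _ hc]
          by_cases h0 : i = 0 ∧ j = 0
          · obtain ⟨rfl, rfl⟩ := h0
            rw [if_pos ⟨rfl, rfl⟩]
            simp [hx0, hφconst 1 hδ1, hF0, hG0]
          · rw [if_neg h0, hφx (i+j) (by omega) hij, zero_mul, smul_zero]
        · rw [hφmulc _ _ hc, hφS _ (hplus i j hi hj (by omega)), zero_mul,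
            if_neg (by omega)]
      rw [Finset.sum_congr rfl (fun i hi => Finset.sum_congr rfl (hterm i hi))]
      rw [Finset.sum_eq_single 0]
      · rw [Finset.sum_eq_single 0]
        · rw [if_pos ⟨rfl, rfl⟩]
        · intro j _ hj; rw [if_neg (by simp [hj])]
        · intro h; exact absurd (Finset.mem_range.mpr (by omega)) h
      · intro i _ hi
        exact Finset.sum_eq_zero fun j _ => if_neg (by simp [hi])
      · intro h; exact absurd (Finset.mem_range.mpr (by omega)) h
    · intro a b
      set F : ℕ → A := fun i => ψ ((δ ^ i) a) with hF
      set Gf : ℕ → A := fun j => ψ ((δ ^ j) b) with hGf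
      have hFc : ∀ i, δ (F i) = 0 := fun i => hδψ _
      have hGc : ∀ j, δ (Gf j) = 0 := fun j => hδψ _
      have hF0 : F 0 = ψ a := by rw [hF]; simp only [pow_zero, Module.End.one_apply]
      have hG0 : Gf 0 = ψ b := by rw [hGf]; simp only [pow_zero, Module.End.one_apply]
      have key : a * b = ∑ i ∈ Finset.range l, ∑ j ∈ Finset.range l,
          (F i * Gf j) * (x i * x j) := by
        conv_lhs => rw [hdecψ a, hdecψ b]
        rw [Finset.sum_mul_sum]
        refine Finset.sum_congr rfl fun i _ => Finset.sum_congr rfl fun j _ => ?_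
        rw [mul_assoc, mul_assoc]
        congr 1
        rw [← mul_assoc, (hcomm i (Gf j)).eq, mul_assoc]
      rw [key, hψsum, Finset.sum_congr rfl (fun i _ => hψsum _ _)]
      have hterm : ∀ i ∈ Finset.range l, ∀ j ∈ Finset.range l,
          ψ ((F i * Gf j) * (x i * x j)) = if i = 0 ∧ j = 0 then ψ a * ψ b else 0 := by
        intro i hi j hj
        rw [Finset.mem_range] at hi hj
        have hc : δ (F i * Gf j) = 0 := hconstmul _ _ (hFc i) (hGc j)
        rw [hψmulc _ _ hc]
        by_cases hij : i + j < l
        · rw [hiter i j hij, hψnsmul]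
          by_cases h0 : i = 0 ∧ j = 0
          · obtain ⟨rfl, rfl⟩ := h0
            rw [if_pos ⟨rfl, rfl⟩]
            simp [hx0, hψconst _ hδ1, hF0, hG0]
          · rw [if_neg h0, hψx (i+j) (by omega) hij, smul_zero, mul_zero]
        · rw [hψS _ (hplus i j hi hj (by omega)), mul_zero, if_neg (by omega)]
      rw [Finset.sum_congr rfl (fun i hi => Finset.sum_congr rfl (hterm i hi))]
      rw [Finset.sum_eq_single 0]
      · rw [Finset.sum_eq_single 0]
        · rw [if_pos ⟨rfl, rfl⟩]
        · intro j _ hj; rw [if_neg (by simp [hj])]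
        · intro h; exact absurd (Finset.mem_range.mpr (by omega)) h
      · intro i _ hi
        exact Finset.sum_eq_zero fun j _ => if_neg (by simp [hi])
      · intro h; exact absurd (Finset.mem_range.mpr (by omega)) h
  exact ⟨hφadd, hφsmul, hψadd, hψsmul, hφmulc, hψmulc, hδφ, hδψ,
    fun y hy => ⟨hφconst y hy, hψconst y hy⟩,
    fun i h1 h2 => ⟨hφx i h1 h2, hψx i h1 h2⟩, hdecφ, hdecψ, hmain⟩
end

section
/- Suppose K has characteristic p > 0, δ is a K-derivation of A with δ^p = 0, and δ(x) = 1 for some x ∈ A. Then A = ⊕_{i=0}^{p-1} A^δ·x^i = ⊕_{i=0}^{p-1} x^i·A^δ as internal direct sums of K-subspaces, with ker δ^{n+1} = ⊕_{i=0}^{n} A^δ·x^i = ⊕_{i=0}^{n} x^i·A^δ for 0 ≤ n ≤ p-1; moreover [x, A^δ] ⊆ A^δ, so ad(x) restricts to a derivation of A^δ. -/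
open LinearMap

private lemma stmt7_pow {K A : Type*} [Field K] [Ring A] [Algebra K A]
    (δ : Module.End K A) (f : ℕ → A) (h0 : δ (f 0) = 0)
    (hs : ∀ n, δ (f (n + 1)) = (n + 1) • f n) :
    ∀ (k n : ℕ), (δ ^ k) (f n) = n.descFactorial k • f (n - k) := by
  intro k
  induction k with
  | zero => intro n; simp
  | succ k ih =>
    intro n
    rw [pow_succ', Module.End.mul_apply, ih n, map_nsmul, Nat.descFactorial_succ]
    rcases h : n - k with _ | m
    · rw [h0, smul_zero, zero_mul, zero_smul]
    · rw [hs m, smul_smul, show n - (k + 1) = m by omega, Nat.mul_comm]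

private lemma stmt7_indep {K A : Type*} [Field K] [Ring A] [Algebra K A]
    (p : ℕ) (S : Submodule K A) (g : ℕ → A →ₗ[K] A)
    (key : ∀ c : ℕ → A, (∀ i, c i ∈ S) → ∑ i ∈ Finset.range p, g i (c i) = 0 →
      ∀ i < p, c i = 0) :
    iSupIndep (fun i : Fin p => S.map (g (i : ℕ))) := by
  classical
  rw [iSupIndep_def]
  intro i
  rw [Submodule.disjoint_def]
  intro a haI haS
  have haS' : a ∈ ⨆ j ∈ Finset.univ.erase i, S.map (g (j : ℕ)) := by
    simpa only [Finset.mem_erase, Finset.mem_univ, and_true] using haS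
  rw [Submodule.mem_iSup_finset_iff_exists_sum] at haS'
  obtain ⟨μ, hμ⟩ := haS'
  obtain ⟨ci, hci, hgi⟩ := haI
  choose e he hge using fun j : Fin p => Submodule.mem_map.mp (μ j).2
  set c : ℕ → A := fun m => if h : m < p then (if (⟨m, h⟩ : Fin p) = i then -ci else e ⟨m, h⟩)
    else 0 with hc
  have hcS : ∀ m, c m ∈ S := by
    intro m
    simp only [hc]
    split_ifs
    exacts [S.neg_mem hci, he _, S.zero_mem]
  have hsum : ∑ m ∈ Finset.range p, g m (c m) = 0 := by
    rw [Finset.sum_range fun m => g m (c m)]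
    have hterm : ∀ j : Fin p, g (j : ℕ) (c (j : ℕ)) =
        if j = i then -(g (i : ℕ) ci) else (μ j : A) := by
      intro j
      rw [hc]
      simp only [j.isLt, dif_pos, Fin.eta]
      split
      · next hji => rw [map_neg, hji]
      · exact hge j
    rw [Finset.sum_congr rfl fun j _ => hterm j,
      ← Finset.sum_erase_add _ _ (Finset.mem_univ i)]
    rw [if_pos rfl]
    rw [Finset.sum_congr rfl fun j hj => if_neg (Finset.mem_erase.mp hj).1]
    rw [hμ, hgi]
    exact add_neg_cancel a
  have hval : c (i : ℕ) = -ci := by simp [hc, i.isLt]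
  have hci0 : ci = 0 := by
    have := key c hcS hsum i i.isLt
    rw [hval] at this
    exact neg_eq_zero.mp this
  rw [← hgi, hci0, map_zero]


/-- Suppose `char K = p > 0`, `δ` is a `K`-derivation of `A` with
`δ^p = 0` and `δ x = 1` for some `x ∈ A`.  Then
`A = ⊕_{i=0}^{p-1} A^δ·x^i = ⊕_{i=0}^{p-1} x^i·A^δ` as internal direct sums of
`K`-subspaces, with `ker δ^{n+1} = ⊕_{i=0}^{n} A^δ·x^i = ⊕_{i=0}^{n} x^i·A^δ` for
`0 ≤ n ≤ p-1`; moreover `[x, A^δ] ⊆ A^δ`, i.e. `ad x` restricts to a derivation of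
`A^δ`. -/
theorem stmt_7 {K A : Type*} [Field K] [Ring A] [Algebra K A]
    (p : ℕ) (hp : p.Prime) (hcharK : CharP K p)
    (δ : Module.End K A) (hleib : ∀ a b : A, δ (a * b) = δ a * b + a * δ b)
    (hnil : δ ^ p = 0) (x : A) (hx : δ x = 1) :
    iSupIndep (fun i : Fin p => (ker δ).map (mulRight K (x ^ (i : ℕ)))) ∧
    iSupIndep (fun i : Fin p => (ker δ).map (mulLeft K (x ^ (i : ℕ)))) ∧
    (⨆ i : Fin p, (ker δ).map (mulRight K (x ^ (i : ℕ)))) = ⊤ ∧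
    (⨆ i : Fin p, (ker δ).map (mulLeft K (x ^ (i : ℕ)))) = ⊤ ∧
    (∀ n : ℕ, n < p → ker (δ ^ (n + 1)) =
      ⨆ i ∈ Finset.range (n + 1), (ker δ).map (mulRight K (x ^ i))) ∧
    (∀ n : ℕ, n < p → ker (δ ^ (n + 1)) =
      ⨆ i ∈ Finset.range (n + 1), (ker δ).map (mulLeft K (x ^ i))) ∧
    (∀ c : A, δ c = 0 → δ (x * c - c * x) = 0) := by
  classical
  -- basic facts
  have hδ1 : δ (1 : A) = 0 := by
    have h1 : δ (1 : A) = δ 1 + δ 1 := by simpa using hleib 1 1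
    exact (left_eq_add.mp h1)
  have hxs : ∀ n : ℕ, δ (x ^ (n + 1)) = (n + 1) • x ^ n := by
    intro n
    induction n with
    | zero => simpa using hx
    | succ n ih =>
      rw [pow_succ, hleib, ih, hx, mul_one, smul_mul_assoc, ← pow_succ,
        succ_nsmul (x ^ (n+1)) (n+1)]
  have hpowR : ∀ c : A, δ c = 0 → ∀ k n, (δ ^ k) (c * x ^ n) =
      n.descFactorial k • (c * x ^ (n - k)) := by
    intro c hc
    exact stmt7_pow δ (fun n => c * x ^ n) (by simp [hc]) (fun n => by
      rw [hleib, hc, zero_mul, zero_add, hxs, mul_smul_comm])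
  have hpowL : ∀ c : A, δ c = 0 → ∀ k n, (δ ^ k) (x ^ n * c) =
      n.descFactorial k • (x ^ (n - k) * c) := by
    intro c hc
    exact stmt7_pow δ (fun n => x ^ n * c) (by simp [hc]) (fun n => by
      rw [hleib, hc, mul_zero, add_zero, hxs, smul_mul_assoc])
  have kill : ∀ n : ℕ, n < p → ∀ a : A, n.factorial • a = 0 → a = 0 := by
    intro n hn a h
    have h2 : ((n.factorial : K)) • a = 0 := by rwa [Nat.cast_smul_eq_nsmul]
    have h3 : ((n.factorial : K)) ≠ 0 := by
      rw [Ne, CharP.cast_eq_zero_iff K p, hp.dvd_factorial]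
      omega
    exact (smul_eq_zero.mp h2).resolve_left h3

  have keyR : ∀ n, n ≤ p → ∀ c : ℕ → A, (∀ i, δ (c i) = 0) →
      ∑ i ∈ Finset.range n, c i * x ^ i = 0 → ∀ i < n, c i = 0 := by
    intro n
    induction n with
    | zero => intro _ _ _ _ i hi; omega
    | succ n IH =>
      intro hn c hc hsum i hi
      have hcn : c n = 0 := by
        have h1 : (δ ^ n) (∑ i ∈ Finset.range (n + 1), c i * x ^ i) = 0 := by
          rw [hsum, map_zero]
        rw [map_sum, Finset.sum_range_succ] at h1
        have h2 : ∀ j ∈ Finset.range n, (δ ^ n) (c j * x ^ j) = 0 := by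
          intro j hj
          rw [hpowR _ (hc j), Nat.descFactorial_eq_zero_iff_lt.mpr (Finset.mem_range.mp hj),
            zero_smul]
        rw [Finset.sum_congr rfl h2, Finset.sum_const_zero, zero_add, hpowR _ (hc n),
          Nat.descFactorial_self, Nat.sub_self, pow_zero, mul_one] at h1
        exact kill n (by omega) _ h1
      rcases Nat.lt_succ_iff_lt_or_eq.mp hi with h | h
      · apply IH (by omega) c hc ?_ i h
        rw [Finset.sum_range_succ, hcn, zero_mul, add_zero] at hsum
        exact hsum
      · rw [h]; exact hcn
  have keyL : ∀ n, n ≤ p → ∀ c : ℕ → A, (∀ i, δ (c i) = 0) →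
      ∑ i ∈ Finset.range n, x ^ i * c i = 0 → ∀ i < n, c i = 0 := by
    intro n
    induction n with
    | zero => intro _ _ _ _ i hi; omega
    | succ n IH =>
      intro hn c hc hsum i hi
      have hcn : c n = 0 := by
        have h1 : (δ ^ n) (∑ i ∈ Finset.range (n + 1), x ^ i * c i) = 0 := by
          rw [hsum, map_zero]
        rw [map_sum, Finset.sum_range_succ] at h1
        have h2 : ∀ j ∈ Finset.range n, (δ ^ n) (x ^ j * c j) = 0 := by
          intro j hj
          rw [hpowL _ (hc j), Nat.descFactorial_eq_zero_iff_lt.mpr (Finset.mem_range.mp hj),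
            zero_smul]
        rw [Finset.sum_congr rfl h2, Finset.sum_const_zero, zero_add, hpowL _ (hc n),
          Nat.descFactorial_self, Nat.sub_self, pow_zero, one_mul] at h1
        exact kill n (by omega) _ h1
      rcases Nat.lt_succ_iff_lt_or_eq.mp hi with h | h
      · apply IH (by omega) c hc ?_ i h
        rw [Finset.sum_range_succ, hcn, mul_zero, add_zero] at hsum
        exact hsum
      · rw [h]; exact hcn
  -- spanning: ⊇ directions
  have spanR_ge : ∀ n, (⨆ i ∈ Finset.range (n + 1), (ker δ).map (mulRight K (x ^ i))) ≤
      ker (δ ^ (n + 1)) := by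
    intro n
    refine iSup₂_le fun i hi => ?_
    rintro a ⟨c, hc, rfl⟩
    rw [SetLike.mem_coe, mem_ker] at hc
    rw [mem_ker]
    show (δ ^ (n + 1)) (c * x ^ i) = 0
    rw [hpowR _ hc, Nat.descFactorial_eq_zero_iff_lt.mpr (Finset.mem_range.mp hi), zero_smul]

  have spanL_ge : ∀ n, (⨆ i ∈ Finset.range (n + 1), (ker δ).map (mulLeft K (x ^ i))) ≤
      ker (δ ^ (n + 1)) := by
    intro n
    refine iSup₂_le fun i hi => ?_
    rintro a ⟨c, hc, rfl⟩
    rw [SetLike.mem_coe, mem_ker] at hc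
    rw [mem_ker]
    show (δ ^ (n + 1)) (x ^ i * c) = 0
    rw [hpowL _ hc, Nat.descFactorial_eq_zero_iff_lt.mpr (Finset.mem_range.mp hi), zero_smul]
  have hfac : ∀ n : ℕ, n < p → ((n.factorial : K)) ≠ 0 := by
    intro n hn
    rw [Ne, CharP.cast_eq_zero_iff K p, hp.dvd_factorial]
    omega
  have spanR_le : ∀ n, n < p → ker (δ ^ (n + 1)) ≤
      ⨆ i ∈ Finset.range (n + 1), (ker δ).map (mulRight K (x ^ i)) := by
    intro n
    induction n with
    | zero =>
      intro _ b hb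
      apply Submodule.mem_iSup_of_mem 0
      apply Submodule.mem_iSup_of_mem (Finset.self_mem_range_succ 0)
      refine ⟨b, ?_, by simp⟩
      rw [mem_ker] at hb
      rw [SetLike.mem_coe, mem_ker]
      simpa [pow_one] using hb
    | succ n IH =>
      intro hn b hb
      rw [mem_ker] at hb
      have hδb : δ ((δ ^ (n + 1)) b) = 0 := by
        rw [← Module.End.mul_apply, ← pow_succ']
        exact hb
      set c : A := (((n + 1).factorial : K))⁻¹ • ((δ ^ (n + 1)) b) with hcdef
      have hc : δ c = 0 := by rw [hcdef, map_smul, hδb, smul_zero]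
      have hb' : b - c * x ^ (n + 1) ∈ ker (δ ^ (n + 1)) := by
        rw [mem_ker, map_sub, hpowR _ hc, Nat.descFactorial_self, Nat.sub_self, pow_zero,
          mul_one, ← Nat.cast_smul_eq_nsmul K, hcdef, smul_smul,
          mul_inv_cancel₀ (hfac _ (by omega)), one_smul, sub_self]
      have h1 := IH (by omega) hb'
      have h2 : c * x ^ (n + 1) ∈
          ⨆ i ∈ Finset.range (n + 2), (ker δ).map (mulRight K (x ^ i)) := by
        apply Submodule.mem_iSup_of_mem (n + 1)
        apply Submodule.mem_iSup_of_mem (Finset.self_mem_range_succ (n + 1))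
        exact ⟨c, hc, rfl⟩
      have hmono : (⨆ i ∈ Finset.range (n + 1), (ker δ).map (mulRight K (x ^ i))) ≤
          ⨆ i ∈ Finset.range (n + 2), (ker δ).map (mulRight K (x ^ i)) :=
        biSup_mono fun i hi => Finset.range_subset_range.mpr (by omega) hi
      have := add_mem (hmono h1) h2
      simpa only [sub_add_cancel] using this
  have spanL_le : ∀ n, n < p → ker (δ ^ (n + 1)) ≤
      ⨆ i ∈ Finset.range (n + 1), (ker δ).map (mulLeft K (x ^ i)) := by
    intro n
    induction n with
    | zero =>
      intro _ b hb
      apply Submodule.mem_iSup_of_mem 0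
      apply Submodule.mem_iSup_of_mem (Finset.self_mem_range_succ 0)
      refine ⟨b, ?_, by simp⟩
      rw [mem_ker] at hb
      rw [SetLike.mem_coe, mem_ker]
      simpa [pow_one] using hb
    | succ n IH =>
      intro hn b hb
      rw [mem_ker] at hb
      have hδb : δ ((δ ^ (n + 1)) b) = 0 := by
        rw [← Module.End.mul_apply, ← pow_succ']
        exact hb
      set c : A := (((n + 1).factorial : K))⁻¹ • ((δ ^ (n + 1)) b) with hcdef
      have hc : δ c = 0 := by rw [hcdef, map_smul, hδb, smul_zero]
      have hb' : b - x ^ (n + 1) * c ∈ ker (δ ^ (n + 1)) := by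
        rw [mem_ker, map_sub, hpowL _ hc, Nat.descFactorial_self, Nat.sub_self, pow_zero,
          one_mul, ← Nat.cast_smul_eq_nsmul K, hcdef, smul_smul,
          mul_inv_cancel₀ (hfac _ (by omega)), one_smul, sub_self]
      have h1 := IH (by omega) hb'
      have h2 : x ^ (n + 1) * c ∈
          ⨆ i ∈ Finset.range (n + 2), (ker δ).map (mulLeft K (x ^ i)) := by
        apply Submodule.mem_iSup_of_mem (n + 1)
        apply Submodule.mem_iSup_of_mem (Finset.self_mem_range_succ (n + 1))
        exact ⟨c, hc, rfl⟩
      have hmono : (⨆ i ∈ Finset.range (n + 1), (ker δ).map (mulLeft K (x ^ i))) ≤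
          ⨆ i ∈ Finset.range (n + 2), (ker δ).map (mulLeft K (x ^ i)) :=
        biSup_mono fun i hi => Finset.range_subset_range.mpr (by omega) hi
      have := add_mem (hmono h1) h2
      simpa only [sub_add_cancel] using this
  have spanR : ∀ n, n < p → ker (δ ^ (n + 1)) =
      ⨆ i ∈ Finset.range (n + 1), (ker δ).map (mulRight K (x ^ i)) :=
    fun n hn => le_antisymm (spanR_le n hn) (spanR_ge n)
  have spanL : ∀ n, n < p → ker (δ ^ (n + 1)) =
      ⨆ i ∈ Finset.range (n + 1), (ker δ).map (mulLeft K (x ^ i)) :=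
    fun n hn => le_antisymm (spanL_le n hn) (spanL_ge n)
  have hconv : ∀ N : ℕ → Submodule K A, (⨆ i ∈ Finset.range p, N i) = ⨆ i : Fin p, N (i : ℕ) := by
    intro N
    apply le_antisymm
    · exact iSup₂_le fun i hi => le_iSup_of_le ⟨i, Finset.mem_range.mp hi⟩ le_rfl
    · exact iSup_le fun i => le_iSup₂_of_le (i : ℕ) (Finset.mem_range.mpr i.isLt) le_rfl
  have hker_top : ker (δ ^ p) = ⊤ := by rw [hnil]; exact ker_zero
  have hp1 : p - 1 + 1 = p := by have := hp.pos; omega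
  have topR : (⨆ i : Fin p, (ker δ).map (mulRight K (x ^ (i : ℕ)))) = ⊤ := by
    rw [← hconv (fun i => (ker δ).map (mulRight K (x ^ i))), ← hp1,
      ← spanR (p - 1) (by omega), hp1, hker_top]
  have topL : (⨆ i : Fin p, (ker δ).map (mulLeft K (x ^ (i : ℕ)))) = ⊤ := by
    rw [← hconv (fun i => (ker δ).map (mulLeft K (x ^ i))), ← hp1,
      ← spanL (p - 1) (by omega), hp1, hker_top]
  have indR : iSupIndep (fun i : Fin p => (ker δ).map (mulRight K (x ^ (i : ℕ)))) := by
    apply stmt7_indep p (ker δ) (fun i => mulRight K (x ^ i))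
    intro c hc hsum
    exact keyR p le_rfl c (fun i => mem_ker.mp (hc i)) hsum
  have indL : iSupIndep (fun i : Fin p => (ker δ).map (mulLeft K (x ^ (i : ℕ)))) := by
    apply stmt7_indep p (ker δ) (fun i => mulLeft K (x ^ i))
    intro c hc hsum
    exact keyL p le_rfl c (fun i => mem_ker.mp (hc i)) hsum
  have hbr : ∀ c : A, δ c = 0 → δ (x * c - c * x) = 0 := by
    intro c hc
    rw [map_sub, hleib, hleib, hx, hc, one_mul, mul_zero, add_zero, zero_mul, zero_add,
      mul_one, sub_self]
  exact ⟨indR, indL, topR, topL, spanR, spanL, hbr⟩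
end

section
/- Let δ_1, …, δ_n be pairwise commuting locally nilpotent K-derivations of A, and for each i let (x_i^[j])_{0≤j<l_i} be an iterative δ_i-descent of maximal length l_i whose members all lie in ∩_{k≠i} A^{δ_k}. Set A^δ := ∩_{i=1}^n A^{δ_i}, E := {α ∈ ℕ^n : α_i < l_i for all i}, and x^[α] := x_1^[α_1]·x_2^[α_2]·⋯·x_n^[α_n]. Then A = ⊕_{α∈E} x^[α]·A^δ = ⊕_{α∈E} A^δ·x^[α] as internal direct sums of K-subspaces. -/
open LinearMap

section Aux

variable {K A : Type*} [Field K] [Ring A] [Algebra K A]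

private lemma enat_lt_of_le_of_lt {a b : ℕ} {c : ℕ∞} (h : a ≤ b) (h2 : (b : ℕ∞) < c) :
    (a : ℕ∞) < c :=
  lt_of_le_of_lt (by exact_mod_cast h) h2

private lemma enat_lt_of_lt_of_le {a b : ℕ} {c : ℕ∞} (h : a < b) (h2 : (b : ℕ∞) ≤ c) :
    (a : ℕ∞) < c :=
  lt_of_lt_of_le (by exact_mod_cast h) h2

private lemma der_one (d : Module.End K A)
    (h : ∀ a b : A, d (a * b) = d a * b + a * d b) : d (1 : A) = 0 := by
  have h2 := h 1 1
  simp only [mul_one, one_mul] at h2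
  have h3 : d 1 + 0 = d 1 + d 1 := by rw [add_zero]; exact h2
  exact (add_left_cancel h3).symm

private lemma ker_prod_mul (d : Module.End K A)
    (hle : ∀ a b : A, d (a * b) = d a * b + a * d b)
    (t : List A) (ht : ∀ y ∈ t, d y = 0) (c : A) :
    d (t.prod * c) = t.prod * d c := by
  induction t with
  | nil => simp
  | cons y s ih =>
    have hy : d y = 0 := ht y (List.mem_cons_self)
    have hs : ∀ z ∈ s, d z = 0 := fun z hz => ht z (List.mem_cons_of_mem _ hz)
    simp only [List.prod_cons, mul_assoc]
    rw [hle, hy, zero_mul, zero_add, ih hs]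

private lemma mul_prod_ker (d : Module.End K A)
    (hle : ∀ a b : A, d (a * b) = d a * b + a * d b)
    (t : List A) (ht : ∀ y ∈ t, d y = 0) :
    ∀ c : A, d (c * t.prod) = d c * t.prod := by
  induction t with
  | nil => simp
  | cons y s ih =>
    intro c
    have hy : d y = 0 := ht y (List.mem_cons_self)
    have hs : ∀ z ∈ s, d z = 0 := fun z hz => ht z (List.mem_cons_of_mem _ hz)
    simp only [List.prod_cons, ← mul_assoc]
    rw [ih hs (c * y), hle, hy, mul_zero, add_zero]

private lemma prod_ofFn_one {n : ℕ} (x : Fin n → ℕ → A) (hx0 : ∀ i, x i 0 = 1)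
    (α : Fin n → ℕ) (hz : ∀ k, α k = 0) :
    (List.ofFn fun k => x k (α k)).prod = 1 := by
  apply List.prod_eq_one
  intro y hy
  obtain ⟨i, rfl⟩ := List.mem_ofFn.mp hy
  rw [hz i, hx0 i]


private lemma der_mul_prod
    (δ : Fin n → Module.End K A)
    (hleib : ∀ i, ∀ a b : A, δ i (a * b) = δ i a * b + a * δ i b)
    (l : Fin n → ℕ∞) (x : Fin n → ℕ → A)
    (hxd : ∀ i (j : ℕ), ((j + 1 : ℕ) : ℕ∞) < l i → δ i (x i (j + 1)) = x i j)
    (hmem : ∀ i k, k ≠ i → ∀ j : ℕ, (j : ℕ∞) < l i → δ k (x i j) = 0)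
    (i : Fin n) (t : List (Fin n)) (hnd : t.Nodup) (hi : i ∈ t)
    (α α' : Fin n → ℕ) (hα : ∀ k, ((α k : ℕ∞) < l k))
    (hsucc : α' i + 1 = α i) (hoff : ∀ k, k ≠ i → α' k = α k)
    (c : A) (hc : δ i c = 0) :
    δ i ((t.map fun k => x k (α k)).prod * c)
      = (t.map fun k => x k (α' k)).prod * c := by
  induction t with
  | nil => simp at hi
  | cons j s ih =>
    simp only [List.map_cons, List.prod_cons, mul_assoc]
    by_cases hji : j = i
    · subst hji
      have hjs : j ∉ s := (List.nodup_cons.mp hnd).1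
      have hker : ∀ y ∈ s.map fun k => x k (α k), δ j y = 0 := by
        intro y hy
        rcases List.mem_map.mp hy with ⟨k, hk, rfl⟩
        exact hmem k j (fun h => hjs (h ▸ hk)) (α k) (hα k)
      have h2 : δ j ((s.map fun k => x k (α k)).prod * c)
          = (s.map fun k => x k (α k)).prod * δ j c :=
        ker_prod_mul (δ j) (hleib j) _ hker c
      have hd1 : δ j (x j (α j)) = x j (α' j) := by
        have hlt : ((α' j + 1 : ℕ) : ℕ∞) < l j := by rw [hsucc]; exact hα j
        rw [← hsucc]; exact hxd j (α' j) hlt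
      rw [hleib, h2, hc, mul_zero, mul_zero, add_zero, hd1]
      have hmapeq : (s.map fun k => x k (α k)) = s.map fun k => x k (α' k) :=
        List.map_congr_left (fun k hk => by rw [hoff k (fun h => hjs (h ▸ hk))])
      rw [hmapeq]
    · have hi' : i ∈ s := by
        rcases List.mem_cons.mp hi with h | h
        · exact absurd h.symm hji
        · exact h
      have hxj : δ i (x j (α j)) = 0 := hmem j i (Ne.symm hji) (α j) (hα j)
      rw [hleib, hxj, zero_mul, zero_add,
        ih (List.nodup_cons.mp hnd).2 hi', hoff j hji]

private lemma der_mul_prod_zero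
    (δ : Fin n → Module.End K A)
    (hleib : ∀ i, ∀ a b : A, δ i (a * b) = δ i a * b + a * δ i b)
    (l : Fin n → ℕ∞) (x : Fin n → ℕ → A)
    (hx0 : ∀ i, x i 0 = 1)
    (hmem : ∀ i k, k ≠ i → ∀ j : ℕ, (j : ℕ∞) < l i → δ k (x i j) = 0)
    (i : Fin n) (t : List (Fin n)) (hnd : t.Nodup) (hi : i ∈ t)
    (α : Fin n → ℕ) (hα : ∀ k, ((α k : ℕ∞) < l k)) (hz : α i = 0)
    (c : A) (hc : δ i c = 0) :
    δ i ((t.map fun k => x k (α k)).prod * c) = 0 := by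
  induction t with
  | nil => simp at hi
  | cons j s ih =>
    simp only [List.map_cons, List.prod_cons, mul_assoc]
    by_cases hji : j = i
    · subst hji
      have hjs : j ∉ s := (List.nodup_cons.mp hnd).1
      have hker : ∀ y ∈ s.map fun k => x k (α k), δ j y = 0 := by
        intro y hy
        rcases List.mem_map.mp hy with ⟨k, hk, rfl⟩
        exact hmem k j (fun h => hjs (h ▸ hk)) (α k) (hα k)
      have h2 : δ j ((s.map fun k => x k (α k)).prod * c)
          = (s.map fun k => x k (α k)).prod * δ j c :=
        ker_prod_mul (δ j) (hleib j) _ hker c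
      rw [hleib, h2, hc, mul_zero, mul_zero, add_zero, hz, hx0 j,
        der_one (δ j) (hleib j), zero_mul]
    · have hi' : i ∈ s := by
        rcases List.mem_cons.mp hi with h | h
        · exact absurd h.symm hji
        · exact h
      rw [hleib, hmem j i (Ne.symm hji) (α j) (hα j), zero_mul, zero_add,
        ih (List.nodup_cons.mp hnd).2 hi', mul_zero]

private lemma pow_der_mul_prod
    (δ : Fin n → Module.End K A)
    (hleib : ∀ i, ∀ a b : A, δ i (a * b) = δ i a * b + a * δ i b)
    (l : Fin n → ℕ∞) (x : Fin n → ℕ → A)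
    (hxd : ∀ i (j : ℕ), ((j + 1 : ℕ) : ℕ∞) < l i → δ i (x i (j + 1)) = x i j)
    (hmem : ∀ i k, k ≠ i → ∀ j : ℕ, (j : ℕ∞) < l i → δ k (x i j) = 0)
    (i : Fin n) (m : ℕ) :
    ∀ (α α' : Fin n → ℕ), (∀ k, ((α k : ℕ∞) < l k)) →
      (α' i + m = α i) → (∀ k, k ≠ i → α' k = α k) →
      ∀ c : A, δ i c = 0 →
      ((δ i) ^ m) ((List.ofFn fun k => x k (α k)).prod * c)
        = (List.ofFn fun k => x k (α' k)).prod * c := by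
  induction m with
  | zero =>
    intro α α' hα hsum hoff c _
    have hαα : α' = α := funext fun k => by
      by_cases h : k = i
      · subst h; simpa using hsum
      · exact hoff k h
    rw [hαα, pow_zero, Module.End.one_apply]
  | succ m ih =>
    intro α α' hα hsum hoff c hc
    rw [pow_succ, Module.End.mul_apply]
    classical
    set α₁ : Fin n → ℕ := fun k => if k = i then α' i + m else α k with hα₁def
    have hstep : δ i ((List.ofFn fun k => x k (α k)).prod * c)
        = (List.ofFn fun k => x k (α₁ k)).prod * c := by
      rw [List.ofFn_eq_map, List.ofFn_eq_map]
      refine der_mul_prod δ hleib l x hxd hmem i (List.finRange n)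
        (List.nodup_finRange n) (List.mem_finRange i) α α₁ hα ?_ ?_ c hc
      · simp only [hα₁def, if_pos rfl]; omega
      · intro k hk; simp only [hα₁def, if_neg hk]
    rw [hstep]
    refine ih α₁ α' ?_ ?_ ?_ c hc
    · intro k
      by_cases h : k = i
      · subst h
        have h1 : α₁ k ≤ α k := by simp only [hα₁def, if_pos rfl]; omega
        exact enat_lt_of_le_of_lt h1 (hα k)
      · simp only [hα₁def, if_neg h]; exact hα k
    · simp only [hα₁def, if_pos rfl]
    · intro k hk; simp only [hα₁def, if_neg hk]; exact hoff k hk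

private lemma pow_der_mul_prod_zero
    (δ : Fin n → Module.End K A)
    (hleib : ∀ i, ∀ a b : A, δ i (a * b) = δ i a * b + a * δ i b)
    (l : Fin n → ℕ∞) (x : Fin n → ℕ → A)
    (hx0 : ∀ i, x i 0 = 1)
    (hxd : ∀ i (j : ℕ), ((j + 1 : ℕ) : ℕ∞) < l i → δ i (x i (j + 1)) = x i j)
    (hmem : ∀ i k, k ≠ i → ∀ j : ℕ, (j : ℕ∞) < l i → δ k (x i j) = 0)
    (i : Fin n) (m : ℕ) :
    ∀ (α : Fin n → ℕ), (∀ k, ((α k : ℕ∞) < l k)) → α i < m →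
      ∀ c : A, δ i c = 0 →
      ((δ i) ^ m) ((List.ofFn fun k => x k (α k)).prod * c) = 0 := by
  induction m with
  | zero => intro α _ h; omega
  | succ m ih =>
    intro α hα hlt c hc
    rw [pow_succ, Module.End.mul_apply]
    classical
    by_cases h0 : α i = 0
    · have hstep : δ i ((List.ofFn fun k => x k (α k)).prod * c) = 0 := by
        rw [List.ofFn_eq_map]
        exact der_mul_prod_zero δ hleib l x hx0 hmem i (List.finRange n)
          (List.nodup_finRange n) (List.mem_finRange i) α hα h0 c hc
      rw [hstep, map_zero]
    · set α₁ : Fin n → ℕ := fun k => if k = i then α i - 1 else α k with hα₁def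
      have hstep : δ i ((List.ofFn fun k => x k (α k)).prod * c)
          = (List.ofFn fun k => x k (α₁ k)).prod * c := by
        rw [List.ofFn_eq_map, List.ofFn_eq_map]
        refine der_mul_prod δ hleib l x hxd hmem i (List.finRange n)
          (List.nodup_finRange n) (List.mem_finRange i) α α₁ hα ?_ ?_ c hc
        · simp only [hα₁def, if_pos rfl]; omega
        · intro k hk; simp only [hα₁def, if_neg hk]
      rw [hstep]
      refine ih α₁ ?_ ?_ c hc
      · intro k
        by_cases h : k = i
        · subst h
          have h1 : α₁ k ≤ α k := by simp only [hα₁def, if_pos rfl]; omega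
          exact enat_lt_of_le_of_lt h1 (hα k)
        · simp only [hα₁def, if_neg h]; exact hα k
      · simp only [hα₁def, if_pos rfl]; omega


private lemma prodpow_apply
    (δ : Fin n → Module.End K A)
    (hleib : ∀ i, ∀ a b : A, δ i (a * b) = δ i a * b + a * δ i b)
    (l : Fin n → ℕ∞) (x : Fin n → ℕ → A)
    (hxd : ∀ i (j : ℕ), ((j + 1 : ℕ) : ℕ∞) < l i → δ i (x i (j + 1)) = x i j)
    (hmem : ∀ i k, k ≠ i → ∀ j : ℕ, (j : ℕ∞) < l i → δ k (x i j) = 0)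
    (β : Fin n → ℕ) (c : A) (hc : ∀ k, δ k c = 0) :
    ∀ (t : List (Fin n)), t.Nodup →
      ∀ (α α' : Fin n → ℕ), (∀ k, ((α k : ℕ∞) < l k)) →
      (∀ k ∈ t, α' k + β k = α k) → (∀ k ∉ t, α' k = α k) →
      ((t.map fun i => (δ i) ^ (β i)).prod) ((List.ofFn fun k => x k (α k)).prod * c)
        = (List.ofFn fun k => x k (α' k)).prod * c := by
  intro t
  induction t with
  | nil =>
    intro _ α α' hα _ hoff
    have hαα : α' = α := funext fun k => hoff k (by simp)
    rw [hαα, List.map_nil, List.prod_nil, Module.End.one_apply]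
  | cons i s ih =>
    intro hnd α α' hα hsub hoff
    rw [List.map_cons, List.prod_cons, Module.End.mul_apply]
    classical
    set α₁ : Fin n → ℕ := fun k => if k ∈ s then α' k else α k with hα₁def
    have his : i ∉ s := (List.nodup_cons.mp hnd).1
    have hin : ((s.map fun i => (δ i) ^ (β i)).prod)
        ((List.ofFn fun k => x k (α k)).prod * c)
        = (List.ofFn fun k => x k (α₁ k)).prod * c := by
      refine ih (List.nodup_cons.mp hnd).2 α α₁ hα ?_ ?_
      · intro k hk
        simp only [hα₁def, if_pos hk]
        exact hsub k (List.mem_cons_of_mem _ hk)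
      · intro k hk; simp only [hα₁def, if_neg hk]
    rw [hin]
    refine pow_der_mul_prod δ hleib l x hxd hmem i (β i) α₁ α' ?_ ?_ ?_ c (hc i)
    · intro k
      by_cases hk : k ∈ s
      · simp only [hα₁def, if_pos hk]
        have h1 : α' k + β k = α k := hsub k (List.mem_cons_of_mem _ hk)
        exact enat_lt_of_le_of_lt (by omega) (hα k)
      · simp only [hα₁def, if_neg hk]; exact hα k
    · simp only [hα₁def, if_neg his]
      exact hsub i (List.mem_cons_self)
    · intro k hk
      by_cases hks : k ∈ s
      · simp only [hα₁def, if_pos hks]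
      · simp only [hα₁def, if_neg hks]
        exact hoff k (by simp [hk, hks])

private lemma prodpow_apply_zero
    (δ : Fin n → Module.End K A)
    (hleib : ∀ i, ∀ a b : A, δ i (a * b) = δ i a * b + a * δ i b)
    (l : Fin n → ℕ∞) (x : Fin n → ℕ → A)
    (hx0 : ∀ i, x i 0 = 1)
    (hxd : ∀ i (j : ℕ), ((j + 1 : ℕ) : ℕ∞) < l i → δ i (x i (j + 1)) = x i j)
    (hmem : ∀ i k, k ≠ i → ∀ j : ℕ, (j : ℕ∞) < l i → δ k (x i j) = 0)
    (β : Fin n → ℕ) (c : A) (hc : ∀ k, δ k c = 0) :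
    ∀ (t : List (Fin n)), t.Nodup →
      ∀ (α : Fin n → ℕ), (∀ k, ((α k : ℕ∞) < l k)) →
      (∃ i ∈ t, α i < β i) →
      ((t.map fun i => (δ i) ^ (β i)).prod) ((List.ofFn fun k => x k (α k)).prod * c)
        = 0 := by
  intro t
  induction t with
  | nil => rintro _ α _ ⟨i, hi, _⟩; simp at hi
  | cons j s ih =>
    rintro hnd α hα ⟨i, hit, hlt⟩
    rw [List.map_cons, List.prod_cons, Module.End.mul_apply]
    classical
    by_cases hex : ∃ i ∈ s, α i < β i
    · rw [ih (List.nodup_cons.mp hnd).2 α hα hex, map_zero]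
    · push_neg at hex
      have hij : i = j := by
        rcases List.mem_cons.mp hit with h | h
        · exact h
        · exact absurd hlt (not_lt.mpr (hex i h))
      subst hij
      have hjs : i ∉ s := (List.nodup_cons.mp hnd).1
      set α₁ : Fin n → ℕ := fun k => if k ∈ s then α k - β k else α k with hα₁def
      have hin : ((s.map fun i => (δ i) ^ (β i)).prod)
          ((List.ofFn fun k => x k (α k)).prod * c)
          = (List.ofFn fun k => x k (α₁ k)).prod * c := by
        refine prodpow_apply δ hleib l x hxd hmem β c hc s
          (List.nodup_cons.mp hnd).2 α α₁ hα ?_ ?_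
        · intro k hk
          have := hex k hk
          simp only [hα₁def, if_pos hk]; omega
        · intro k hk; simp only [hα₁def, if_neg hk]
      rw [hin]
      refine pow_der_mul_prod_zero δ hleib l x hx0 hxd hmem i (β i) α₁ ?_ ?_ c (hc i)
      · intro k
        by_cases hk : k ∈ s
        · simp only [hα₁def, if_pos hk]
          exact enat_lt_of_le_of_lt (Nat.sub_le _ _) (hα k)
        · simp only [hα₁def, if_neg hk]; exact hα k
      · simp only [hα₁def, if_neg hjs]; exact hlt

private lemma der_prod_mulr
    (δ : Fin n → Module.End K A)
    (hleib : ∀ i, ∀ a b : A, δ i (a * b) = δ i a * b + a * δ i b)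
    (l : Fin n → ℕ∞) (x : Fin n → ℕ → A)
    (hxd : ∀ i (j : ℕ), ((j + 1 : ℕ) : ℕ∞) < l i → δ i (x i (j + 1)) = x i j)
    (hmem : ∀ i k, k ≠ i → ∀ j : ℕ, (j : ℕ∞) < l i → δ k (x i j) = 0)
    (i : Fin n) (t : List (Fin n)) (hnd : t.Nodup) (hi : i ∈ t)
    (α α' : Fin n → ℕ) (hα : ∀ k, ((α k : ℕ∞) < l k))
    (hsucc : α' i + 1 = α i) (hoff : ∀ k, k ≠ i → α' k = α k) :
    ∀ c : A, δ i c = 0 →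
    δ i (c * (t.map fun k => x k (α k)).prod)
      = c * (t.map fun k => x k (α' k)).prod := by
  induction t with
  | nil => simp at hi
  | cons j s ih =>
    intro c hc
    simp only [List.map_cons, List.prod_cons, ← mul_assoc]
    by_cases hji : j = i
    · subst hji
      have hjs : j ∉ s := (List.nodup_cons.mp hnd).1
      have hker : ∀ y ∈ s.map fun k => x k (α k), δ j y = 0 := by
        intro y hy
        rcases List.mem_map.mp hy with ⟨k, hk, rfl⟩
        exact hmem k j (fun h => hjs (h ▸ hk)) (α k) (hα k)
      have h2 : δ j ((c * x j (α j)) * (s.map fun k => x k (α k)).prod)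
          = δ j (c * x j (α j)) * (s.map fun k => x k (α k)).prod :=
        mul_prod_ker (δ j) (hleib j) _ hker _
      have hd1 : δ j (x j (α j)) = x j (α' j) := by
        have hlt : ((α' j + 1 : ℕ) : ℕ∞) < l j := by rw [hsucc]; exact hα j
        rw [← hsucc]; exact hxd j (α' j) hlt
      rw [h2, hleib, hc, zero_mul, zero_add, hd1]
      have hmapeq : (s.map fun k => x k (α k)) = s.map fun k => x k (α' k) :=
        List.map_congr_left (fun k hk => by rw [hoff k (fun h => hjs (h ▸ hk))])
      rw [hmapeq]
    · have hi' : i ∈ s := by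
        rcases List.mem_cons.mp hi with h | h
        · exact absurd h.symm hji
        · exact h
      have hcx : δ i (c * x j (α j)) = 0 := by
        rw [hleib, hmem j i (Ne.symm hji) (α j) (hα j), hc, zero_mul, mul_zero,
          add_zero]
      rw [ih (List.nodup_cons.mp hnd).2 hi' (c * x j (α j)) hcx, hoff j hji]

private lemma der_prod_mulr_zero
    (δ : Fin n → Module.End K A)
    (hleib : ∀ i, ∀ a b : A, δ i (a * b) = δ i a * b + a * δ i b)
    (l : Fin n → ℕ∞) (x : Fin n → ℕ → A)
    (hx0 : ∀ i, x i 0 = 1)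
    (hmem : ∀ i k, k ≠ i → ∀ j : ℕ, (j : ℕ∞) < l i → δ k (x i j) = 0)
    (i : Fin n) (t : List (Fin n)) (hnd : t.Nodup) (hi : i ∈ t)
    (α : Fin n → ℕ) (hα : ∀ k, ((α k : ℕ∞) < l k)) (hz : α i = 0) :
    ∀ c : A, δ i c = 0 →
    δ i (c * (t.map fun k => x k (α k)).prod) = 0 := by
  induction t with
  | nil => simp at hi
  | cons j s ih =>
    intro c hc
    simp only [List.map_cons, List.prod_cons, ← mul_assoc]
    by_cases hji : j = i
    · subst hji
      have hjs : j ∉ s := (List.nodup_cons.mp hnd).1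
      have hker : ∀ y ∈ s.map fun k => x k (α k), δ j y = 0 := by
        intro y hy
        rcases List.mem_map.mp hy with ⟨k, hk, rfl⟩
        exact hmem k j (fun h => hjs (h ▸ hk)) (α k) (hα k)
      have h2 : δ j ((c * x j (α j)) * (s.map fun k => x k (α k)).prod)
          = δ j (c * x j (α j)) * (s.map fun k => x k (α k)).prod :=
        mul_prod_ker (δ j) (hleib j) _ hker _
      rw [h2, hleib, hc, zero_mul, zero_add, hz, hx0 j,
        der_one (δ j) (hleib j), mul_zero, zero_mul]
    · have hi' : i ∈ s := by
        rcases List.mem_cons.mp hi with h | h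
        · exact absurd h.symm hji
        · exact h
      have hcx : δ i (c * x j (α j)) = 0 := by
        rw [hleib, hmem j i (Ne.symm hji) (α j) (hα j), hc, zero_mul, mul_zero,
          add_zero]
      exact ih (List.nodup_cons.mp hnd).2 hi' (c * x j (α j)) hcx

private lemma pow_der_mulr
    (δ : Fin n → Module.End K A)
    (hleib : ∀ i, ∀ a b : A, δ i (a * b) = δ i a * b + a * δ i b)
    (l : Fin n → ℕ∞) (x : Fin n → ℕ → A)
    (hxd : ∀ i (j : ℕ), ((j + 1 : ℕ) : ℕ∞) < l i → δ i (x i (j + 1)) = x i j)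
    (hmem : ∀ i k, k ≠ i → ∀ j : ℕ, (j : ℕ∞) < l i → δ k (x i j) = 0)
    (i : Fin n) (m : ℕ) :
    ∀ (α α' : Fin n → ℕ), (∀ k, ((α k : ℕ∞) < l k)) →
      (α' i + m = α i) → (∀ k, k ≠ i → α' k = α k) →
      ∀ c : A, δ i c = 0 →
      ((δ i) ^ m) (c * (List.ofFn fun k => x k (α k)).prod)
        = c * (List.ofFn fun k => x k (α' k)).prod := by
  induction m with
  | zero =>
    intro α α' hα hsum hoff c _
    have hαα : α' = α := funext fun k => by
      by_cases h : k = i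
      · subst h; simpa using hsum
      · exact hoff k h
    rw [hαα, pow_zero, Module.End.one_apply]
  | succ m ih =>
    intro α α' hα hsum hoff c hc
    rw [pow_succ, Module.End.mul_apply]
    classical
    set α₁ : Fin n → ℕ := fun k => if k = i then α' i + m else α k with hα₁def
    have hstep : δ i (c * (List.ofFn fun k => x k (α k)).prod)
        = c * (List.ofFn fun k => x k (α₁ k)).prod := by
      rw [List.ofFn_eq_map, List.ofFn_eq_map]
      refine der_prod_mulr δ hleib l x hxd hmem i (List.finRange n)
        (List.nodup_finRange n) (List.mem_finRange i) α α₁ hα ?_ ?_ c hc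
      · simp only [hα₁def, if_pos rfl]; omega
      · intro k hk; simp only [hα₁def, if_neg hk]
    rw [hstep]
    refine ih α₁ α' ?_ ?_ ?_ c hc
    · intro k
      by_cases h : k = i
      · subst h
        have h1 : α₁ k ≤ α k := by simp only [hα₁def, if_pos rfl]; omega
        exact enat_lt_of_le_of_lt h1 (hα k)
      · simp only [hα₁def, if_neg h]; exact hα k
    · simp only [hα₁def, if_pos rfl]
    · intro k hk; simp only [hα₁def, if_neg hk]; exact hoff k hk

private lemma pow_der_mulr_zero
    (δ : Fin n → Module.End K A)
    (hleib : ∀ i, ∀ a b : A, δ i (a * b) = δ i a * b + a * δ i b)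
    (l : Fin n → ℕ∞) (x : Fin n → ℕ → A)
    (hx0 : ∀ i, x i 0 = 1)
    (hxd : ∀ i (j : ℕ), ((j + 1 : ℕ) : ℕ∞) < l i → δ i (x i (j + 1)) = x i j)
    (hmem : ∀ i k, k ≠ i → ∀ j : ℕ, (j : ℕ∞) < l i → δ k (x i j) = 0)
    (i : Fin n) (m : ℕ) :
    ∀ (α : Fin n → ℕ), (∀ k, ((α k : ℕ∞) < l k)) → α i < m →
      ∀ c : A, δ i c = 0 →
      ((δ i) ^ m) (c * (List.ofFn fun k => x k (α k)).prod) = 0 := by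
  induction m with
  | zero => intro α _ h; omega
  | succ m ih =>
    intro α hα hlt c hc
    rw [pow_succ, Module.End.mul_apply]
    classical
    by_cases h0 : α i = 0
    · have hstep : δ i (c * (List.ofFn fun k => x k (α k)).prod) = 0 := by
        rw [List.ofFn_eq_map]
        exact der_prod_mulr_zero δ hleib l x hx0 hmem i (List.finRange n)
          (List.nodup_finRange n) (List.mem_finRange i) α hα h0 c hc
      rw [hstep, map_zero]
    · set α₁ : Fin n → ℕ := fun k => if k = i then α i - 1 else α k with hα₁def
      have hstep : δ i (c * (List.ofFn fun k => x k (α k)).prod)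
          = c * (List.ofFn fun k => x k (α₁ k)).prod := by
        rw [List.ofFn_eq_map, List.ofFn_eq_map]
        refine der_prod_mulr δ hleib l x hxd hmem i (List.finRange n)
          (List.nodup_finRange n) (List.mem_finRange i) α α₁ hα ?_ ?_ c hc
        · simp only [hα₁def, if_pos rfl]; omega
        · intro k hk; simp only [hα₁def, if_neg hk]
      rw [hstep]
      refine ih α₁ ?_ ?_ c hc
      · intro k
        by_cases h : k = i
        · subst h
          have h1 : α₁ k ≤ α k := by simp only [hα₁def, if_pos rfl]; omega
          exact enat_lt_of_le_of_lt h1 (hα k)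
        · simp only [hα₁def, if_neg h]; exact hα k
      · simp only [hα₁def, if_pos rfl]; omega

private lemma prodpow_applyr
    (δ : Fin n → Module.End K A)
    (hleib : ∀ i, ∀ a b : A, δ i (a * b) = δ i a * b + a * δ i b)
    (l : Fin n → ℕ∞) (x : Fin n → ℕ → A)
    (hxd : ∀ i (j : ℕ), ((j + 1 : ℕ) : ℕ∞) < l i → δ i (x i (j + 1)) = x i j)
    (hmem : ∀ i k, k ≠ i → ∀ j : ℕ, (j : ℕ∞) < l i → δ k (x i j) = 0)
    (β : Fin n → ℕ) (c : A) (hc : ∀ k, δ k c = 0) :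
    ∀ (t : List (Fin n)), t.Nodup →
      ∀ (α α' : Fin n → ℕ), (∀ k, ((α k : ℕ∞) < l k)) →
      (∀ k ∈ t, α' k + β k = α k) → (∀ k ∉ t, α' k = α k) →
      ((t.map fun i => (δ i) ^ (β i)).prod) (c * (List.ofFn fun k => x k (α k)).prod)
        = c * (List.ofFn fun k => x k (α' k)).prod := by
  intro t
  induction t with
  | nil =>
    intro _ α α' hα _ hoff
    have hαα : α' = α := funext fun k => hoff k (by simp)
    rw [hαα, List.map_nil, List.prod_nil, Module.End.one_apply]
  | cons i s ih =>
    intro hnd α α' hα hsub hoff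
    rw [List.map_cons, List.prod_cons, Module.End.mul_apply]
    classical
    set α₁ : Fin n → ℕ := fun k => if k ∈ s then α' k else α k with hα₁def
    have his : i ∉ s := (List.nodup_cons.mp hnd).1
    have hin : ((s.map fun i => (δ i) ^ (β i)).prod)
        (c * (List.ofFn fun k => x k (α k)).prod)
        = c * (List.ofFn fun k => x k (α₁ k)).prod := by
      refine ih (List.nodup_cons.mp hnd).2 α α₁ hα ?_ ?_
      · intro k hk
        simp only [hα₁def, if_pos hk]
        exact hsub k (List.mem_cons_of_mem _ hk)
      · intro k hk; simp only [hα₁def, if_neg hk]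
    rw [hin]
    refine pow_der_mulr δ hleib l x hxd hmem i (β i) α₁ α' ?_ ?_ ?_ c (hc i)
    · intro k
      by_cases hk : k ∈ s
      · simp only [hα₁def, if_pos hk]
        have h1 : α' k + β k = α k := hsub k (List.mem_cons_of_mem _ hk)
        exact enat_lt_of_le_of_lt (by omega) (hα k)
      · simp only [hα₁def, if_neg hk]; exact hα k
    · simp only [hα₁def, if_neg his]
      exact hsub i (List.mem_cons_self)
    · intro k hk
      by_cases hks : k ∈ s
      · simp only [hα₁def, if_pos hks]
      · simp only [hα₁def, if_neg hks]
        exact hoff k (by simp [hk, hks])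

private lemma prodpow_applyr_zero
    (δ : Fin n → Module.End K A)
    (hleib : ∀ i, ∀ a b : A, δ i (a * b) = δ i a * b + a * δ i b)
    (l : Fin n → ℕ∞) (x : Fin n → ℕ → A)
    (hx0 : ∀ i, x i 0 = 1)
    (hxd : ∀ i (j : ℕ), ((j + 1 : ℕ) : ℕ∞) < l i → δ i (x i (j + 1)) = x i j)
    (hmem : ∀ i k, k ≠ i → ∀ j : ℕ, (j : ℕ∞) < l i → δ k (x i j) = 0)
    (β : Fin n → ℕ) (c : A) (hc : ∀ k, δ k c = 0) :
    ∀ (t : List (Fin n)), t.Nodup →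
      ∀ (α : Fin n → ℕ), (∀ k, ((α k : ℕ∞) < l k)) →
      (∃ i ∈ t, α i < β i) →
      ((t.map fun i => (δ i) ^ (β i)).prod) (c * (List.ofFn fun k => x k (α k)).prod)
        = 0 := by
  intro t
  induction t with
  | nil => rintro _ α _ ⟨i, hi, _⟩; simp at hi
  | cons j s ih =>
    rintro hnd α hα ⟨i, hit, hlt⟩
    rw [List.map_cons, List.prod_cons, Module.End.mul_apply]
    classical
    by_cases hex : ∃ i ∈ s, α i < β i
    · rw [ih (List.nodup_cons.mp hnd).2 α hα hex, map_zero]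
    · push_neg at hex
      have hij : i = j := by
        rcases List.mem_cons.mp hit with h | h
        · exact h
        · exact absurd hlt (not_lt.mpr (hex i h))
      subst hij
      have hjs : i ∉ s := (List.nodup_cons.mp hnd).1
      set α₁ : Fin n → ℕ := fun k => if k ∈ s then α k - β k else α k with hα₁def
      have hin : ((s.map fun i => (δ i) ^ (β i)).prod)
          (c * (List.ofFn fun k => x k (α k)).prod)
          = c * (List.ofFn fun k => x k (α₁ k)).prod := by
        refine prodpow_applyr δ hleib l x hxd hmem β c hc s
          (List.nodup_cons.mp hnd).2 α α₁ hα ?_ ?_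
        · intro k hk
          have := hex k hk
          simp only [hα₁def, if_pos hk]; omega
        · intro k hk; simp only [hα₁def, if_neg hk]
      rw [hin]
      refine pow_der_mulr_zero δ hleib l x hx0 hxd hmem i (β i) α₁ ?_ ?_ c (hc i)
      · intro k
        by_cases hk : k ∈ s
        · simp only [hα₁def, if_pos hk]
          exact enat_lt_of_le_of_lt (Nat.sub_le _ _) (hα k)
        · simp only [hα₁def, if_neg hk]; exact hα k
      · simp only [hα₁def, if_neg hjs]; exact hlt

private lemma unique_left
    (δ : Fin n → Module.End K A)
    (hleib : ∀ i, ∀ a b : A, δ i (a * b) = δ i a * b + a * δ i b)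
    (l : Fin n → ℕ∞) (x : Fin n → ℕ → A)
    (hx0 : ∀ i, x i 0 = 1)
    (hxd : ∀ i (j : ℕ), ((j + 1 : ℕ) : ℕ∞) < l i → δ i (x i (j + 1)) = x i j)
    (hmem : ∀ i k, k ≠ i → ∀ j : ℕ, (j : ℕ∞) < l i → δ k (x i j) = 0)
    (S : Finset {α : Fin n → ℕ // ∀ i, ((α i : ℕ∞) < l i)}) :
    ∀ c : {α : Fin n → ℕ // ∀ i, ((α i : ℕ∞) < l i)} → A,
      (∀ β ∈ S, ∀ k, δ k (c β) = 0) →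
      (∑ β ∈ S, (List.ofFn fun k => x k (β.1 k)).prod * c β) = 0 →
      ∀ β ∈ S, c β = 0 := by
  classical
  induction S using Finset.strongInduction with
  | _ S ih =>
    intro c hc hsum
    rcases S.eq_empty_or_nonempty with rfl | hS
    · simp
    · obtain ⟨βs, hβsS, hmax'⟩ := S.exists_maximal hS
      set Δ : Module.End K A := (List.ofFn fun i => (δ i) ^ (βs.1 i)).prod with hΔ
      have happ : ∀ β ∈ S, Δ ((List.ofFn fun k => x k (β.1 k)).prod * c β)
          = if β = βs then c βs else 0 := by
        intro β hβ
        by_cases hββ : β = βs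
        · subst hββ
          rw [if_pos rfl, hΔ, List.ofFn_eq_map]
          have h1 := prodpow_apply δ hleib l x hxd hmem β.1 (c β) (hc β hβ)
            (List.finRange n) (List.nodup_finRange n) β.1 (fun _ => 0) β.2
            (fun k _ => by simp) (fun k hk => absurd (List.mem_finRange k) hk)
          rw [h1, prod_ofFn_one x hx0 _ (fun _ => rfl), one_mul]
        · rw [if_neg hββ, hΔ, List.ofFn_eq_map]
          have hnle : ¬ (βs.1 ≤ β.1) := by
            intro hle
            have hlt : βs < β := by
              refine lt_of_le_of_ne ?_ (fun h => hββ h.symm)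
              exact Subtype.coe_le_coe.mp hle
            exact lt_irrefl _ (lt_of_lt_of_le hlt (hmax' hβ hlt.le))
          rw [Pi.le_def] at hnle
          push_neg at hnle
          obtain ⟨i, hi⟩ := hnle
          exact prodpow_apply_zero δ hleib l x hx0 hxd hmem βs.1 (c β) (hc β hβ)
            (List.finRange n) (List.nodup_finRange n) β.1 β.2
            ⟨i, List.mem_finRange i, hi⟩
      have hcβs : c βs = 0 := by
        have h0 : Δ (∑ β ∈ S, (List.ofFn fun k => x k (β.1 k)).prod * c β) = 0 := by
          rw [hsum, map_zero]
        rw [map_sum, Finset.sum_congr rfl happ, Finset.sum_ite_eq' S βs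
          (fun _ => c βs), if_pos hβsS] at h0
        exact h0
      have hsum' : ∑ β ∈ S.erase βs, (List.ofFn fun k => x k (β.1 k)).prod * c β
          = 0 := by
        have h1 := Finset.add_sum_erase S
          (fun β => (List.ofFn fun k => x k (β.1 k)).prod * c β) hβsS
        rw [← h1] at hsum
        simp only [hcβs, mul_zero, zero_add] at hsum
        exact hsum
      have hrest := ih (S.erase βs) (Finset.erase_ssubset hβsS) c
        (fun β hβ => hc β (Finset.mem_of_mem_erase hβ)) hsum'
      intro β hβ
      by_cases hββ : β = βs
      · subst hββ; exact hcβs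
      · exact hrest β (Finset.mem_erase.mpr ⟨hββ, hβ⟩)

private lemma unique_right
    (δ : Fin n → Module.End K A)
    (hleib : ∀ i, ∀ a b : A, δ i (a * b) = δ i a * b + a * δ i b)
    (l : Fin n → ℕ∞) (x : Fin n → ℕ → A)
    (hx0 : ∀ i, x i 0 = 1)
    (hxd : ∀ i (j : ℕ), ((j + 1 : ℕ) : ℕ∞) < l i → δ i (x i (j + 1)) = x i j)
    (hmem : ∀ i k, k ≠ i → ∀ j : ℕ, (j : ℕ∞) < l i → δ k (x i j) = 0)
    (S : Finset {α : Fin n → ℕ // ∀ i, ((α i : ℕ∞) < l i)}) :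
    ∀ c : {α : Fin n → ℕ // ∀ i, ((α i : ℕ∞) < l i)} → A,
      (∀ β ∈ S, ∀ k, δ k (c β) = 0) →
      (∑ β ∈ S, c β * (List.ofFn fun k => x k (β.1 k)).prod) = 0 →
      ∀ β ∈ S, c β = 0 := by
  classical
  induction S using Finset.strongInduction with
  | _ S ih =>
    intro c hc hsum
    rcases S.eq_empty_or_nonempty with rfl | hS
    · simp
    · obtain ⟨βs, hβsS, hmax'⟩ := S.exists_maximal hS
      set Δ : Module.End K A := (List.ofFn fun i => (δ i) ^ (βs.1 i)).prod with hΔ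
      have happ : ∀ β ∈ S, Δ (c β * (List.ofFn fun k => x k (β.1 k)).prod)
          = if β = βs then c βs else 0 := by
        intro β hβ
        by_cases hββ : β = βs
        · subst hββ
          rw [if_pos rfl, hΔ, List.ofFn_eq_map]
          have h1 := prodpow_applyr δ hleib l x hxd hmem β.1 (c β) (hc β hβ)
            (List.finRange n) (List.nodup_finRange n) β.1 (fun _ => 0) β.2
            (fun k _ => by simp) (fun k hk => absurd (List.mem_finRange k) hk)
          rw [h1, prod_ofFn_one x hx0 _ (fun _ => rfl), mul_one]
        · rw [if_neg hββ, hΔ, List.ofFn_eq_map]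
          have hnle : ¬ (βs.1 ≤ β.1) := by
            intro hle
            have hlt : βs < β := by
              refine lt_of_le_of_ne ?_ (fun h => hββ h.symm)
              exact Subtype.coe_le_coe.mp hle
            exact lt_irrefl _ (lt_of_lt_of_le hlt (hmax' hβ hlt.le))
          rw [Pi.le_def] at hnle
          push_neg at hnle
          obtain ⟨i, hi⟩ := hnle
          exact prodpow_applyr_zero δ hleib l x hx0 hxd hmem βs.1 (c β) (hc β hβ)
            (List.finRange n) (List.nodup_finRange n) β.1 β.2
            ⟨i, List.mem_finRange i, hi⟩
      have hcβs : c βs = 0 := by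
        have h0 : Δ (∑ β ∈ S, c β * (List.ofFn fun k => x k (β.1 k)).prod) = 0 := by
          rw [hsum, map_zero]
        rw [map_sum, Finset.sum_congr rfl happ, Finset.sum_ite_eq' S βs
          (fun _ => c βs), if_pos hβsS] at h0
        exact h0
      have hsum' : ∑ β ∈ S.erase βs, c β * (List.ofFn fun k => x k (β.1 k)).prod
          = 0 := by
        have h1 := Finset.add_sum_erase S
          (fun β => c β * (List.ofFn fun k => x k (β.1 k)).prod) hβsS
        rw [← h1] at hsum
        simp only [hcβs, zero_mul, zero_add] at hsum
        exact hsum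
      have hrest := ih (S.erase βs) (Finset.erase_ssubset hβsS) c
        (fun β hβ => hc β (Finset.mem_of_mem_erase hβ)) hsum'
      intro β hβ
      by_cases hββ : β = βs
      · subst hββ; exact hcβs
      · exact hrest β (Finset.mem_erase.mpr ⟨hββ, hβ⟩)

private lemma dec1_left
    (δ : Fin n → Module.End K A)
    (hleib : ∀ i, ∀ a b : A, δ i (a * b) = δ i a * b + a * δ i b)
    (hcomm : ∀ i j, Commute (δ i) (δ j))
    (l : Fin n → ℕ∞) (x : Fin n → ℕ → A)
    (hx0 : ∀ i, x i 0 = 1)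
    (hxd : ∀ i (j : ℕ), ((j + 1 : ℕ) : ℕ∞) < l i → δ i (x i (j + 1)) = x i j)
    (hmem : ∀ i k, k ≠ i → ∀ j : ℕ, (j : ℕ∞) < l i → δ k (x i j) = 0)
    (i : Fin n) :
    ∀ (N : ℕ), ((N : ℕ∞) ≤ l i) → ∀ a : A, ((δ i) ^ N) a = 0 →
      ∃ c : ℕ → A, (∀ j, δ i (c j) = 0) ∧
        (∀ k, k ≠ i → δ k a = 0 → ∀ j, δ k (c j) = 0) ∧
        a = ∑ j ∈ Finset.range N, x i j * c j := by
  intro N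
  induction N with
  | zero =>
    intro _ a ha
    have h0 : a = 0 := by simpa using ha
    exact ⟨0, by simp, by simp, by simp [h0]⟩
  | succ N ih =>
    intro hNl a ha
    have hNl' : (N : ℕ∞) ≤ l i :=
      le_trans (by exact_mod_cast Nat.le_succ N) hNl
    have hda : ((δ i) ^ N) (δ i a) = 0 := by
      rw [← Module.End.mul_apply, ← pow_succ]; exact ha
    obtain ⟨c, hc1, hc2, hdec⟩ := ih hNl' (δ i a) hda
    have hjlt : ∀ j, j < N → ((j + 1 : ℕ) : ℕ∞) < l i := by
      intro j hj
      exact enat_lt_of_lt_of_le (by omega) hNl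
    set a' : A := ∑ j ∈ Finset.range N, x i (j + 1) * c j with ha'
    have hδa' : δ i a' = δ i a := by
      rw [ha', map_sum, hdec]
      refine Finset.sum_congr rfl ?_
      intro j hj
      rw [hleib, hc1 j, mul_zero, add_zero, hxd i j (hjlt j (Finset.mem_range.mp hj))]
    have hd : δ i (a - a') = 0 := by rw [map_sub, hδa', sub_self]
    refine ⟨fun j => if j = 0 then a - a' else c (j - 1), ?_, ?_, ?_⟩
    · intro j
      by_cases h : j = 0 <;> simp [h, hd, hc1]
    · intro k hk hka j
      have hka' : δ k (δ i a) = 0 := by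
        have := congrArg (fun f : Module.End K A => f a) (hcomm k i)
        simp only [Module.End.mul_apply] at this
        rw [this, hka, map_zero]
      have hca' : δ k a' = 0 := by
        rw [ha', map_sum]
        refine Finset.sum_eq_zero ?_
        intro j hj
        rw [hleib, hmem i k hk (j + 1) (hjlt j (Finset.mem_range.mp hj)), zero_mul,
          zero_add, hc2 k hk hka' j, mul_zero]
      by_cases h : j = 0
      · subst h
        simp only []
        rw [if_true, map_sub, hka, hca', sub_zero]
      · simp only [h, if_neg h]
        exact hc2 k hk hka' (j - 1)
    · rw [Finset.sum_range_succ']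
      have h1 : ∀ j, x i (j + 1) * (if j + 1 = 0 then a - a' else c (j + 1 - 1))
          = x i (j + 1) * c j := by
        intro j; simp
      rw [Finset.sum_congr rfl (fun j _ => h1 j)]
      simp only [eq_self_iff_true, if_true, hx0 i, one_mul]
      rw [← ha', ← add_sub_assoc, add_sub_cancel_left]

private lemma dec1_right
    (δ : Fin n → Module.End K A)
    (hleib : ∀ i, ∀ a b : A, δ i (a * b) = δ i a * b + a * δ i b)
    (hcomm : ∀ i j, Commute (δ i) (δ j))
    (l : Fin n → ℕ∞) (x : Fin n → ℕ → A)
    (hx0 : ∀ i, x i 0 = 1)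
    (hxd : ∀ i (j : ℕ), ((j + 1 : ℕ) : ℕ∞) < l i → δ i (x i (j + 1)) = x i j)
    (hmem : ∀ i k, k ≠ i → ∀ j : ℕ, (j : ℕ∞) < l i → δ k (x i j) = 0)
    (i : Fin n) :
    ∀ (N : ℕ), ((N : ℕ∞) ≤ l i) → ∀ a : A, ((δ i) ^ N) a = 0 →
      ∃ c : ℕ → A, (∀ j, δ i (c j) = 0) ∧
        (∀ k, k ≠ i → δ k a = 0 → ∀ j, δ k (c j) = 0) ∧
        a = ∑ j ∈ Finset.range N, c j * x i j := by
  intro N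
  induction N with
  | zero =>
    intro _ a ha
    have h0 : a = 0 := by simpa using ha
    exact ⟨0, by simp, by simp, by simp [h0]⟩
  | succ N ih =>
    intro hNl a ha
    have hNl' : (N : ℕ∞) ≤ l i :=
      le_trans (by exact_mod_cast Nat.le_succ N) hNl
    have hda : ((δ i) ^ N) (δ i a) = 0 := by
      rw [← Module.End.mul_apply, ← pow_succ]; exact ha
    obtain ⟨c, hc1, hc2, hdec⟩ := ih hNl' (δ i a) hda
    have hjlt : ∀ j, j < N → ((j + 1 : ℕ) : ℕ∞) < l i := by
      intro j hj
      exact enat_lt_of_lt_of_le (by omega) hNl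
    set a' : A := ∑ j ∈ Finset.range N, c j * x i (j + 1) with ha'
    have hδa' : δ i a' = δ i a := by
      rw [ha', map_sum, hdec]
      refine Finset.sum_congr rfl ?_
      intro j hj
      rw [hleib, hc1 j, zero_mul, zero_add, hxd i j (hjlt j (Finset.mem_range.mp hj))]
    have hd : δ i (a - a') = 0 := by rw [map_sub, hδa', sub_self]
    refine ⟨fun j => if j = 0 then a - a' else c (j - 1), ?_, ?_, ?_⟩
    · intro j
      by_cases h : j = 0 <;> simp [h, hd, hc1]
    · intro k hk hka j
      have hka' : δ k (δ i a) = 0 := by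
        have := congrArg (fun f : Module.End K A => f a) (hcomm k i)
        simp only [Module.End.mul_apply] at this
        rw [this, hka, map_zero]
      have hca' : δ k a' = 0 := by
        rw [ha', map_sum]
        refine Finset.sum_eq_zero ?_
        intro j hj
        rw [hleib, hmem i k hk (j + 1) (hjlt j (Finset.mem_range.mp hj)), mul_zero,
          hc2 k hk hka' j, zero_mul, zero_add]
      by_cases h : j = 0
      · subst h
        simp only []
        rw [if_true, map_sub, hka, hca', sub_zero]
      · simp only [h, if_neg h]
        exact hc2 k hk hka' (j - 1)
    · rw [Finset.sum_range_succ']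
      have h1 : ∀ j, (if j + 1 = 0 then a - a' else c (j + 1 - 1)) * x i (j + 1)
          = c j * x i (j + 1) := by
        intro j; simp
      rw [Finset.sum_congr rfl (fun j _ => h1 j)]
      simp only [eq_self_iff_true, if_true, hx0 i, mul_one]
      rw [← ha', ← add_sub_assoc, add_sub_cancel_left]

private lemma mulP_left :
    ∀ (n : ℕ) (x : Fin n → ℕ → A), (∀ i, x i 0 = 1) →
      ∀ (m : Fin n) (j : ℕ) (α : Fin n → ℕ), (∀ k, k ≤ m → α k = 0) →
      x m j * (List.ofFn fun k => x k (α k)).prod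
        = (List.ofFn fun k => x k (if k = m then j else α k)).prod := by
  intro n
  induction n with
  | zero => intro x _ m; exact m.elim0
  | succ n ih =>
    intro x hx0 m j α hα
    rw [List.ofFn_succ, List.ofFn_succ, List.prod_cons, List.prod_cons]
    rcases Fin.eq_zero_or_eq_succ m with rfl | ⟨m', rfl⟩
    · have h0 : α 0 = 0 := hα 0 le_rfl
      rw [if_pos rfl, h0, hx0 0, one_mul]
      simp only [Fin.succ_ne_zero, if_false, ite_false]
    · have h0 : α 0 = 0 := hα 0 (Fin.zero_le _)
      rw [if_neg (Ne.symm (Fin.succ_ne_zero m')), h0, hx0 0, one_mul, one_mul]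
      have hih := ih (fun k => x k.succ) (fun k => hx0 k.succ) m' j (fun k => α k.succ)
        (fun k hk => hα k.succ (by rwa [Fin.succ_le_succ_iff]))
      rw [hih]
      simp only [Fin.succ_inj]

private lemma mulP_right :
    ∀ (n : ℕ) (x : Fin n → ℕ → A), (∀ i, x i 0 = 1) →
      ∀ (m : Fin n) (j : ℕ) (α : Fin n → ℕ), (∀ k, m ≤ k → α k = 0) →
      (List.ofFn fun k => x k (α k)).prod * x m j
        = (List.ofFn fun k => x k (if k = m then j else α k)).prod := by
  intro n
  induction n with
  | zero => intro x _ m; exact m.elim0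
  | succ n ih =>
    intro x hx0 m j α hα
    rw [List.ofFn_succ, List.ofFn_succ, List.prod_cons, List.prod_cons]
    rcases Fin.eq_zero_or_eq_succ m with rfl | ⟨m', rfl⟩
    · have hall : ∀ k, α k = 0 := fun k => hα k (Fin.zero_le _)
      rw [if_pos rfl]
      have htail1 : (List.ofFn fun k : Fin n => x k.succ (α k.succ)).prod = 1 :=
        prod_ofFn_one (fun k => x k.succ) (fun k => hx0 k.succ) _
          (fun k => hall k.succ)
      have htail2 : (List.ofFn fun k : Fin n =>
          x k.succ (if k.succ = 0 then j else α k.succ)).prod = 1 := by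
        refine prod_ofFn_one (fun k => x k.succ) (fun k => hx0 k.succ) _ ?_
        intro k
        rw [if_neg (Fin.succ_ne_zero k)]
        exact hall k.succ
      rw [htail1, htail2, hall 0, hx0 0, one_mul, one_mul, mul_one]
    · rw [if_neg (Ne.symm (Fin.succ_ne_zero m')), mul_assoc]
      have hih := ih (fun k => x k.succ) (fun k => hx0 k.succ) m' j (fun k => α k.succ)
        (fun k hk => hα k.succ (by rwa [Fin.succ_le_succ_iff]))
      rw [hih]
      simp only [Fin.succ_inj]

private lemma main_left
    (δ : Fin n → Module.End K A)
    (hleib : ∀ i, ∀ a b : A, δ i (a * b) = δ i a * b + a * δ i b)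
    (hcomm : ∀ i j, Commute (δ i) (δ j))
    (hln : ∀ i, ∀ a : A, ∃ m : ℕ, ((δ i) ^ m) a = 0)
    (l : Fin n → ℕ∞) (hl1 : ∀ i, 1 ≤ l i) (x : Fin n → ℕ → A)
    (hx0 : ∀ i, x i 0 = 1)
    (hxd : ∀ i (j : ℕ), ((j + 1 : ℕ) : ℕ∞) < l i → δ i (x i (j + 1)) = x i j)
    (hmax : ∀ i, (l i = ⊤ ∧ ∀ m : ℕ, (δ i) ^ m ≠ 0) ∨
      (∃ m : ℕ, l i = (m : ℕ∞) ∧ (δ i) ^ m = 0))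
    (hmem : ∀ i k, k ≠ i → ∀ j : ℕ, (j : ℕ∞) < l i → δ k (x i j) = 0) :
    ∀ (t : ℕ) (a : A), (∀ k : Fin n, (k : ℕ) < n - t → δ k a = 0) →
      a ∈ ⨆ (α : {α : Fin n → ℕ // ∀ i, ((α i : ℕ∞) < l i)})
          (_ : ∀ k : Fin n, (k : ℕ) < n - t → α.1 k = 0),
        (⨅ i, ker (δ i)).map (mulLeft K ((List.ofFn fun i => x i (α.1 i)).prod)) := by
  intro t
  induction t with
  | zero =>
    intro a ha
    set α₀ : {α : Fin n → ℕ // ∀ i, ((α i : ℕ∞) < l i)} :=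
      ⟨fun _ => 0, fun i => enat_lt_of_lt_of_le zero_lt_one (hl1 i)⟩ with hα₀
    have hmem0 : a ∈ (⨅ i, ker (δ i)).map
        (mulLeft K ((List.ofFn fun i => x i (α₀.1 i)).prod)) := by
      refine Submodule.mem_map.mpr ⟨a, ?_, ?_⟩
      · rw [Submodule.mem_iInf]
        intro i
        rw [mem_ker]
        exact ha i (by omega)
      · rw [mulLeft_apply, hα₀, prod_ofFn_one x hx0 _ (fun _ => rfl), one_mul]
    exact Submodule.mem_iSup_of_mem α₀ (Submodule.mem_iSup_of_mem (fun _ _ => rfl) hmem0)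
  | succ t ih =>
    intro a ha
    by_cases hnt : n - t = n - (t + 1)
    · rw [← hnt]
      refine ih a ?_
      intro k hk
      exact ha k (by omega)
    · have hm : n - (t + 1) < n := by omega
      set m : Fin n := ⟨n - (t + 1), hm⟩ with hmdef
      obtain ⟨N, hNle, hNz⟩ : ∃ N : ℕ, ((N : ℕ∞) ≤ l m) ∧ ((δ m) ^ N) a = 0 := by
        rcases hmax m with ⟨hTop, _⟩ | ⟨M, hM, hMz⟩
        · obtain ⟨N, hN⟩ := hln m a
          exact ⟨N, by rw [hTop]; exact le_top, hN⟩
        · exact ⟨M, le_of_eq hM.symm, by rw [hMz]; exact LinearMap.zero_apply a⟩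
      obtain ⟨c, hc1, hc2, hdec⟩ := dec1_left δ hleib hcomm l x hx0 hxd hmem m N hNle a hNz
      rw [hdec]
      refine Submodule.sum_mem _ ?_
      intro j hj
      have hjN : j < N := Finset.mem_range.mp hj
      have hcj : ∀ k : Fin n, (k : ℕ) < n - t → δ k (c j) = 0 := by
        intro k hk
        by_cases hkm : k = m
        · subst hkm; exact hc1 j
        · refine hc2 k hkm (ha k ?_) j
          have hkm' : (k : ℕ) ≠ n - (t + 1) := fun h => hkm (Fin.ext h)
          omega
      have hmemc := ih (c j) hcj
      have hle : Submodule.map (mulLeft K (x m j))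
          (⨆ (α : {α : Fin n → ℕ // ∀ i, ((α i : ℕ∞) < l i)})
            (_ : ∀ k : Fin n, (k : ℕ) < n - t → α.1 k = 0),
            (⨅ i, ker (δ i)).map (mulLeft K ((List.ofFn fun i => x i (α.1 i)).prod)))
          ≤ ⨆ (α : {α : Fin n → ℕ // ∀ i, ((α i : ℕ∞) < l i)})
            (_ : ∀ k : Fin n, (k : ℕ) < n - (t + 1) → α.1 k = 0),
            (⨅ i, ker (δ i)).map (mulLeft K ((List.ofFn fun i => x i (α.1 i)).prod)) := by
        rw [Submodule.map_iSup]
        refine iSup_le ?_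
        intro α
        rw [Submodule.map_iSup]
        refine iSup_le ?_
        intro hsupp
        rw [← Submodule.map_comp, ← mulLeft_mul]
        have hcond' : ∀ k, k ≤ m → α.1 k = 0 := by
          intro k hk
          refine hsupp k ?_
          have : (k : ℕ) ≤ n - (t + 1) := hk
          omega
        rw [mulP_left n x hx0 m j α.1 hcond']
        have hα' : ∀ i : Fin n, (((if i = m then j else α.1 i) : ℕ) : ℕ∞) < l i := by
          intro i
          by_cases h : i = m
          · subst h
            rw [if_pos rfl]
            exact enat_lt_of_lt_of_le hjN hNle
          · rw [if_neg h]; exact α.2 i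
        set α' : {α : Fin n → ℕ // ∀ i, ((α i : ℕ∞) < l i)} :=
          ⟨fun i => if i = m then j else α.1 i, hα'⟩ with hα'def
        have hsupp' : ∀ k : Fin n, (k : ℕ) < n - (t + 1) → α'.1 k = 0 := by
          intro k hk
          have hkm : k ≠ m := by
            intro h
            rw [h] at hk
            simp only [hmdef] at hk
            omega
          simp only [hα'def, if_neg hkm]
          exact hsupp k (by omega)
        exact le_iSup₂ (f := fun (α : {α : Fin n → ℕ // ∀ i, ((α i : ℕ∞) < l i)})
          (_ : ∀ k : Fin n, (k : ℕ) < n - (t + 1) → α.1 k = 0) =>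
          (⨅ i, ker (δ i)).map (mulLeft K ((List.ofFn fun i => x i (α.1 i)).prod)))
          α' hsupp'
      have hin : mulLeft K (x m j) (c j) ∈ Submodule.map (mulLeft K (x m j))
          (⨆ (α : {α : Fin n → ℕ // ∀ i, ((α i : ℕ∞) < l i)})
            (_ : ∀ k : Fin n, (k : ℕ) < n - t → α.1 k = 0),
            (⨅ i, ker (δ i)).map (mulLeft K ((List.ofFn fun i => x i (α.1 i)).prod))) :=
        Submodule.mem_map_of_mem hmemc
      have := hle hin
      simpa using this

private lemma main_right
    (δ : Fin n → Module.End K A)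
    (hleib : ∀ i, ∀ a b : A, δ i (a * b) = δ i a * b + a * δ i b)
    (hcomm : ∀ i j, Commute (δ i) (δ j))
    (hln : ∀ i, ∀ a : A, ∃ m : ℕ, ((δ i) ^ m) a = 0)
    (l : Fin n → ℕ∞) (hl1 : ∀ i, 1 ≤ l i) (x : Fin n → ℕ → A)
    (hx0 : ∀ i, x i 0 = 1)
    (hxd : ∀ i (j : ℕ), ((j + 1 : ℕ) : ℕ∞) < l i → δ i (x i (j + 1)) = x i j)
    (hmax : ∀ i, (l i = ⊤ ∧ ∀ m : ℕ, (δ i) ^ m ≠ 0) ∨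
      (∃ m : ℕ, l i = (m : ℕ∞) ∧ (δ i) ^ m = 0))
    (hmem : ∀ i k, k ≠ i → ∀ j : ℕ, (j : ℕ∞) < l i → δ k (x i j) = 0) :
    ∀ (m : ℕ) (a : A), (∀ k : Fin n, m ≤ (k : ℕ) → δ k a = 0) →
      a ∈ ⨆ (α : {α : Fin n → ℕ // ∀ i, ((α i : ℕ∞) < l i)})
          (_ : ∀ k : Fin n, m ≤ (k : ℕ) → α.1 k = 0),
        (⨅ i, ker (δ i)).map (mulRight K ((List.ofFn fun i => x i (α.1 i)).prod)) := by
  intro m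
  induction m with
  | zero =>
    intro a ha
    set α₀ : {α : Fin n → ℕ // ∀ i, ((α i : ℕ∞) < l i)} :=
      ⟨fun _ => 0, fun i => enat_lt_of_lt_of_le zero_lt_one (hl1 i)⟩ with hα₀
    have hmem0 : a ∈ (⨅ i, ker (δ i)).map
        (mulRight K ((List.ofFn fun i => x i (α₀.1 i)).prod)) := by
      refine Submodule.mem_map.mpr ⟨a, ?_, ?_⟩
      · rw [Submodule.mem_iInf]
        intro i
        rw [mem_ker]
        exact ha i (by omega)
      · rw [mulRight_apply, hα₀, prod_ofFn_one x hx0 _ (fun _ => rfl), mul_one]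
    exact Submodule.mem_iSup_of_mem α₀ (Submodule.mem_iSup_of_mem (fun _ _ => rfl) hmem0)
  | succ m ih =>
    intro a ha
    by_cases hmn : m < n
    swap
    · have hmono : (⨆ (α : {α : Fin n → ℕ // ∀ i, ((α i : ℕ∞) < l i)})
          (_ : ∀ k : Fin n, m ≤ (k : ℕ) → α.1 k = 0),
          (⨅ i, ker (δ i)).map (mulRight K ((List.ofFn fun i => x i (α.1 i)).prod)))
          ≤ ⨆ (α : {α : Fin n → ℕ // ∀ i, ((α i : ℕ∞) < l i)})
          (_ : ∀ k : Fin n, m + 1 ≤ (k : ℕ) → α.1 k = 0),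
          (⨅ i, ker (δ i)).map (mulRight K ((List.ofFn fun i => x i (α.1 i)).prod)) := by
        refine iSup_mono ?_
        intro α
        refine iSup_le ?_
        intro h
        exact le_iSup_of_le (fun k hk => h k (by omega)) le_rfl
      refine hmono (ih a ?_)
      intro k hk
      have := k.isLt
      omega
    · set mf : Fin n := ⟨m, hmn⟩ with hmfdef
      obtain ⟨N, hNle, hNz⟩ : ∃ N : ℕ, ((N : ℕ∞) ≤ l mf) ∧ ((δ mf) ^ N) a = 0 := by
        rcases hmax mf with ⟨hTop, _⟩ | ⟨M, hM, hMz⟩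
        · obtain ⟨N, hN⟩ := hln mf a
          exact ⟨N, by rw [hTop]; exact le_top, hN⟩
        · exact ⟨M, le_of_eq hM.symm, by rw [hMz]; exact LinearMap.zero_apply a⟩
      obtain ⟨c, hc1, hc2, hdec⟩ := dec1_right δ hleib hcomm l x hx0 hxd hmem mf N hNle a hNz
      rw [hdec]
      refine Submodule.sum_mem _ ?_
      intro j hj
      have hjN : j < N := Finset.mem_range.mp hj
      have hcj : ∀ k : Fin n, m ≤ (k : ℕ) → δ k (c j) = 0 := by
        intro k hk
        by_cases hkm : k = mf
        · subst hkm; exact hc1 j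
        · refine hc2 k hkm (ha k ?_) j
          have hkm' : (k : ℕ) ≠ m := fun h => hkm (Fin.ext h)
          omega
      have hmemc := ih (c j) hcj
      have hle : Submodule.map (mulRight K (x mf j))
          (⨆ (α : {α : Fin n → ℕ // ∀ i, ((α i : ℕ∞) < l i)})
            (_ : ∀ k : Fin n, m ≤ (k : ℕ) → α.1 k = 0),
            (⨅ i, ker (δ i)).map (mulRight K ((List.ofFn fun i => x i (α.1 i)).prod)))
          ≤ ⨆ (α : {α : Fin n → ℕ // ∀ i, ((α i : ℕ∞) < l i)})
            (_ : ∀ k : Fin n, m + 1 ≤ (k : ℕ) → α.1 k = 0),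
            (⨅ i, ker (δ i)).map (mulRight K ((List.ofFn fun i => x i (α.1 i)).prod)) := by
        rw [Submodule.map_iSup]
        refine iSup_le ?_
        intro α
        rw [Submodule.map_iSup]
        refine iSup_le ?_
        intro hsupp
        rw [← Submodule.map_comp, ← mulRight_mul]
        have hcond' : ∀ k, mf ≤ k → α.1 k = 0 := by
          intro k hk
          refine hsupp k ?_
          exact hk
        rw [mulP_right n x hx0 mf j α.1 hcond']
        have hα' : ∀ i : Fin n, (((if i = mf then j else α.1 i) : ℕ) : ℕ∞) < l i := by
          intro i
          by_cases h : i = mf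
          · subst h
            rw [if_pos rfl]
            exact enat_lt_of_lt_of_le hjN hNle
          · rw [if_neg h]; exact α.2 i
        set α' : {α : Fin n → ℕ // ∀ i, ((α i : ℕ∞) < l i)} :=
          ⟨fun i => if i = mf then j else α.1 i, hα'⟩ with hα'def
        have hsupp' : ∀ k : Fin n, m + 1 ≤ (k : ℕ) → α'.1 k = 0 := by
          intro k hk
          have hkm : k ≠ mf := by
            intro h
            rw [h] at hk
            simp only [hmfdef] at hk
            omega
          simp only [hα'def, if_neg hkm]
          exact hsupp k (by omega)
        exact le_iSup₂ (f := fun (α : {α : Fin n → ℕ // ∀ i, ((α i : ℕ∞) < l i)})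
          (_ : ∀ k : Fin n, m + 1 ≤ (k : ℕ) → α.1 k = 0) =>
          (⨅ i, ker (δ i)).map (mulRight K ((List.ofFn fun i => x i (α.1 i)).prod)))
          α' hsupp'
      have hin : mulRight K (x mf j) (c j) ∈ Submodule.map (mulRight K (x mf j))
          (⨆ (α : {α : Fin n → ℕ // ∀ i, ((α i : ℕ∞) < l i)})
            (_ : ∀ k : Fin n, m ≤ (k : ℕ) → α.1 k = 0),
            (⨅ i, ker (δ i)).map (mulRight K ((List.ofFn fun i => x i (α.1 i)).prod))) :=
        Submodule.mem_map_of_mem hmemc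
      have := hle hin
      simpa using this

end Aux

set_option maxHeartbeats 2000000 in
/-- Let `δ 0, …, δ (n-1)` be pairwise commuting locally nilpotent
`K`-derivations of `A`, and for each `i` let `(x i j)_{0 ≤ j < l i}` be an iterative
`δ i`-descent of maximal length `l i ∈ ℕ∞` whose members all lie in `∩_{k ≠ i} A^{δ k}`.
With `A^δ := ∩ᵢ ker (δ i)`, `E := {α : Fin n → ℕ | ∀ i, α i < l i}` and
`x^[α] := x 0 (α 0) ⋯ x (n-1) (α (n-1))` (ordered product), one has
`A = ⊕_{α ∈ E} x^[α]·A^δ = ⊕_{α ∈ E} A^δ·x^[α]` as internal direct sums of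
`K`-subspaces. -/
theorem stmt_8 {K A : Type*} [Field K] [Ring A] [Algebra K A]
    (n : ℕ) (δ : Fin n → Module.End K A)
    (hleib : ∀ i, ∀ a b : A, δ i (a * b) = δ i a * b + a * δ i b)
    (hcomm : ∀ i j, Commute (δ i) (δ j))
    (hln : ∀ i, ∀ a : A, ∃ m : ℕ, ((δ i) ^ m) a = 0)
    (l : Fin n → ℕ∞) (hl1 : ∀ i, 1 ≤ l i)
    (x : Fin n → ℕ → A)
    (hx0 : ∀ i, x i 0 = 1)
    (hxd : ∀ i (j : ℕ), ((j + 1 : ℕ) : ℕ∞) < l i → δ i (x i (j + 1)) = x i j)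
    (hiter : ∀ i (j k : ℕ), ((j + k : ℕ) : ℕ∞) < l i →
      x i j * x i k = ((j + k).choose j) • x i (j + k))
    (hmax : ∀ i, (l i = ⊤ ∧ ∀ m : ℕ, (δ i) ^ m ≠ 0) ∨
      (∃ m : ℕ, l i = (m : ℕ∞) ∧ (δ i) ^ m = 0))
    (hmem : ∀ i k, k ≠ i → ∀ j : ℕ, (j : ℕ∞) < l i → δ k (x i j) = 0) :
    iSupIndep (fun α : {α : Fin n → ℕ // ∀ i, ((α i : ℕ∞) < l i)} =>
      (⨅ i, ker (δ i)).map
        (mulLeft K ((List.ofFn fun i => x i (α.1 i)).prod))) ∧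
    (⨆ α : {α : Fin n → ℕ // ∀ i, ((α i : ℕ∞) < l i)},
      (⨅ i, ker (δ i)).map
        (mulLeft K ((List.ofFn fun i => x i (α.1 i)).prod))) = ⊤ ∧
    iSupIndep (fun α : {α : Fin n → ℕ // ∀ i, ((α i : ℕ∞) < l i)} =>
      (⨅ i, ker (δ i)).map
        (mulRight K ((List.ofFn fun i => x i (α.1 i)).prod))) ∧
    (⨆ α : {α : Fin n → ℕ // ∀ i, ((α i : ℕ∞) < l i)},
      (⨅ i, ker (δ i)).map
        (mulRight K ((List.ofFn fun i => x i (α.1 i)).prod))) = ⊤ := by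
  classical
  refine ⟨?_, ?_, ?_, ?_⟩
  · rw [iSupIndep_iff_dfinsupp_lsum_injective]
    refine (injective_iff_map_eq_zero _).mpr ?_
    intro u hu
    have hsum : ∑ α ∈ u.support, ((u α : A)) = 0 := by
      rw [DFinsupp.lsum_apply_apply, DFinsupp.sumAddHom_apply] at hu
      simpa [DFinsupp.sum] using hu
    have hch : ∀ α : {α : Fin n → ℕ // ∀ i, ((α i : ℕ∞) < l i)},
        ∃ cc : A, (∀ k, δ k cc = 0) ∧
          (List.ofFn fun k => x k (α.1 k)).prod * cc = (u α : A) := by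
      intro α
      obtain ⟨y, hy, hxy⟩ := Submodule.mem_map.mp (u α).2
      exact ⟨y, fun k => mem_ker.mp ((Submodule.mem_iInf _).mp hy k),
        by simpa using hxy⟩
    choose c hc1 hc2 using hch
    have h0 : ∑ α ∈ u.support, (List.ofFn fun k => x k (α.1 k)).prod * c α = 0 := by
      rw [Finset.sum_congr rfl (fun α _ => hc2 α)]
      exact hsum
    have hz := unique_left δ hleib l x hx0 hxd hmem u.support c
      (fun β _ k => hc1 β k) h0
    refine DFinsupp.ext ?_
    intro α
    by_cases hα : α ∈ u.support
    · have h1 : (u α : A) = 0 := by rw [← hc2 α, hz α hα, mul_zero]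
      exact Subtype.ext (by simpa using h1)
    · exact DFinsupp.notMem_support_iff.mp hα
  · rw [eq_top_iff]
    intro a _
    have hmem' := main_left δ hleib hcomm hln l hl1 x hx0 hxd hmax hmem n a
      (fun k hk => absurd hk (by omega))
    have hle : (⨆ (α : {α : Fin n → ℕ // ∀ i, ((α i : ℕ∞) < l i)})
        (_ : ∀ k : Fin n, (k : ℕ) < n - n → α.1 k = 0),
        (⨅ i, ker (δ i)).map (mulLeft K ((List.ofFn fun i => x i (α.1 i)).prod)))
        ≤ ⨆ α : {α : Fin n → ℕ // ∀ i, ((α i : ℕ∞) < l i)},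
        (⨅ i, ker (δ i)).map (mulLeft K ((List.ofFn fun i => x i (α.1 i)).prod)) :=
      iSup_mono fun α => iSup_le fun _ => le_rfl
    exact hle hmem'
  · rw [iSupIndep_iff_dfinsupp_lsum_injective]
    refine (injective_iff_map_eq_zero _).mpr ?_
    intro u hu
    have hsum : ∑ α ∈ u.support, ((u α : A)) = 0 := by
      rw [DFinsupp.lsum_apply_apply, DFinsupp.sumAddHom_apply] at hu
      simpa [DFinsupp.sum] using hu
    have hch : ∀ α : {α : Fin n → ℕ // ∀ i, ((α i : ℕ∞) < l i)},
        ∃ cc : A, (∀ k, δ k cc = 0) ∧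
          cc * (List.ofFn fun k => x k (α.1 k)).prod = (u α : A) := by
      intro α
      obtain ⟨y, hy, hxy⟩ := Submodule.mem_map.mp (u α).2
      exact ⟨y, fun k => mem_ker.mp ((Submodule.mem_iInf _).mp hy k),
        by simpa using hxy⟩
    choose c hc1 hc2 using hch
    have h0 : ∑ α ∈ u.support, c α * (List.ofFn fun k => x k (α.1 k)).prod = 0 := by
      rw [Finset.sum_congr rfl (fun α _ => hc2 α)]
      exact hsum
    have hz := unique_right δ hleib l x hx0 hxd hmem u.support c
      (fun β _ k => hc1 β k) h0
    refine DFinsupp.ext ?_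
    intro α
    by_cases hα : α ∈ u.support
    · have h1 : (u α : A) = 0 := by rw [← hc2 α, hz α hα, zero_mul]
      exact Subtype.ext (by simpa using h1)
    · exact DFinsupp.notMem_support_iff.mp hα
  · rw [eq_top_iff]
    intro a _
    have hmem' := main_right δ hleib hcomm hln l hl1 x hx0 hxd hmax hmem n a
      (fun k hk => absurd hk (by have := k.isLt; omega))
    have hle : (⨆ (α : {α : Fin n → ℕ // ∀ i, ((α i : ℕ∞) < l i)})
        (_ : ∀ k : Fin n, n ≤ (k : ℕ) → α.1 k = 0),
        (⨅ i, ker (δ i)).map (mulRight K ((List.ofFn fun i => x i (α.1 i)).prod)))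
        ≤ ⨆ α : {α : Fin n → ℕ // ∀ i, ((α i : ℕ∞) < l i)},
        (⨅ i, ker (δ i)).map (mulRight K ((List.ofFn fun i => x i (α.1 i)).prod)) :=
      iSup_mono fun α => iSup_le fun _ => le_rfl
    exact hle hmem'
end
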